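/- arXiv:1901.11294 — 5 statements merged into one kernel-verified Lean document; each statement's English description precedes it below -/
import Mathlib

section
/- For every integer n ≥ 1 there exist constants c₂ ≥ c₁ > 0 and B₀ ≥ 2 such that for every real B ≥ B₀, the number of n-tuples (x⁽¹⁾, …, x⁽ⁿ⁾) of primitive vectors in ℤ³ satisfying ∏_{j=1}^n ‖x⁽ʲ⁾‖∞³ ≤ B is at least c₁·B·(log B)^{n−1} and at most c₂·B·(log B)^{n−1}. -/
noncomputable section

def IsPrimitiveVec {k : ℕ} (x : Fin k → ℤ) : Prop := Finset.gcd Finset.univ x = 1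

def supNorm {k : ℕ} (x : Fin k → ℤ) : ℕ := Finset.univ.sup fun i => (x i).natAbs

open Finset

instance {k : ℕ} : DecidablePred (@IsPrimitiveVec k) :=
  fun x => decidable_of_iff (Finset.gcd Finset.univ x = 1) Iff.rfl

lemma supNorm_le_iff {x : Fin 3 → ℤ} {m : ℕ} : supNorm x ≤ m ↔ ∀ i, (x i).natAbs ≤ m := by
  simp [supNorm, Finset.sup_le_iff]

/-- box of vectors with supNorm ≤ m -/
def Vbox (m : ℕ) : Finset (Fin 3 → ℤ) := Fintype.piFinset fun _ => Finset.Icc (-(m : ℤ)) m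

lemma mem_Vbox {m : ℕ} {x : Fin 3 → ℤ} : x ∈ Vbox m ↔ supNorm x ≤ m := by
  simp only [Vbox, Fintype.mem_piFinset, Finset.mem_Icc, supNorm_le_iff]
  constructor
  · intro h i; have := h i; omega
  · intro h i; have := h i; omega

lemma card_Vbox (m : ℕ) : (Vbox m).card = (2 * m + 1) ^ 3 := by
  rw [Vbox, Fintype.card_piFinset]
  simp [Int.card_Icc]
  rw [show ((m:ℤ) + 1 + m).toNat = 2 * m + 1 by omega]

/-- primitive vectors in the box -/
def PV (m : ℕ) : Finset (Fin 3 → ℤ) := (Vbox m).filter IsPrimitiveVec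

lemma PV_mono {a b : ℕ} (h : a ≤ b) : PV a ⊆ PV b := by
  apply Finset.filter_subset_filter
  intro x hx
  rw [mem_Vbox] at *
  omega

lemma mem_PV {m : ℕ} {x : Fin 3 → ℤ} : x ∈ PV m ↔ supNorm x ≤ m ∧ IsPrimitiveVec x := by
  simp [PV, mem_Vbox]

lemma one_le_supNorm {x : Fin 3 → ℤ} (hx : IsPrimitiveVec x) : 1 ≤ supNorm x := by
  rcases Nat.eq_zero_or_pos (supNorm x) with h | h
  · exfalso
    have hz : ∀ i, x i = 0 := by
      intro i
      have := supNorm_le_iff.mp h.le i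
      omega
    have : Finset.gcd Finset.univ x = 0 := by
      apply Finset.gcd_eq_zero_iff.mpr
      intro i _; exact hz i
    rw [IsPrimitiveVec] at hx
    omega
  · exact h

/-- the main counting finset -/
def Tup (n M : ℕ) : Finset (Fin n → Fin 3 → ℤ) :=
  (Fintype.piFinset fun _ => PV M).filter fun x => ∏ j, (supNorm (x j)) ^ 3 ≤ M

lemma mem_Tup {n M : ℕ} {x : Fin n → Fin 3 → ℤ} :
    x ∈ Tup n M ↔ (∀ j, IsPrimitiveVec (x j)) ∧ ∏ j, (supNorm (x j)) ^ 3 ≤ M := by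
  simp only [Tup, Finset.mem_filter, Fintype.mem_piFinset, mem_PV]
  constructor
  · rintro ⟨h1, h2⟩; exact ⟨fun j => (h1 j).2, h2⟩
  · rintro ⟨h1, h2⟩
    refine ⟨fun j => ⟨?_, h1 j⟩, h2⟩
    have hone : ∀ i ∈ Finset.univ, 1 ≤ (supNorm (x i)) ^ 3 := by
      intro i _
      exact Nat.one_le_pow _ _ (one_le_supNorm (h1 i))
    have hj := Finset.single_le_prod' hone (Finset.mem_univ j)
    have h3 : supNorm (x j) ≤ supNorm (x j) ^ 3 := Nat.le_self_pow (by norm_num) _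
    omega


-- harmonic sum bound
lemma harmonic_le (M : ℕ) : ∑ m ∈ Icc 1 M, (1/(m:ℝ)) ≤ 1 + Real.log M := by
  induction M with
  | zero => simp
  | succ M ih =>
    rw [Finset.sum_Icc_succ_top (by omega : 1 ≤ M + 1)]
    rcases Nat.eq_zero_or_pos M with h | h
    · subst h; simp
    · have key : (1 : ℝ)/(M+1) ≤ Real.log (M+1) - Real.log M := by
        have h1 : (0:ℝ) < M := by positivity
        have h2 : Real.log ((M:ℝ)/(M+1)) ≤ (M:ℝ)/(M+1) - 1 :=
          Real.log_le_sub_one_of_pos (by positivity)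
        rw [Real.log_div (by positivity) (by positivity)] at h2
        have : (M:ℝ)/(M+1) - 1 = -(1/(M+1)) := by field_simp; ring
        rw [this] at h2
        linarith
      have hc : ((M+1:ℕ):ℝ) = (M:ℝ)+1 := by push_cast; ring
      rw [hc]
      linarith

-- log monotone on nat casts
lemma log_nat_mono {a b : ℕ} (h : a ≤ b) : Real.log a ≤ Real.log b := by
  rcases Nat.eq_zero_or_pos a with h0 | h0
  · subst h0
    simp only [Nat.cast_zero, Real.log_zero]
    rcases Nat.eq_zero_or_pos b with h1 | h1
    · simp [h1]
    · exact Real.log_natCast_nonneg b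
  · exact Real.log_le_log (by positivity) (by exact_mod_cast h)

lemma log_nat_nonneg (a : ℕ) : 0 ≤ Real.log a := Real.log_natCast_nonneg a


-- shell upper bound
lemma shell_card_le (M m : ℕ) (hm : 1 ≤ m) :
    ((PV M).filter (fun v => supNorm v = m)).card ≤ 27 * m ^ 2 := by
  have hsub : (PV M).filter (fun v => supNorm v = m) ⊆ Vbox m \ Vbox (m - 1) := by
    intro v hv
    simp only [Finset.mem_filter, mem_PV] at hv
    rw [Finset.mem_sdiff, mem_Vbox, mem_Vbox]
    omega
  calc ((PV M).filter (fun v => supNorm v = m)).card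
      ≤ (Vbox m \ Vbox (m-1)).card := Finset.card_le_card hsub
    _ = (2*m+1)^3 - (2*(m-1)+1)^3 := by
        rw [Finset.card_sdiff_of_subset (fun v hv => by rw [mem_Vbox] at *; omega), card_Vbox, card_Vbox]
    _ ≤ 27 * m ^ 2 := by
        obtain ⟨k, rfl⟩ := Nat.exists_eq_add_of_le hm
        have h1 : (2*(1+k)+1)^3 = 8*k^3+36*k^2+54*k+27 := by ring
        have h2 : (2*(1+k-1)+1)^3 = 8*k^3+12*k^2+6*k+1 := by
          rw [show 1+k-1 = k by omega]; ring
        rw [h1, h2]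
        apply Nat.sub_le_iff_le_add.mpr
        nlinarith [sq_nonneg k]

-- fibering recursion (upper)
lemma Tup_succ_card_le (n M : ℕ) :
    ((Tup (n+1) M).card : ℝ) ≤
      ∑ m ∈ Icc 1 M, (((PV M).filter (fun v => supNorm v = m)).card : ℝ) *
        ((Tup n (M / m^3)).card : ℝ) := by
  classical
  have hfib : (Tup (n+1) M).card =
      ∑ m ∈ Icc 1 M, ((Tup (n+1) M).filter (fun x => supNorm (x 0) = m)).card := by
    apply Finset.card_eq_sum_card_fiberwise
    intro x hx
    have hx' := mem_Tup.mp hx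
    have h1 : 1 ≤ supNorm (x 0) := one_le_supNorm (hx'.1 0)
    have hone : ∀ i ∈ Finset.univ, 1 ≤ (supNorm (x i)) ^ 3 := fun i _ =>
      Nat.one_le_pow _ _ (one_le_supNorm (hx'.1 i))
    have hj := Finset.single_le_prod' hone (Finset.mem_univ 0)
    have h3 : supNorm (x 0) ≤ supNorm (x 0) ^ 3 := Nat.le_self_pow (by norm_num) _
    have := hx'.2
    simp only [Finset.coe_Icc, Set.mem_Icc]
    omega
  rw [hfib]
  push_cast
  apply Finset.sum_le_sum
  intro m hm
  rw [Finset.mem_Icc] at hm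
  rw [← Nat.cast_mul, Nat.cast_le, ← Finset.card_product]
  apply Finset.card_le_card_of_injOn (fun x => (x 0, Fin.tail x))
  · intro x hx
    rw [Finset.mem_coe, Finset.mem_filter] at hx
    obtain ⟨hx1, hx2⟩ := hx
    have hx' := mem_Tup.mp hx1
    rw [Finset.mem_coe, Finset.mem_product]
    constructor
    · simp only [Finset.mem_filter]
      refine ⟨?_, hx2⟩
      have := (Finset.mem_filter.mp hx1).1
      rw [Fintype.mem_piFinset] at this
      exact this 0
    · rw [mem_Tup]
      refine ⟨fun j => hx'.1 j.succ, ?_⟩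
      show ∏ j : Fin n, supNorm (Fin.tail x j) ^ 3 ≤ M / m ^ 3
      have hprod : ∏ j : Fin (n+1), supNorm (x j) ^ 3 =
          supNorm (x 0) ^ 3 * ∏ j : Fin n, supNorm (Fin.tail x j) ^ 3 := by
        rw [Fin.prod_univ_succ]; rfl
      have hM : supNorm (x 0) ^ 3 * ∏ j : Fin n, supNorm (Fin.tail x j) ^ 3 ≤ M := by
        rw [← hprod]; exact hx'.2
      have hx2' : supNorm (x 0) = m := hx2
      rw [Nat.le_div_iff_mul_le (pow_pos hm.1 3), ← hx2', mul_comm]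
      exact hM
  · intro x hx y hy hxy
    simp only [Prod.mk.injEq] at hxy
    funext i
    rcases Fin.eq_zero_or_eq_succ i with rfl | ⟨j, rfl⟩
    · exact hxy.1
    · exact congrFun hxy.2 j

-- Tup n 0 is empty for n ≥ 1
lemma Tup_zero {n : ℕ} (hn : 1 ≤ n) : Tup n 0 = ∅ := by
  ext x
  simp only [Finset.notMem_empty, iff_false, mem_Tup, not_and]
  intro h1
  have hone : ∀ i ∈ Finset.univ, 1 ≤ (supNorm (x i)) ^ 3 := fun i _ =>
    Nat.one_le_pow _ _ (one_le_supNorm (h1 i))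
  have hj := Finset.single_le_prod' hone (Finset.mem_univ ⟨0, hn⟩)
  have h1' := hone ⟨0, hn⟩ (Finset.mem_univ _)
  omega


lemma Tup_card_upper : ∀ n : ℕ, 1 ≤ n → ∀ M : ℕ,
    ((Tup n M).card : ℝ) ≤ 28 ^ n * M * (1 + Real.log M) ^ (n - 1) := by
  intro n hn
  induction n, hn using Nat.le_induction with
  | base =>
    intro M
    rcases Nat.eq_zero_or_pos M with rfl | hM
    · rw [Tup_zero le_rfl]; simp
    · set t : ℕ := ⌊(M:ℝ) ^ ((1:ℝ)/3)⌋₊ with ht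
      have hMR : (0:ℝ) ≤ (M:ℝ) := by positivity
      have hcube : ((M:ℝ) ^ ((1:ℝ)/3)) ^ (3:ℕ) = (M:ℝ) := by
        rw [← Real.rpow_natCast ((M:ℝ) ^ ((1:ℝ)/3)) 3, ← Real.rpow_mul hMR]
        norm_num
      have hsub : ∀ x ∈ Tup 1 M, x 0 ∈ Vbox t := by
        intro x hx
        obtain ⟨h1, h2⟩ := mem_Tup.mp hx
        rw [Fin.prod_univ_one] at h2
        rw [mem_Vbox]
        apply Nat.le_floor
        have hs3 : ((supNorm (x 0) : ℝ)) ^ (3:ℕ) ≤ (M:ℝ) := by exact_mod_cast h2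
        by_contra hcon
        push_neg at hcon
        have : ((M:ℝ) ^ ((1:ℝ)/3)) ^ (3:ℕ) < ((supNorm (x 0) : ℝ)) ^ (3:ℕ) := by
          apply pow_lt_pow_left₀ hcon (by positivity) (by norm_num)
        rw [hcube] at this
        linarith
      have hinj : Set.InjOn (fun x : Fin 1 → Fin 3 → ℤ => x 0) (Tup 1 M) := by
        intro x _ y _ hxy
        funext i
        rw [Fin.eq_zero i]
        exact hxy
      have hcard : (Tup 1 M).card ≤ (Vbox t).card :=
        Finset.card_le_card_of_injOn _ hsub hinj
      have ht3 : t ^ 3 ≤ M := by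
        have h1 : (t:ℝ) ≤ (M:ℝ) ^ ((1:ℝ)/3) := Nat.floor_le (by positivity)
        have h2 : ((t:ℝ)) ^ (3:ℕ) ≤ ((M:ℝ) ^ ((1:ℝ)/3)) ^ (3:ℕ) :=
          pow_le_pow_left₀ (by positivity) h1 3
        rw [hcube] at h2
        exact_mod_cast h2
      clear_value t
      have hbox : (Vbox t).card ≤ 28 * M := by
        rw [card_Vbox]
        rcases Nat.eq_zero_or_pos t with h0 | htp
        · rw [h0]; norm_num; omega
        · have h27 : (2*t+1)^3 ≤ 27 * t^3 := by
            obtain ⟨k, rfl⟩ := Nat.exists_eq_add_of_le htp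
            have e1 : (2*(0+1+k)+1)^3 = 8*k^3+36*k^2+54*k+27 := by ring
            have e2 : 27*(0+1+k)^3 = 27*k^3+81*k^2+81*k+27 := by ring
            rw [e1, e2]
            nlinarith [Nat.zero_le (k^3), Nat.zero_le (k^2), Nat.zero_le k]
          omega
      have : (Tup 1 M).card ≤ 28 * M := le_trans hcard hbox
      calc ((Tup 1 M).card : ℝ) ≤ 28 * M := by exact_mod_cast this
        _ = 28 ^ 1 * M * (1 + Real.log M) ^ (1 - 1) := by norm_num
  | succ n hn ih =>
    intro M
    rcases Nat.eq_zero_or_pos M with rfl | hM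
    · rw [Tup_zero (by omega)]; simp
    have hL0 : (0:ℝ) ≤ 1 + Real.log M := by
      have := log_nat_nonneg M; linarith
    have hLpow : (0:ℝ) ≤ (1 + Real.log M) ^ (n-1) := pow_nonneg hL0 _
    calc ((Tup (n+1) M).card : ℝ)
        ≤ ∑ m ∈ Icc 1 M, (((PV M).filter (fun v => supNorm v = m)).card : ℝ) *
            ((Tup n (M / m^3)).card : ℝ) := Tup_succ_card_le n M
      _ ≤ ∑ m ∈ Icc 1 M,
            (27*(m:ℝ)^2) * (28^n * ((M:ℝ)/(m:ℝ)^3) * (1 + Real.log M)^(n-1)) := by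
          apply Finset.sum_le_sum
          intro m hm
          rw [Finset.mem_Icc] at hm
          have hm0 : (0:ℝ) < (m:ℝ) := by exact_mod_cast hm.1
          have h1 : (((PV M).filter (fun v => supNorm v = m)).card : ℝ) ≤ 27*(m:ℝ)^2 := by
            exact_mod_cast shell_card_le M m hm.1
          have h3 : ((M/m^3 : ℕ):ℝ) ≤ (M:ℝ)/(m:ℝ)^3 := by
            have := Nat.cast_div_le (α := ℝ) (m := M) (n := m^3)
            push_cast at this
            exact this
          have hL0' : (0:ℝ) ≤ 1 + Real.log (M/m^3 : ℕ) := by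
            have := log_nat_nonneg (M/m^3); linarith
          have h4 : (1 + Real.log ((M/m^3 : ℕ):ℝ)) ^ (n-1) ≤ (1 + Real.log M)^(n-1) := by
            apply pow_le_pow_left₀ hL0'
            have := log_nat_mono (Nat.div_le_self M (m^3))
            linarith
          have h2 : ((Tup n (M/m^3)).card : ℝ) ≤
              28^n * ((M:ℝ)/(m:ℝ)^3) * (1 + Real.log M)^(n-1) := by
            calc ((Tup n (M/m^3)).card : ℝ)
                ≤ 28^n * ((M/m^3 : ℕ):ℝ) * (1 + Real.log ((M/m^3 : ℕ):ℝ))^(n-1) := ih _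
              _ ≤ 28^n * ((M:ℝ)/(m:ℝ)^3) * (1 + Real.log M)^(n-1) := by
                  apply mul_le_mul _ h4 (pow_nonneg hL0' _) (by positivity)
                  apply mul_le_mul_of_nonneg_left h3 (by positivity)
          apply mul_le_mul h1 h2 (by positivity) (by positivity)
      _ = (27 * 28^n * (M:ℝ) * (1 + Real.log M)^(n-1)) * ∑ m ∈ Icc 1 M, 1/(m:ℝ) := by
          rw [Finset.mul_sum]
          apply Finset.sum_congr rfl
          intro m hm
          rw [Finset.mem_Icc] at hm
          have hm0 : (m:ℝ) ≠ 0 := by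
            have : (0:ℝ) < (m:ℝ) := by exact_mod_cast hm.1
            linarith
          field_simp
      _ ≤ (27 * 28^n * (M:ℝ) * (1 + Real.log M)^(n-1)) * (1 + Real.log M) := by
          apply mul_le_mul_of_nonneg_left (harmonic_le M)
          have h28 : (0:ℝ) ≤ 28^n := by positivity
          have hMge : (0:ℝ) ≤ (M:ℝ) := by positivity
          positivity
      _ = 27 * (28^n * (M:ℝ) * (1 + Real.log M)^n) := by
          have hpow : (1 + Real.log (M:ℝ))^(n-1) * (1 + Real.log (M:ℝ)) =
              (1 + Real.log (M:ℝ))^n := by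
            rw [← pow_succ]; congr 1; omega
          rw [← hpow]; ring
      _ ≤ 28 * (28^n * (M:ℝ) * (1 + Real.log M)^n) := by
          apply mul_le_mul_of_nonneg_right (by norm_num)
          positivity
      _ = 28 ^ (n+1) * M * (1 + Real.log M) ^ (n+1-1) := by
          rw [show n+1-1 = n from rfl]; ring



-- sum of 1/d^2 from d = 2
lemma inv_sq_sum_aux : ∀ t : ℕ, 2 ≤ t → ∑ d ∈ Icc 2 t, (1/(d:ℝ)^2) ≤ 3/4 - 1/(t:ℝ) := by
  intro t ht
  induction t, ht using Nat.le_induction with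
  | base => norm_num [Finset.Icc_self]
  | succ t ht ih =>
    rw [Finset.sum_Icc_succ_top (by omega : 2 ≤ t + 1)]
    have ht0 : (0:ℝ) < t := by exact_mod_cast (by omega : 0 < t)
    have key : (1:ℝ)/((t:ℝ)+1)^2 ≤ 1/t - 1/(t+1) := by
      rw [div_sub_div _ _ (by positivity) (by positivity)]
      rw [div_le_div_iff₀ (by positivity) (by positivity)]
      ring_nf
      nlinarith
    have hc : ((t+1:ℕ):ℝ) = (t:ℝ)+1 := by push_cast; ring
    rw [hc]
    linarith

lemma inv_sq_sum (t : ℕ) : ∑ d ∈ Icc 2 t, (1/(d:ℝ)^2) ≤ 3/4 := by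
  rcases le_or_gt 2 t with h | h
  · have h1 := inv_sq_sum_aux t h
    have ht0 : (0:ℝ) < t := by exact_mod_cast (by omega : 0 < t)
    have h2 : (0:ℝ) < 1/(t:ℝ) := by positivity
    linarith
  · have : Icc 2 t = ∅ := by
      apply Finset.Icc_eq_empty
      omega
    rw [this]
    norm_num

/-- coprime pairs in `[1,t]²` -/
def CP (t : ℕ) : Finset (ℕ × ℕ) :=
  ((Icc 1 t) ×ˢ (Icc 1 t)).filter fun p => Nat.gcd p.1 p.2 = 1

lemma CP_card_lower (t : ℕ) : (t:ℝ)^2/4 ≤ ((CP t).card : ℝ) := by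
  classical
  set NC := ((Icc 1 t) ×ˢ (Icc 1 t)).filter (fun p => ¬ Nat.gcd p.1 p.2 = 1) with hNC
  have htot : (CP t).card + NC.card = t * t := by
    rw [CP, hNC, Finset.card_filter_add_card_filter_not,
      Finset.card_product, Nat.card_Icc]
    simp
  have hsub : NC ⊆ (Icc 2 t).biUnion
      (fun d => ((Icc 1 t).filter (d ∣ ·)) ×ˢ ((Icc 1 t).filter (d ∣ ·))) := by
    intro p hp
    rw [hNC, Finset.mem_filter, Finset.mem_product, Finset.mem_Icc, Finset.mem_Icc] at hp
    obtain ⟨⟨h1, h2⟩, h3⟩ := hp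
    rw [Finset.mem_biUnion]
    refine ⟨Nat.gcd p.1 p.2, ?_, ?_⟩
    · rw [Finset.mem_Icc]
      have hg1 : 1 ≤ Nat.gcd p.1 p.2 := Nat.one_le_iff_ne_zero.mpr (fun hc => by
        have := Nat.eq_zero_of_gcd_eq_zero_left hc; omega)
      have hg2 : Nat.gcd p.1 p.2 ≤ p.1 := Nat.gcd_le_left _ (by omega)
      omega
    · rw [Finset.mem_product, Finset.mem_filter, Finset.mem_filter, Finset.mem_Icc,
        Finset.mem_Icc]
      exact ⟨⟨⟨h1.1, h1.2⟩, Nat.gcd_dvd_left _ _⟩, ⟨⟨h2.1, h2.2⟩, Nat.gcd_dvd_right _ _⟩⟩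
  have hNCcard : (NC.card : ℝ) ≤ 3/4 * (t:ℝ)^2 := by
    have h1 : NC.card ≤ ∑ d ∈ Icc 2 t, (t/d) * (t/d) := by
      calc NC.card ≤ _ := Finset.card_le_card hsub
        _ ≤ ∑ d ∈ Icc 2 t, (((Icc 1 t).filter (d ∣ ·)) ×ˢ ((Icc 1 t).filter (d ∣ ·))).card :=
            Finset.card_biUnion_le
        _ = ∑ d ∈ Icc 2 t, (t/d) * (t/d) := by
            apply Finset.sum_congr rfl
            intro d _
            rw [Finset.card_product]
            have hIb : (Icc 1 t) = (Ioc 0 t) := by rw [← Finset.Icc_add_one_left_eq_Ioc, Nat.zero_add]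
            rw [hIb, Nat.Ioc_filter_dvd_card_eq_div]
    calc (NC.card : ℝ) ≤ ∑ d ∈ Icc 2 t, ((t/d : ℕ):ℝ) * ((t/d : ℕ):ℝ) := by
          exact_mod_cast h1
      _ ≤ ∑ d ∈ Icc 2 t, (t:ℝ)^2 * (1/(d:ℝ)^2) := by
          apply Finset.sum_le_sum
          intro d hd
          rw [Finset.mem_Icc] at hd
          have hd0 : (0:ℝ) < (d:ℝ) := by exact_mod_cast (by omega : 0 < d)
          have hdiv : ((t/d : ℕ):ℝ) ≤ (t:ℝ)/(d:ℝ) := Nat.cast_div_le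
          have h0 : (0:ℝ) ≤ ((t/d : ℕ):ℝ) := by positivity
          calc ((t/d : ℕ):ℝ) * ((t/d : ℕ):ℝ) ≤ ((t:ℝ)/d) * ((t:ℝ)/d) :=
                mul_le_mul hdiv hdiv h0 (by positivity)
            _ = (t:ℝ)^2 * (1/(d:ℝ)^2) := by field_simp
      _ = (t:ℝ)^2 * ∑ d ∈ Icc 2 t, (1/(d:ℝ)^2) := by rw [Finset.mul_sum]
      _ ≤ (t:ℝ)^2 * (3/4) := by
          apply mul_le_mul_of_nonneg_left (inv_sq_sum t) (by positivity)
      _ = 3/4 * (t:ℝ)^2 := by ring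
  have : ((CP t).card : ℝ) + (NC.card : ℝ) = (t:ℝ)^2 := by
    rw [← Nat.cast_add, htot]
    push_cast
    ring
  linarith

-- the standard injection (a,b,c) ↦ ![a,b,c]
lemma prim_of_coprime {a b c : ℕ} (h : Nat.gcd a b = 1) :
    IsPrimitiveVec ![(a:ℤ), (b:ℤ), (c:ℤ)] := by
  rw [IsPrimitiveVec]
  set g := Finset.gcd Finset.univ ![(a:ℤ), (b:ℤ), (c:ℤ)] with hg
  have hga : g ∣ (a:ℤ) := Finset.gcd_dvd (Finset.mem_univ 0)
  have hgb : g ∣ (b:ℤ) := Finset.gcd_dvd (Finset.mem_univ 1)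
  have hco : IsCoprime (a:ℤ) (b:ℤ) := by
    rw [Int.isCoprime_iff_gcd_eq_one, Int.gcd_natCast_natCast]
    exact h
  obtain ⟨u, v, huv⟩ := hco
  have hg1 : g ∣ 1 := by
    rw [← huv]
    exact Dvd.dvd.add (Dvd.dvd.mul_left hga u) (Dvd.dvd.mul_left hgb v)
  have hgnn : 0 ≤ g := by
    have h1 : |g| = normalize g := Int.abs_eq_normalize g
    have h2 : normalize g = g := Finset.normalize_gcd
    rw [h2] at h1
    rw [← h1]
    exact abs_nonneg g
  rcases Int.isUnit_iff.mp (isUnit_of_dvd_one hg1) with h1 | h1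
  · exact h1
  · omega

lemma supNorm_vec_le {a b c t : ℕ} (ha : a ≤ t) (hb : b ≤ t) (hc : c ≤ t) :
    supNorm ![(a:ℤ), (b:ℤ), (c:ℤ)] ≤ t := by
  rw [supNorm_le_iff]
  intro i
  fin_cases i <;> simp <;> omega

lemma lt_supNorm_vec {a b c s : ℕ} (hc : s < c) : s < supNorm ![(a:ℤ), (b:ℤ), (c:ℤ)] := by
  have h := Finset.le_sup (f := fun i => ((![(a:ℤ), (b:ℤ), (c:ℤ)]) i).natAbs)
    (Finset.mem_univ (2 : Fin 3))
  rw [supNorm]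
  simp only [Matrix.cons_val_two, Matrix.tail_cons, Matrix.head_cons, Int.natAbs_natCast] at h
  omega

lemma vec_inj : Function.Injective (fun p : (ℕ × ℕ) × ℕ =>
    ![(p.1.1:ℤ), (p.1.2:ℤ), (p.2:ℤ)]) := by
  intro p q hpq
  have h0 := congrFun hpq 0
  have h1 := congrFun hpq 1
  have h2 := congrFun hpq 2
  simp at h0 h1 h2
  ext <;> assumption

/-- primitive vector count lower bound: `(PV t).card ≥ t³/4` -/
lemma PV_card_lower (t : ℕ) : (t:ℝ)^3/4 ≤ ((PV t).card : ℝ) := by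
  have hmap : ∀ p ∈ (CP t) ×ˢ (Icc 1 t),
      ![(p.1.1:ℤ), (p.1.2:ℤ), (p.2:ℤ)] ∈ PV t := by
    intro p hp
    rw [Finset.mem_product] at hp
    obtain ⟨hp1, hp2⟩ := hp
    rw [CP, Finset.mem_filter, Finset.mem_product, Finset.mem_Icc, Finset.mem_Icc] at hp1
    rw [Finset.mem_Icc] at hp2
    rw [mem_PV]
    exact ⟨supNorm_vec_le hp1.1.1.2 hp1.1.2.2 hp2.2, prim_of_coprime hp1.2⟩
  have hcard : (CP t).card * t ≤ (PV t).card := by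
    have := Finset.card_le_card_of_injOn _ hmap vec_inj.injOn
    rwa [Finset.card_product, Nat.card_Icc, Nat.add_sub_cancel] at this
  calc (t:ℝ)^3/4 = ((t:ℝ)^2/4) * t := by ring
    _ ≤ ((CP t).card : ℝ) * t := by
        apply mul_le_mul_of_nonneg_right (CP_card_lower t) (by positivity)
    _ ≤ ((PV t).card : ℝ) := by exact_mod_cast hcard

/-- dyadic shell lower bound -/
lemma shell_lower (k : ℕ) (hk : 1 ≤ k) :
    (8:ℝ)^k/8 ≤ ((((PV (2^k)).filter fun v => 2^(k-1) < supNorm v)).card : ℝ) := by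
  have hmap : ∀ p ∈ (CP (2^k)) ×ˢ (Ioc (2^(k-1)) (2^k) : Finset ℕ),
      ![(p.1.1:ℤ), (p.1.2:ℤ), (p.2:ℤ)] ∈ (PV (2^k)).filter fun v => 2^(k-1) < supNorm v := by
    intro p hp
    rw [Finset.mem_product] at hp
    obtain ⟨hp1, hp2⟩ := hp
    rw [CP, Finset.mem_filter, Finset.mem_product, Finset.mem_Icc, Finset.mem_Icc] at hp1
    rw [Finset.mem_Ioc] at hp2
    rw [Finset.mem_filter, mem_PV]
    exact ⟨⟨supNorm_vec_le hp1.1.1.2 hp1.1.2.2 hp2.2, prim_of_coprime hp1.2⟩,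
      lt_supNorm_vec hp2.1⟩
  have hcard : (CP (2^k)).card * 2^(k-1) ≤
      ((PV (2^k)).filter fun v => 2^(k-1) < supNorm v).card := by
    have := Finset.card_le_card_of_injOn _ hmap vec_inj.injOn
    have h2 : ((Ioc (2^(k-1)) (2^k) : Finset ℕ)).card = 2^(k-1) := by
      rw [Nat.card_Ioc]
      have : 2^k = 2 * 2^(k-1) := by
        rw [← pow_succ']
        congr 1
        omega
      omega
    rwa [Finset.card_product, h2] at this
  have h4 : ((2^k : ℕ):ℝ)^2/4 ≤ ((CP (2^k)).card : ℝ) := CP_card_lower (2^k)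
  have h2R : ((2^(k-1) : ℕ):ℝ) = (2:ℝ)^k/2 := by
    have hkk : (2:ℝ)^k = 2^(k-1) * 2 := by
      rw [← pow_succ]
      congr 1
      omega
    push_cast
    rw [hkk]
    ring
  calc (8:ℝ)^k/8 = (((2:ℝ)^k)^2/4) * ((2:ℝ)^k/2) := by
        have h8 : (8:ℝ)^k = 2^k * 2^k * 2^k := by
          rw [show (8:ℝ) = 2*2*2 by norm_num, mul_pow, mul_pow]
        rw [h8]
        ring
      _ ≤ ((CP (2^k)).card : ℝ) * ((2^(k-1):ℕ):ℝ) := by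
          rw [h2R]
          apply mul_le_mul_of_nonneg_right _ (by positivity)
          calc ((2:ℝ)^k)^2/4 = ((2^k : ℕ):ℝ)^2/4 := by push_cast; ring
            _ ≤ _ := h4
      _ ≤ _ := by exact_mod_cast hcard


lemma Tup_lower_rec (n M K : ℕ) :
    ∑ k ∈ Icc 1 K, (((PV (2^k)).filter fun v => 2^(k-1) < supNorm v).card) *
      (Tup n (M / 8^k)).card ≤ (Tup (n+1) M).card := by
  classical
  set A : ℕ → Finset (Fin (n+1) → Fin 3 → ℤ) := fun k =>
    Finset.image (fun p : (Fin 3 → ℤ) × (Fin n → Fin 3 → ℤ) =>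
        (Fin.cons p.1 p.2 : Fin (n+1) → Fin 3 → ℤ))
      (((PV (2^k)).filter fun v => 2^(k-1) < supNorm v) ×ˢ Tup n (M / 8^k)) with hA
  have hconsinj : Function.Injective (fun p : (Fin 3 → ℤ) × (Fin n → Fin 3 → ℤ) =>
      (Fin.cons p.1 p.2 : Fin (n+1) → Fin 3 → ℤ)) := by
    intro p q h
    have h2 := Fin.cons_injective2 (α := fun _ : Fin (n+1) => Fin 3 → ℤ) h
    exact Prod.ext h2.1 h2.2
  have hAcard : ∀ k, (A k).card =
      (((PV (2^k)).filter fun v => 2^(k-1) < supNorm v).card) * (Tup n (M / 8^k)).card := by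
    intro k
    rw [hA, Finset.card_image_of_injective _ hconsinj, Finset.card_product]
  have hmemA : ∀ k x, x ∈ A k →
      (x ∈ Tup (n+1) M ∧ 2^(k-1) < supNorm (x 0) ∧ supNorm (x 0) ≤ 2^k) := by
    intro k x hx
    rw [hA, Finset.mem_image] at hx
    obtain ⟨p, hp, rfl⟩ := hx
    rw [Finset.mem_product, Finset.mem_filter, mem_PV] at hp
    obtain ⟨⟨⟨hp1, hp2⟩, hp3⟩, hp4⟩ := hp
    obtain ⟨hy1, hy2⟩ := mem_Tup.mp hp4
    have hx0 : (Fin.cons p.1 p.2 : Fin (n+1) → Fin 3 → ℤ) 0 = p.1 := rfl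
    refine ⟨?_, ?_, ?_⟩
    · rw [mem_Tup]
      constructor
      · intro j
        refine Fin.cases ?_ ?_ j
        · exact hp2
        · intro i; exact hy1 i
      · have hprod : ∏ j : Fin (n+1), supNorm ((Fin.cons p.1 p.2 : Fin (n+1) → _) j) ^ 3
            = supNorm p.1 ^ 3 * ∏ j : Fin n, supNorm (p.2 j) ^ 3 := by
          rw [Fin.prod_univ_succ]; rfl
        rw [hprod]
        calc supNorm p.1 ^ 3 * ∏ j : Fin n, supNorm (p.2 j) ^ 3
            ≤ 8^k * (M / 8^k) := by
              apply Nat.mul_le_mul _ hy2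
              calc supNorm p.1 ^ 3 ≤ (2^k)^3 := Nat.pow_le_pow_left hp1 3
                _ = 8^k := by
                    have h8 : (8:ℕ) = 2^3 := by norm_num
                    rw [h8, ← pow_mul, ← pow_mul, mul_comm]
          _ ≤ M := by rw [mul_comm]; exact Nat.div_mul_le_self M (8^k)
    · rw [hx0]; exact hp3
    · rw [hx0]; exact hp1
  have hdisj : ∀ k ∈ Icc 1 K, ∀ k' ∈ Icc 1 K, k ≠ k' → Disjoint (A k) (A k') := by
    have key : ∀ k k' : ℕ, k < k' → ∀ x, x ∈ A k → x ∈ A k' → False := by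
      intro k k' hkk x hxk hxk'
      obtain ⟨_, _, h2⟩ := hmemA k x hxk
      obtain ⟨_, h3, _⟩ := hmemA k' x hxk'
      have : (2:ℕ)^k ≤ 2^(k'-1) := Nat.pow_le_pow_right (by norm_num) (by omega)
      omega
    intro k _ k' _ hne
    rw [Finset.disjoint_left]
    intro x hxk hxk'
    rcases Nat.lt_or_ge k k' with h | h
    · exact key k k' h x hxk hxk'
    · exact key k' k (by omega) x hxk' hxk
  calc ∑ k ∈ Icc 1 K, (((PV (2^k)).filter fun v => 2^(k-1) < supNorm v).card) *
        (Tup n (M / 8^k)).card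
      = ∑ k ∈ Icc 1 K, (A k).card := by
        apply Finset.sum_congr rfl; intro k _; rw [hAcard k]
    _ = ((Icc 1 K).biUnion A).card := (Finset.card_biUnion hdisj).symm
    _ ≤ (Tup (n+1) M).card := by
        apply Finset.card_le_card
        intro x hx
        rw [Finset.mem_biUnion] at hx
        obtain ⟨k, _, hxk⟩ := hx
        exact (hmemA k x hxk).1


set_option maxHeartbeats 1000000 in
lemma Tup_card_lower : ∀ n : ℕ, 1 ≤ n → ∃ c : ℝ, 0 < c ∧ ∃ M₀ : ℕ, 2 ≤ M₀ ∧
    ∀ M : ℕ, M₀ ≤ M → c * M * (Real.log M)^(n-1) ≤ ((Tup n M).card : ℝ) := by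
  intro n hn
  induction n, hn using Nat.le_induction with
  | base =>
    refine ⟨1/32, by norm_num, 64, by norm_num, ?_⟩
    intro M hM
    set r : ℝ := (M:ℝ)^((1:ℝ)/3) with hr
    have hM0 : (0:ℝ) < M := by exact_mod_cast (by omega : 0 < M)
    have hr0 : 0 < r := by positivity
    have hrc : r ^ (3:ℕ) = (M:ℝ) := by
      rw [hr, ← Real.rpow_natCast ((M:ℝ) ^ ((1:ℝ)/3)) 3, ← Real.rpow_mul (le_of_lt hM0)]
      norm_num
    have hr4 : 4 ≤ r := by
      by_contra hcon
      push_neg at hcon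
      have h1 : r ^ (3:ℕ) < 4 ^ (3:ℕ) := by
        apply pow_lt_pow_left₀ hcon (le_of_lt hr0) (by norm_num)
      rw [hrc] at h1
      have : (64:ℝ) ≤ M := by exact_mod_cast hM
      norm_num at h1
      linarith
    set t : ℕ := ⌊r⌋₊ with htdef
    have htr : (t:ℝ) ≤ r := Nat.floor_le (le_of_lt hr0)
    have htr2 : r - 1 ≤ t := by
      have := Nat.sub_one_lt_floor r
      linarith [Nat.lt_floor_add_one r]
    have ht2 : r/2 ≤ (t:ℝ) := by linarith
    have ht3 : t^3 ≤ M := by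
      have h2 : ((t:ℝ)) ^ (3:ℕ) ≤ r ^ (3:ℕ) := pow_le_pow_left₀ (by positivity) htr 3
      rw [hrc] at h2
      exact_mod_cast h2
    -- inject PV t into Tup 1 M
    have hmap : ∀ v ∈ PV t, (fun _ : Fin 1 => v) ∈ Tup 1 M := by
      intro v hv
      rw [mem_PV] at hv
      rw [mem_Tup]
      refine ⟨fun _ => hv.2, ?_⟩
      rw [Fin.prod_univ_one]
      calc supNorm v ^ 3 ≤ t ^ 3 := Nat.pow_le_pow_left hv.1 3
        _ ≤ M := ht3
    have hinj : Set.InjOn (fun v : Fin 3 → ℤ => (fun _ : Fin 1 => v)) (PV t) := by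
      intro u _ v _ huv
      exact congrFun huv 0
    have hcard : (PV t).card ≤ (Tup 1 M).card :=
      Finset.card_le_card_of_injOn _ hmap hinj
    have hPV := PV_card_lower t
    have hfinal : (M:ℝ)/32 ≤ ((Tup 1 M).card : ℝ) := by
      have h1 : (r/2)^(3:ℕ) ≤ ((t:ℝ))^(3:ℕ) := pow_le_pow_left₀ (by positivity) ht2 3
      have h2 : (r/2)^(3:ℕ) = (M:ℝ)/8 := by
        rw [div_pow, hrc]
        norm_num
      calc (M:ℝ)/32 = ((M:ℝ)/8)/4 := by ring
        _ ≤ ((t:ℝ))^(3:ℕ)/4 := by rw [← h2]; linarith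
        _ ≤ ((PV t).card : ℝ) := hPV
        _ ≤ ((Tup 1 M).card : ℝ) := by exact_mod_cast hcard
    calc (1:ℝ)/32 * M * (Real.log M)^(1-1) = (M:ℝ)/32 := by rw [Nat.sub_self, pow_zero, mul_one]; ring
      _ ≤ _ := hfinal
  | succ n hn ih =>
    obtain ⟨c, hc, M₀, hM₀, hIH⟩ := ih
    have hlog64 : 0 < Real.log 64 := Real.log_pos (by norm_num)
    refine ⟨c / (32 * Real.log 64 * 4^(n-1)), by positivity, 64^(M₀+2), ?_, ?_⟩
    · calc 2 ≤ 64^1 := by norm_num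
        _ ≤ 64^(M₀+2) := Nat.pow_le_pow_right (by norm_num) (by omega)
    intro M hM
    set K : ℕ := Nat.log 64 M with hKdef
    have hMne : M ≠ 0 := by
      have : 1 ≤ 64^(M₀+2) := Nat.one_le_pow _ _ (by norm_num)
      omega
    have hK1 : 64^K ≤ M := Nat.pow_log_le_self 64 hMne
    have hK2 : M < 64^(K+1) := Nat.lt_pow_succ_log_self (by norm_num) M
    have hKM₀ : M₀ + 1 ≤ K := by
      have h1 : (64:ℕ)^(M₀+2) < 64^(K+1) := lt_of_le_of_lt hM hK2
      have h2 : M₀ + 2 < K + 1 := by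
        by_contra hcon
        push_neg at hcon
        exact absurd (Nat.pow_le_pow_right (by norm_num : 1 ≤ 64) hcon) (by omega)
      omega
    have hK1' : 1 ≤ K := by omega
    have hMbig : 64^4 ≤ M := by
      calc (64:ℕ)^4 ≤ 64^(M₀+2) := Nat.pow_le_pow_right (by norm_num) (by omega)
        _ ≤ M := hM
    have hM1 : 1 ≤ M := by omega
    have hM0R : (0:ℝ) < M := by exact_mod_cast (by omega : 0 < M)
    have hlogM0 : 0 ≤ Real.log M := Real.log_nonneg (by exact_mod_cast hM1)
    have h64K : (8:ℕ)^K * 8^K = 64^K := by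
      rw [← mul_pow]; norm_num
    -- √M bound for 8^K
    have h8Ksqrt : ((8:ℕ)^K : ℝ) ≤ Real.sqrt M := by
      rw [Real.le_sqrt (by positivity) (le_of_lt hM0R)]
      push_cast
      have : ((8:ℝ)^K)^2 = ((8:ℕ)^K * 8^K : ℕ) := by push_cast; ring
      rw [this, h64K]
      exact_mod_cast hK1
    -- facts per k
    have hterm : ∀ k ∈ Icc 1 K,
        (8:ℝ)^k/8 * (c * ((M:ℝ)/(2*8^k)) * ((1/4) * Real.log M)^(n-1)) ≤
        ((((PV (2^k)).filter fun v => 2^(k-1) < supNorm v).card : ℝ)) *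
          ((Tup n (M / 8^k)).card : ℝ) := by
      intro k hk
      rw [Finset.mem_Icc] at hk
      set q : ℕ := M / 8^k with hqdef
      have h8kpos : 0 < (8:ℕ)^k := Nat.pow_pos (n := k) (by norm_num)
      have hq8K : M / 8^K ≤ q := Nat.div_le_div_left (Nat.pow_le_pow_right (by norm_num) hk.2) h8kpos
      have hqM₀ : M₀ ≤ q := by
        have h1 : (8:ℕ)^K ≤ M / 8^K := by
          rw [Nat.le_div_iff_mul_le (Nat.pow_pos (n := K) (by norm_num))]
          rw [h64K]
          exact hK1
        have h2 : M₀ + 1 ≤ 8^K := by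
          calc M₀ + 1 ≤ K := hKM₀
            _ ≤ 8^K := le_of_lt (Nat.lt_pow_self (by norm_num))
        omega
      have hq2 : 2 ≤ q := by omega
      -- real lower bound for q
      have hqreal : (M:ℝ)/(2*8^k) ≤ (q:ℝ) := by
        have hdm := Nat.div_add_mod M (8^k)
        have hmod : M % 8^k < 8^k := Nat.mod_lt M h8kpos
        have h1 : (M:ℝ) < ((q:ℝ) + 1) * (8^k : ℕ) := by
          push_cast
          have : (M:ℝ) = ((8^k * q : ℕ) : ℝ) + ((M % 8^k : ℕ) : ℝ) := by
            exact_mod_cast (congrArg (Nat.cast (R := ℝ)) hdm).symm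
          rw [this]
          push_cast
          have : ((M % 8^k : ℕ) : ℝ) < ((8:ℝ))^k := by exact_mod_cast hmod
          nlinarith
        have h8R : (0:ℝ) < (8:ℝ)^k := by positivity
        have hq1 : (M:ℝ)/(8:ℝ)^k - 1 ≤ (q:ℝ) := by
          rw [div_sub' (ne_of_gt h8R), div_le_iff₀ h8R]
          push_cast at h1 ⊢
          nlinarith
        -- M/8^k ≥ 2 since q ≥ 2
        have hq2R : (2:ℝ) ≤ (M:ℝ)/(8:ℝ)^k := by
          have : (2 * 8^k : ℕ) ≤ M := by
            have := Nat.mul_le_mul_left (8^k) hq2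
            have h3 := Nat.div_mul_le_self M (8^k)
            calc 2 * 8^k = 8^k * 2 := by ring
              _ ≤ 8^k * q := Nat.mul_le_mul_left _ hq2
              _ = q * 8^k := by ring
              _ ≤ M := Nat.div_mul_le_self M (8^k)
          rw [le_div_iff₀ h8R]
          exact_mod_cast this
        have : (M:ℝ)/(2*8^k) = ((M:ℝ)/(8:ℝ)^k)/2 := by ring
        rw [this]
        linarith
      -- q ≥ √M / 2
      have hqsqrt : Real.sqrt M / 2 ≤ (q:ℝ) := by
        have h1 : (M:ℝ)/(2*8^K) ≤ (M:ℝ)/(2*8^k) := by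
          apply div_le_div_of_nonneg_left (le_of_lt hM0R) (by positivity)
          have : ((8:ℝ))^k ≤ (8:ℝ)^K := by
            apply pow_le_pow_right₀ (by norm_num) hk.2
          linarith
        have h2 : Real.sqrt M / 2 ≤ (M:ℝ)/(2*8^K) := by
          have hs0 : 0 < Real.sqrt M := Real.sqrt_pos.mpr hM0R
          rw [div_le_div_iff₀ (by norm_num) (by positivity)]
          have hMeq : (M:ℝ) = Real.sqrt M * Real.sqrt M := (Real.mul_self_sqrt (le_of_lt hM0R)).symm
          calc Real.sqrt M * (2*8^K) = (8:ℝ)^K * Real.sqrt M * 2 := by ring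
            _ ≤ Real.sqrt M * Real.sqrt M * 2 := by
                have : ((8:ℝ))^K ≤ Real.sqrt M := by exact_mod_cast h8Ksqrt
                nlinarith
            _ = (M:ℝ) * 2 := by rw [← hMeq]
        linarith
      -- log q ≥ (1/4) log M
      have hlogq : (1/4) * Real.log M ≤ Real.log q := by
        have hq0 : (0:ℝ) < q := by
          have : (0:ℕ) < q := by omega
          exact_mod_cast this
        have hs2 : (0:ℝ) < Real.sqrt M / 2 := by
          have := Real.sqrt_pos.mpr hM0R
          positivity
        have h1 : Real.log (Real.sqrt M / 2) ≤ Real.log q := Real.log_le_log hs2 hqsqrt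
        have h2 : Real.log (Real.sqrt M / 2) = (1/2) * Real.log M - Real.log 2 := by
          rw [Real.log_div (ne_of_gt (Real.sqrt_pos.mpr hM0R)) (by norm_num),
            Real.log_sqrt (le_of_lt hM0R)]
          ring
        have h3 : Real.log 2 ≤ (1/4) * Real.log M := by
          have h16 : (16:ℝ) ≤ M := by
            have : (16:ℕ) ≤ M := by
              calc (16:ℕ) ≤ 64^4 := by norm_num
                _ ≤ M := hMbig
            exact_mod_cast this
          have h4 : Real.log 16 ≤ Real.log M := Real.log_le_log (by norm_num) h16
          have h5 : Real.log 16 = 4 * Real.log 2 := by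
            rw [show (16:ℝ) = 2^(4:ℕ) by norm_num, Real.log_pow]
            norm_num
          linarith
        linarith
      -- assemble term bound
      have hshell := shell_lower k hk.1
      have hTup := hIH q hqM₀
      have hL4 : (0:ℝ) ≤ (1/4) * Real.log M := by positivity
      have hpow : ((1/4) * Real.log M)^(n-1) ≤ (Real.log q)^(n-1) :=
        pow_le_pow_left₀ hL4 hlogq (n-1)
      have hinner : c * ((M:ℝ)/(2*8^k)) * ((1/4) * Real.log M)^(n-1) ≤
          ((Tup n (M / 8^k)).card : ℝ) := by
        calc c * ((M:ℝ)/(2*8^k)) * ((1/4) * Real.log M)^(n-1)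
            ≤ c * (q:ℝ) * (Real.log q)^(n-1) := by
              apply mul_le_mul (mul_le_mul_of_nonneg_left hqreal (le_of_lt hc)) hpow
                (by positivity) (by positivity)
          _ ≤ ((Tup n (M / 8^k)).card : ℝ) := hTup
      apply mul_le_mul hshell hinner (by positivity) (by positivity)
    -- sum up
    have hsum : ((Tup (n+1) M).card : ℝ) ≥
        ∑ k ∈ Icc 1 K, ((((PV (2^k)).filter fun v => 2^(k-1) < supNorm v).card : ℝ)) *
          ((Tup n (M / 8^k)).card : ℝ) := by
      have := Tup_lower_rec n M K
      calc ∑ k ∈ Icc 1 K, ((((PV (2^k)).filter fun v => 2^(k-1) < supNorm v).card : ℝ)) *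
            ((Tup n (M / 8^k)).card : ℝ)
          = ((∑ k ∈ Icc 1 K, (((PV (2^k)).filter fun v => 2^(k-1) < supNorm v).card) *
            (Tup n (M / 8^k)).card : ℕ) : ℝ) := by push_cast; ring
        _ ≤ _ := by exact_mod_cast this
    have hKlog : Real.log M / (2 * Real.log 64) ≤ (K:ℝ) := by
      have h1 : Real.log M ≤ ((K:ℝ)+1) * Real.log 64 := by
        have h2 : (M:ℝ) < ((64:ℝ))^(K+1) := by exact_mod_cast hK2
        have h3 := Real.log_le_log hM0R (le_of_lt h2)
        rw [Real.log_pow] at h3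
        push_cast at h3
        exact h3
      have h2 : 2 * Real.log 64 ≤ Real.log M := by
        have h3 : (64:ℝ)^(2:ℕ) ≤ M := by
          have : (64:ℕ)^2 ≤ M := by
            calc (64:ℕ)^2 ≤ 64^4 := Nat.pow_le_pow_right (by norm_num) (by norm_num)
              _ ≤ M := hMbig
          exact_mod_cast this
        have h4 := Real.log_le_log (by norm_num : (0:ℝ) < 64^(2:ℕ)) h3
        rw [Real.log_pow] at h4
        push_cast at h4
        linarith
      have hKR : (1:ℝ) ≤ (K:ℝ) := by exact_mod_cast hK1'
      rw [div_le_iff₀ (by linarith : (0:ℝ) < 2 * Real.log 64)]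
      linarith [mul_nonneg (sub_nonneg.mpr hKR) (le_of_lt hlog64)]
    calc c / (32 * Real.log 64 * 4^(n-1)) * M * (Real.log M)^(n+1-1)
        = (Real.log M / (2 * Real.log 64)) * ((c/16) * M * ((1/4) * Real.log M)^(n-1)) := by
          have e1 : ((1:ℝ)/4 * Real.log M)^(n-1) = (Real.log M)^(n-1) / 4^(n-1) := by
            rw [mul_pow, div_pow, one_pow]
            ring
          rw [show n+1-1 = n by omega, e1,
            show (Real.log M : ℝ)^n = (Real.log M)^(n-1) * Real.log M by
              rw [← pow_succ]; congr 1; omega]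
          have h64ne : Real.log 64 ≠ 0 := ne_of_gt hlog64
          have h4ne : ((4:ℝ))^(n-1) ≠ 0 := by positivity
          field_simp
          ring
      _ ≤ (K:ℝ) * ((c/16) * M * ((1/4) * Real.log M)^(n-1)) := by
          apply mul_le_mul_of_nonneg_right hKlog
          positivity
      _ = ∑ k ∈ Icc 1 K, ((c/16) * M * ((1/4) * Real.log M)^(n-1)) := by
          rw [Finset.sum_const, Nat.card_Icc, Nat.add_sub_cancel, nsmul_eq_mul]
      _ = ∑ k ∈ Icc 1 K, (8:ℝ)^k/8 * (c * ((M:ℝ)/(2*8^k)) * ((1/4) * Real.log M)^(n-1)) := by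
          apply Finset.sum_congr rfl
          intro k _
          have h8 : ((8:ℝ))^k ≠ 0 := by positivity
          field_simp
          ring
      _ ≤ ∑ k ∈ Icc 1 K, ((((PV (2^k)).filter fun v => 2^(k-1) < supNorm v).card : ℝ)) *
            ((Tup n (M / 8^k)).card : ℝ) := Finset.sum_le_sum hterm
      _ ≤ ((Tup (n+1) M).card : ℝ) := hsum

/-- For every `n ≥ 1` there exist `c₂ ≥ c₁ > 0` and `B₀ ≥ 2` such that for every `B ≥ B₀`,
the number of `n`-tuples of primitive vectors in `ℤ³` with `∏_j ‖x⁽ʲ⁾‖∞³ ≤ B` is between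
`c₁ · B · (log B)^(n-1)` and `c₂ · B · (log B)^(n-1)`. -/
theorem stmt0 (n : ℕ) (hn : 1 ≤ n) :
    ∃ c₁ c₂ : ℝ, 0 < c₁ ∧ c₁ ≤ c₂ ∧ ∃ B₀ : ℝ, 2 ≤ B₀ ∧ ∀ B : ℝ, B₀ ≤ B →
      c₁ * (B * Real.log B ^ (n - 1)) ≤
        (Nat.card {x : Fin n → Fin 3 → ℤ |
          (∀ j, IsPrimitiveVec (x j)) ∧ ∏ j, ((supNorm (x j) : ℝ)) ^ 3 ≤ B} : ℝ) ∧
      (Nat.card {x : Fin n → Fin 3 → ℤ |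
          (∀ j, IsPrimitiveVec (x j)) ∧ ∏ j, ((supNorm (x j) : ℝ)) ^ 3 ≤ B} : ℝ) ≤
        c₂ * (B * Real.log B ^ (n - 1)) := by
  obtain ⟨c, hc, M₀, hM₀, hlow⟩ := Tup_card_lower n hn
  set c₁' : ℝ := c / 2^n with hc₁'
  set c₂' : ℝ := 28^n * 2^(n-1) with hc₂'
  have hc₁'pos : 0 < c₁' := by rw [hc₁']; positivity
  have hc₂'pos : 0 < c₂' := by rw [hc₂']; positivity
  refine ⟨min c₁' c₂', c₂', lt_min hc₁'pos hc₂'pos, min_le_right _ _, (M₀:ℝ) + 4, ?_, ?_⟩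
  · have : (2:ℝ) ≤ (M₀:ℝ) := by exact_mod_cast hM₀
    linarith
  intro B hB
  have hM₀4 : (6:ℝ) ≤ (M₀:ℝ) + 4 := by
    have : (2:ℝ) ≤ (M₀:ℝ) := by exact_mod_cast hM₀
    linarith
  have hB6 : (6:ℝ) ≤ B := le_trans hM₀4 hB
  have hB0 : (0:ℝ) < B := by linarith
  set M : ℕ := ⌊B⌋₊ with hMdef
  -- set equality
  have hset : {x : Fin n → Fin 3 → ℤ |
      (∀ j, IsPrimitiveVec (x j)) ∧ ∏ j, ((supNorm (x j) : ℝ)) ^ 3 ≤ B} =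
      ↑(Tup n M) := by
    ext x
    simp only [Set.mem_setOf_eq, Finset.coe_sort_coe, Finset.mem_coe, mem_Tup]
    have hcast : ∏ j, ((supNorm (x j) : ℝ)) ^ 3 = ((∏ j, supNorm (x j) ^ 3 : ℕ) : ℝ) := by
      push_cast
      rfl
    rw [hcast]
    rw [← Nat.le_floor_iff (le_of_lt hB0)]
  have hcardEq : (Nat.card {x : Fin n → Fin 3 → ℤ |
      (∀ j, IsPrimitiveVec (x j)) ∧ ∏ j, ((supNorm (x j) : ℝ)) ^ 3 ≤ B} : ℝ)
      = ((Tup n M).card : ℝ) := by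
    rw [hset, Nat.card_coe_set_eq, Set.ncard_coe_finset]
  rw [hcardEq]
  -- basic facts
  have hMM₀ : M₀ ≤ M := by
    apply Nat.le_floor
    have : (M₀:ℝ) ≤ (M₀:ℝ) + 4 := by linarith
    linarith
  have hM1 : 1 ≤ M := by omega
  have hM0R : (0:ℝ) < (M:ℝ) := by exact_mod_cast (by omega : 0 < M)
  have hMB : (M:ℝ) ≤ B := Nat.floor_le (le_of_lt hB0)
  have hBM : B/2 ≤ (M:ℝ) := by
    have h1 : B < (M:ℝ) + 1 := Nat.lt_floor_add_one B
    linarith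
  have hlogB1 : 1 ≤ Real.log B := by
    rw [Real.le_log_iff_exp_le hB0]
    have := Real.exp_one_lt_d9
    linarith
  have hlogMB : Real.log M ≤ Real.log B := Real.log_le_log hM0R hMB
  have hlogBM : (1/2) * Real.log B ≤ Real.log M := by
    have h1 : Real.log (B/2) ≤ Real.log M := Real.log_le_log (by linarith) hBM
    have h2 : Real.log (B/2) = Real.log B - Real.log 2 := by
      rw [Real.log_div (by linarith) (by norm_num)]
    have h3 : Real.log 2 ≤ (1/2) * Real.log B := by
      have h4 : Real.log 4 ≤ Real.log B := Real.log_le_log (by norm_num) (by linarith)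
      have h5 : Real.log 4 = 2 * Real.log 2 := by
        rw [show (4:ℝ) = 2^(2:ℕ) by norm_num, Real.log_pow]
        norm_num
      linarith
    linarith
  have hlogM0 : 0 ≤ Real.log M := Real.log_nonneg (by exact_mod_cast hM1)
  constructor
  · -- lower bound
    have hstep : c₁' * (B * Real.log B ^ (n-1)) ≤ c * M * (Real.log M)^(n-1) := by
      have e1 : c₁' * (B * Real.log B ^ (n-1)) =
          c * (B/2) * ((1/2) * Real.log B)^(n-1) := by
        rw [hc₁', mul_pow]
        rw [show (2:ℝ)^n = 2 * 2^(n-1) by rw [← pow_succ']; congr 1; omega]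
        have h2 : ((1:ℝ)/2)^(n-1) = 1 / 2^(n-1) := by rw [div_pow, one_pow]
        rw [h2]
        field_simp
      rw [e1]
      have hb2 : (0:ℝ) ≤ B/2 := by linarith
      have hl2 : (0:ℝ) ≤ (1/2) * Real.log B := by linarith
      apply mul_le_mul (mul_le_mul_of_nonneg_left hBM (le_of_lt hc))
        (pow_le_pow_left₀ hl2 hlogBM (n-1)) (by positivity) (by positivity)
    calc min c₁' c₂' * (B * Real.log B ^ (n-1))
        ≤ c₁' * (B * Real.log B ^ (n-1)) := by
          apply mul_le_mul_of_nonneg_right (min_le_left _ _)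
          have : (0:ℝ) ≤ Real.log B ^ (n-1) := by positivity
          positivity
      _ ≤ c * M * (Real.log M)^(n-1) := hstep
      _ ≤ ((Tup n M).card : ℝ) := hlow M hMM₀
  · -- upper bound
    have hup := Tup_card_upper n hn M
    have hstep : (28:ℝ)^n * M * (1 + Real.log M)^(n-1) ≤ c₂' * (B * Real.log B ^ (n-1)) := by
      have e1 : c₂' * (B * Real.log B ^ (n-1)) = 28^n * B * (2 * Real.log B)^(n-1) := by
        rw [hc₂', mul_pow]
        ring
      rw [e1]
      have h1 : 1 + Real.log M ≤ 2 * Real.log B := by linarith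
      have h2 : (0:ℝ) ≤ 1 + Real.log M := by linarith
      apply mul_le_mul (mul_le_mul_of_nonneg_left hMB (by positivity))
        (pow_le_pow_left₀ h2 h1 (n-1)) (by positivity) (by positivity)
    exact le_trans hup hstep
end
end

section
/- Let c > 0 and let (ω_p) be a family of reals indexed by the primes with 0 ≤ ω_p < 1 for all p and ω_p ≥ 1 − c/p for every prime p > c. Then for every ε > 0 there exists a constant C > 0 such that for all Q ≥ 2, ∑_{q ≤ Q, q squarefree} ∏_{p ∣ q} ω_p/(1 − ω_p) ≥ C·Q^{2−ε}. -/
set_option maxHeartbeats 1000000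


open scoped Classical

open Finset

lemma cheb_nat (m : ℕ) :
    4 ^ m ≤ (2 * m + 1) ^ (((Finset.range (2 * m + 1)).filter Nat.Prime).card + 1) := by
  rcases Nat.eq_zero_or_pos m with rfl | hm
  · simp
  have h2m : 0 < 2 * m := by omega
  set n := (2 * m).choose m with hn
  have hn0 : n ≠ 0 := (Nat.choose_pos (by omega)).ne'
  have hsub : n.primeFactors ⊆ (Finset.range (2 * m + 1)).filter Nat.Prime := by
    intro p hp
    have hpp := Nat.prime_of_mem_primeFactors hp
    have hν : 1 ≤ n.factorization p :=
      hpp.factorization_pos_of_dvd hn0 (Nat.dvd_of_mem_primeFactors hp)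
    have hple : p ≤ 2 * m := by
      calc p = p ^ 1 := (pow_one p).symm
        _ ≤ p ^ (n.factorization p) := Nat.pow_le_pow_right hpp.one_lt.le hν
        _ ≤ 2 * m := Nat.pow_factorization_choose_le h2m
    simp only [mem_filter, mem_range]
    exact ⟨by omega, hpp⟩
  have hprod : n = ∏ p ∈ n.primeFactors, p ^ n.factorization p := by
    conv_lhs => rw [← Nat.factorization_prod_pow_eq_self hn0]
    rfl
  have hle : n ≤ (2 * m) ^ (((Finset.range (2 * m + 1)).filter Nat.Prime).card) := by
    calc n = ∏ p ∈ n.primeFactors, p ^ n.factorization p := hprod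
      _ ≤ ∏ _p ∈ n.primeFactors, 2 * m :=
        Finset.prod_le_prod' (fun p _ => Nat.pow_factorization_choose_le h2m)
      _ = (2 * m) ^ n.primeFactors.card := Finset.prod_const _
      _ ≤ (2 * m) ^ (((Finset.range (2 * m + 1)).filter Nat.Prime).card) :=
        Nat.pow_le_pow_right h2m (Finset.card_le_card hsub)
  calc 4 ^ m ≤ (2 * m + 1) * n := Nat.four_pow_le_two_mul_add_one_mul_central_binom m
    _ ≤ (2 * m + 1) * (2 * m) ^ (((Finset.range (2 * m + 1)).filter Nat.Prime).card) :=
        Nat.mul_le_mul_left _ hle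
    _ ≤ (2 * m + 1) * (2 * m + 1) ^ (((Finset.range (2 * m + 1)).filter Nat.Prime).card) :=
        Nat.mul_le_mul_left _ (Nat.pow_le_pow_left (by omega) _)
    _ = (2 * m + 1) ^ (((Finset.range (2 * m + 1)).filter Nat.Prime).card + 1) := by
        rw [pow_succ]; ring

lemma cheb_real (N : ℕ) (hN : 2 ≤ N) :
    ((N : ℝ) - 1) / 2 ≤
      ((((Finset.range (N + 1)).filter Nat.Prime).card : ℝ) + 1) * Real.log ((N : ℝ) + 1) := by
  set m := N / 2 with hm
  have hmN : 2 * m ≤ N := by omega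
  have hm1 : 1 ≤ m := by omega
  have hNm : N ≤ 2 * m + 1 := by omega
  -- real log version of cheb_nat
  have hnat := cheb_nat m
  set π2m := ((Finset.range (2 * m + 1)).filter Nat.Prime).card with hπ2m
  have hcast : ((4 : ℝ)) ^ m ≤ ((2 * m + 1 : ℕ) : ℝ) ^ (π2m + 1) := by
    exact_mod_cast hnat
  have hlog : (m : ℝ) * Real.log 4 ≤ ((π2m : ℝ) + 1) * Real.log ((2 * m + 1 : ℕ) : ℝ) := by
    have h1 : Real.log ((4 : ℝ) ^ m) ≤ Real.log (((2 * m + 1 : ℕ) : ℝ) ^ (π2m + 1)) := by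
      apply Real.log_le_log (by positivity) hcast
    rwa [Real.log_pow, Real.log_pow, Nat.cast_add, Nat.cast_one] at h1
  have hlog4 : (1 : ℝ) ≤ Real.log 4 := by
    rw [show (1:ℝ) = Real.log (Real.exp 1) by rw [Real.log_exp]]
    apply Real.log_le_log (Real.exp_pos 1)
    linarith [Real.exp_one_lt_d9]
  have hmono : (π2m : ℝ) ≤ (((Finset.range (N + 1)).filter Nat.Prime).card : ℝ) := by
    have : π2m ≤ ((Finset.range (N + 1)).filter Nat.Prime).card := by
      apply Finset.card_le_card
      apply Finset.filter_subset_filter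
      exact Finset.range_subset_range.mpr (by omega)
    exact_mod_cast this
  have hlogmono : Real.log ((2 * m + 1 : ℕ) : ℝ) ≤ Real.log ((N : ℝ) + 1) := by
    apply Real.log_le_log (by positivity)
    have h2 : (2 * m + 1 : ℕ) ≤ N + 1 := by omega
    exact_mod_cast h2
  have hmge : ((N : ℝ) - 1) / 2 ≤ (m : ℝ) := by
    have h3 : (N : ℝ) ≤ 2 * m + 1 := by exact_mod_cast hNm
    linarith
  have hlogpos : 0 ≤ Real.log ((N : ℝ) + 1) := Real.log_nonneg (by
    have : (2 : ℝ) ≤ N := by exact_mod_cast hN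
    linarith)
  calc ((N : ℝ) - 1) / 2 ≤ (m : ℝ) := hmge
    _ = (m : ℝ) * 1 := (mul_one _).symm
    _ ≤ (m : ℝ) * Real.log 4 := by gcongr
    _ ≤ ((π2m : ℝ) + 1) * Real.log ((2 * m + 1 : ℕ) : ℝ) := hlog
    _ ≤ ((π2m : ℝ) + 1) * Real.log ((N : ℝ) + 1) := by gcongr
    _ ≤ ((((Finset.range (N + 1)).filter Nat.Prime).card : ℝ) + 1) * Real.log ((N : ℝ) + 1) := by
        gcongr

lemma evlog (a : ℝ) {β : ℝ} (hβ : 0 < β) :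
    ∀ᶠ x : ℝ in Filter.atTop, a * Real.log x ≤ x ^ β := by
  rcases le_or_gt a 0 with ha | ha
  · filter_upwards [Filter.eventually_ge_atTop (1 : ℝ)] with x hx
    have h1 : 0 ≤ Real.log x := Real.log_nonneg hx
    have h2 : (0:ℝ) < x ^ β := Real.rpow_pos_of_pos (by linarith) β
    nlinarith
  · have h := (isLittleO_log_rpow_atTop hβ).def (by positivity : (0:ℝ) < 1 / a)
    filter_upwards [h, Filter.eventually_ge_atTop (1 : ℝ)] with x hx hx1
    have h1 : 0 ≤ Real.log x := Real.log_nonneg hx1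
    have h2 : (0:ℝ) < x ^ β := Real.rpow_pos_of_pos (by linarith) β
    rw [Real.norm_eq_abs, Real.norm_eq_abs, abs_of_nonneg h1, abs_of_nonneg h2.le] at hx
    calc a * Real.log x ≤ a * (1 / a * x ^ β) := by
          apply mul_le_mul_of_nonneg_left hx ha.le
      _ = x ^ β := by field_simp

/-- Let `c > 0` and `(ω_p)_p` be reals indexed by primes with `0 ≤ ω_p < 1` and
`ω_p ≥ 1 − c/p` for every prime `p > c`.  Then for every `ε > 0` there is `C > 0` such that
for all `Q ≥ 2`, `∑_{q ≤ Q squarefree} ∏_{p ∣ q} ω_p/(1−ω_p) ≥ C·Q^(2−ε)`. -/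
theorem stmt5 (c : ℝ) (hc : 0 < c) (ω : ℕ → ℝ)
    (hω : ∀ p : ℕ, p.Prime → 0 ≤ ω p ∧ ω p < 1)
    (hlb : ∀ p : ℕ, p.Prime → c < (p : ℝ) → 1 - c / p ≤ ω p) :
    ∀ ε : ℝ, 0 < ε → ∃ C : ℝ, 0 < C ∧ ∀ Q : ℝ, 2 ≤ Q →
      C * Q ^ (2 - ε) ≤
        ∑ q ∈ (Finset.range (⌊Q⌋₊ + 1)).filter Squarefree,
          ∏ p ∈ q.primeFactors, ω p / (1 - ω p) := by
  intro ε hε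
  set η : ℝ := min ε 1 / 2 with hηdef
  have hη0 : 0 < η := by
    have : 0 < min ε 1 := lt_min hε one_pos
    positivity
  have hη1 : η ≤ 1 / 2 := by
    have : min ε 1 ≤ 1 := min_le_right _ _
    rw [hηdef]; linarith
  have hηε : η ≤ ε / 2 := by
    have : min ε 1 ≤ ε := min_le_left _ _
    rw [hηdef]; linarith
  have hεη : 0 < ε - η := by linarith
  have h1η : 0 < 1 - η := by linarith
  -- eventual conditions
  have hev : ∀ᶠ Q : ℝ in Filter.atTop,
      1 ≤ Real.log Q ∧ 64 * Real.log Q ≤ Q ∧ 32 * Real.log Q ≤ Q ^ η ∧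
      32 * c * Real.log Q ≤ Q ^ (ε - η) ∧ 2 * c ≤ Q ^ (1 - η) ∧ 2 ≤ Q ^ (1 - η) := by
    have e1 : ∀ᶠ Q : ℝ in Filter.atTop, 1 ≤ Real.log Q :=
      Real.tendsto_log_atTop.eventually_ge_atTop 1
    have e2 : ∀ᶠ Q : ℝ in Filter.atTop, 64 * Real.log Q ≤ Q := by
      filter_upwards [evlog 64 one_pos, Filter.eventually_ge_atTop (0:ℝ)] with x hx hx0
      rwa [Real.rpow_one] at hx
    have e3 := evlog 32 hη0
    have e4 := evlog (32 * c) hεη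
    have e5 : ∀ᶠ Q : ℝ in Filter.atTop, 2 * c ≤ Q ^ (1 - η) :=
      (tendsto_rpow_atTop h1η).eventually_ge_atTop (2 * c)
    have e6 : ∀ᶠ Q : ℝ in Filter.atTop, (2:ℝ) ≤ Q ^ (1 - η) :=
      (tendsto_rpow_atTop h1η).eventually_ge_atTop 2
    filter_upwards [e1, e2, e3, e4, e5, e6] with x h1 h2 h3 h4 h5 h6
    exact ⟨h1, h2, h3, h4, h5, h6⟩
  obtain ⟨Q₀, hQ₀⟩ := Filter.eventually_atTop.mp hev
  set Q₁ : ℝ := max Q₀ 2 with hQ₁def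
  have hQ₁2 : (2:ℝ) ≤ Q₁ := le_max_right _ _
  have hQ₁pos : (0:ℝ) < Q₁ := by linarith
  refine ⟨min 1 ((Q₁ ^ 2)⁻¹), lt_min one_pos (by positivity), ?_⟩
  intro Q hQ2
  have hQpos : (0:ℝ) < Q := by linarith
  set N := ⌊Q⌋₊ with hNdef
  -- nonnegativity of terms
  have hterm : ∀ q : ℕ, 0 ≤ ∏ p ∈ q.primeFactors, ω p / (1 - ω p) := by
    intro q
    apply Finset.prod_nonneg
    intro p hp
    have hpp := Nat.prime_of_mem_primeFactors hp
    have h1 := (hω p hpp).1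
    have h2 := (hω p hpp).2
    exact div_nonneg h1 (by linarith)
  have hN1 : 1 ≤ N := Nat.le_floor (by exact_mod_cast (by linarith : (1:ℝ) ≤ Q))
  have hone : (1:ℝ) ≤ ∑ q ∈ (Finset.range (N + 1)).filter Squarefree,
      ∏ p ∈ q.primeFactors, ω p / (1 - ω p) := by
    have hmem : 1 ∈ (Finset.range (N + 1)).filter Squarefree := by
      simp only [mem_filter, mem_range]
      exact ⟨by omega, squarefree_one⟩
    have := Finset.single_le_sum (f := fun q => ∏ p ∈ q.primeFactors, ω p / (1 - ω p))
      (fun q _ => hterm q) hmem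
    simpa using this
  by_cases hbig : Q₁ ≤ Q
  swap
  · -- small Q case
    push_neg at hbig
    have hr : Q ^ (2 - ε) ≤ Q₁ ^ 2 := by
      calc Q ^ (2 - ε) ≤ Q ^ (2:ℝ) :=
            Real.rpow_le_rpow_of_exponent_le (by linarith) (by linarith)
        _ ≤ Q₁ ^ (2:ℝ) := Real.rpow_le_rpow hQpos.le hbig.le (by norm_num)
        _ = Q₁ ^ 2 := by rw [← Real.rpow_natCast Q₁ 2]; norm_num
    have h4 : min 1 ((Q₁ ^ 2)⁻¹) * Q ^ (2 - ε) ≤ (Q₁ ^ 2)⁻¹ * Q₁ ^ 2 := by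
      apply mul_le_mul (min_le_right _ _) hr (Real.rpow_nonneg hQpos.le _) (by positivity)
    rw [inv_mul_cancel₀ (by positivity)] at h4
    exact h4.trans hone
  · -- big Q case
    obtain ⟨hL1, hL2, hL3, hL4, hA2c, hA2⟩ := hQ₀ Q (le_trans (le_max_left _ _) hbig)
    set L := Real.log Q with hLdef
    have hLpos : 0 < L := by linarith
    set A := Q ^ (1 - η) with hAdef
    set B := Q ^ η with hBdef
    have hApos : 0 < A := Real.rpow_pos_of_pos hQpos _
    have hBpos : 0 < B := Real.rpow_pos_of_pos hQpos _
    have hAB : A * B = Q := by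
      rw [hAdef, hBdef, ← Real.rpow_add hQpos, sub_add_cancel, Real.rpow_one]
    set K := ⌈A⌉₊ with hKdef
    have hKA : A ≤ (K:ℝ) := Nat.le_ceil A
    have hKA' : (K:ℝ) ≤ A + 1 := (Nat.ceil_lt_add_one hApos.le).le
    have hN2 : 2 ≤ N := Nat.le_floor (by exact_mod_cast hQ2)
    have hNQ : (N : ℝ) ≤ Q := Nat.floor_le hQpos.le
    have hQN : Q - 1 ≤ (N:ℝ) := by
      have := Nat.lt_floor_add_one Q
      linarith
    set T := (Finset.range (N + 1)).filter (fun q => Nat.Prime q ∧ K < q) with hTdef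
    have hTsub : T ⊆ (Finset.range (N + 1)).filter Squarefree := by
      intro q hq
      simp only [hTdef, mem_filter] at hq ⊢
      exact ⟨hq.1, hq.2.1.squarefree⟩
    have hS1 : ∑ q ∈ T, (∏ p ∈ q.primeFactors, ω p / (1 - ω p)) ≤
        ∑ q ∈ (Finset.range (N + 1)).filter Squarefree,
          ∏ p ∈ q.primeFactors, ω p / (1 - ω p) :=
      Finset.sum_le_sum_of_subset_of_nonneg hTsub (fun q _ _ => hterm q)
    -- per-term lower bound
    have hTbound : ∀ q ∈ T, A / (2 * c) ≤ ∏ p ∈ q.primeFactors, ω p / (1 - ω p) := by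
      intro q hq
      simp only [hTdef, mem_filter, mem_range] at hq
      obtain ⟨hqN, hqp, hqK⟩ := hq
      have hKq : (K:ℝ) ≤ (q:ℝ) := by exact_mod_cast hqK.le
      have hAq : A ≤ (q:ℝ) := hKA.trans hKq
      have hq2c : 2 * c ≤ (q:ℝ) := by linarith
      have hqpos : (0:ℝ) < q := by linarith
      have hw := hω q hqp
      have hwlb := hlb q hqp (by linarith : c < (q:ℝ))
      have h1w : 0 < 1 - ω q := by linarith [hw.2]
      have hcq : c / q ≤ 1 / 2 := by rw [div_le_iff₀ hqpos]; linarith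
      have hwhalf : 1 / 2 ≤ ω q := by linarith
      have hqw : (q:ℝ) - c ≤ q * ω q := by
        have h := mul_le_mul_of_nonneg_left hwlb hqpos.le
        have e : (q:ℝ) * (1 - c / q) = q - c := by field_simp
        rw [e] at h
        linarith
      rw [hqp.primeFactors, Finset.prod_singleton]
      rw [div_le_div_iff₀ (by linarith) h1w]
      nlinarith [mul_le_mul_of_nonneg_right hAq h1w.le]
    have hS2 : (T.card : ℝ) * (A / (2 * c)) ≤
        ∑ q ∈ T, (∏ p ∈ q.primeFactors, ω p / (1 - ω p)) := by
      have := Finset.card_nsmul_le_sum T _ _ hTbound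
      simpa [nsmul_eq_mul] using this
    -- prime counting
    set P := (Finset.range (N + 1)).filter Nat.Prime with hPdef
    have hPT : P ⊆ T ∪ Finset.range (K + 1) := by
      intro q hq
      simp only [hPdef, hTdef, mem_filter, mem_range, mem_union] at hq ⊢
      by_cases h : K < q
      · exact Or.inl ⟨hq.1, hq.2, h⟩
      · exact Or.inr (by omega)
    have hcard1 : (P.card : ℝ) ≤ (T.card : ℝ) + (K + 1) := by
      have h1 : P.card ≤ T.card + (K + 1) := by
        calc P.card ≤ (T ∪ Finset.range (K + 1)).card := Finset.card_le_card hPT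
          _ ≤ T.card + (Finset.range (K + 1)).card := Finset.card_union_le _ _
          _ = T.card + (K + 1) := by rw [Finset.card_range]
      exact_mod_cast h1
    -- Chebyshev lower bound on P.card
    have hcheb := cheb_real N hN2
    have hNlog : Real.log ((N:ℝ) + 1) ≤ 2 * L := by
      have h1 : ((N:ℝ) + 1) ≤ Q ^ (2:ℕ) := by nlinarith
      calc Real.log ((N:ℝ) + 1) ≤ Real.log (Q ^ (2:ℕ)) :=
            Real.log_le_log (by positivity) h1
        _ = 2 * L := by rw [Real.log_pow]; push_cast; ring
    have hπ : Q / (8 * L) ≤ (P.card : ℝ) := by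
      have h1 : ((N:ℝ) - 1) / 2 ≤ ((P.card : ℝ) + 1) * (2 * L) := by
        refine hcheb.trans ?_
        gcongr
      rw [div_le_iff₀ (by positivity)]
      nlinarith [hL1, hL2, hQN]
    have hAQ : A ≤ Q / (32 * L) := by
      rw [le_div_iff₀ (by positivity)]
      calc A * (32 * L) ≤ A * B := by gcongr
        _ = Q := hAB
    have h2Q : (2:ℝ) ≤ Q / (32 * L) := by
      rw [le_div_iff₀ (by positivity)]
      nlinarith [hL1, hL2]
    have hT : Q / (16 * L) ≤ (T.card : ℝ) := by
      have e : Q / (8 * L) = Q / (16 * L) + Q / (32 * L) + Q / (32 * L) := by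
        field_simp
        ring
      linarith [hπ, hcard1, hKA', hAQ, h2Q]
    -- final chain
    have hQA : Q * A = Q ^ (2 - ε) * Q ^ (ε - η) := by
      rw [hAdef, ← Real.rpow_add hQpos]
      calc Q * Q ^ (1 - η) = Q ^ (1:ℝ) * Q ^ (1 - η) := by rw [Real.rpow_one]
        _ = Q ^ ((1:ℝ) + (1 - η)) := (Real.rpow_add hQpos _ _).symm
        _ = Q ^ (2 - ε + (ε - η)) := by ring_nf
    have step2 : Q ^ (2 - ε) ≤ Q / (16 * L) * (A / (2 * c)) := by
      rw [div_mul_div_comm, le_div_iff₀ (by positivity)]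
      calc Q ^ (2 - ε) * (16 * L * (2 * c)) = Q ^ (2 - ε) * (32 * c * L) := by ring
        _ ≤ Q ^ (2 - ε) * Q ^ (ε - η) := by
            gcongr
        _ = Q * A := hQA.symm
    have step1 : Q / (16 * L) * (A / (2 * c)) ≤ (T.card : ℝ) * (A / (2 * c)) := by
      gcongr
    have hCle : min 1 ((Q₁ ^ 2)⁻¹) * Q ^ (2 - ε) ≤ Q ^ (2 - ε) := by
      have h0 : (0:ℝ) ≤ Q ^ (2 - ε) := Real.rpow_nonneg hQpos.le _
      nlinarith [min_le_left (1:ℝ) ((Q₁ ^ 2)⁻¹)]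
    linarith [hS1, hS2, step1, step2, hCle]
end

section
/- Let n ≥ 2 be an integer and let g be a nonzero polynomial with rational coefficients in n·3 variables, written in n blocks of 3 variables, which is homogeneous in each block of 3 variables. Then there exist γ ∈ [0,1) and C > 0 such that for all B ≥ 2, the number of n-tuples (x⁽¹⁾, …, x⁽ⁿ⁾) of primitive vectors in ℤ³ satisfying ∏_{j=1}^n ‖x⁽ʲ⁾‖∞³ ≤ B and g(x⁽¹⁾, …, x⁽ⁿ⁾) = 0 is at most C·B·(log B)^{n−2+γ}. -/
noncomputable section
open MvPolynomial

namespace Stmt6Aux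

open Finset Real

abbrev V := Fin 3 → ℤ

def Hn (x : V) : ℕ := Finset.univ.sup fun i => (x i).natAbs

def box (M : ℕ) : Finset ℤ := Finset.Icc (-(M:ℤ)) (M:ℤ)

def vbox (M : ℕ) : Finset V := Fintype.piFinset fun _ => box M

lemma card_box (M : ℕ) : (box M).card = 2*M+1 := by
  simp [box, Int.card_Icc]
  omega

lemma card_vbox (M : ℕ) : (vbox M).card = (2*M+1)^3 := by
  simp [vbox, Fintype.card_piFinset, card_box]

lemma mem_vbox {M : ℕ} {x : V} : x ∈ vbox M ↔ Hn x ≤ M := by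
  simp only [vbox, Fintype.mem_piFinset, box, Finset.mem_Icc, Hn, Finset.sup_le_iff,
    Finset.mem_univ, forall_true_left]
  constructor
  · intro h i
    have := h i
    omega
  · intro h i
    have := h i
    omega

lemma Hn_eq_zero {x : V} : Hn x = 0 ↔ x = 0 := by
  constructor
  · intro h
    funext i
    have : (x i).natAbs ≤ 0 := h ▸ Finset.le_sup (f := fun i => (x i).natAbs) (Finset.mem_univ i)
    simpa [Int.natAbs_eq_zero] using Nat.le_zero.mp this
  · intro h; subst h; simp [Hn]

lemma one_le_Hn {x : V} (hx : x ≠ 0) : 1 ≤ Hn x := by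
  rcases Nat.eq_zero_or_pos (Hn x) with h | h
  · exact absurd (Hn_eq_zero.mp h) hx
  · exact h

lemma vbox_mono {M N : ℕ} (h : M ≤ N) : vbox M ⊆ vbox N := by
  intro x hx
  rw [mem_vbox] at hx ⊢
  omega

lemma eval_ne_zero_of_isEmpty {σ : Type*} [IsEmpty σ] {p : MvPolynomial σ ℚ} (hp : p ≠ 0)
    (v : σ → ℚ) : eval v p ≠ 0 := by
  obtain ⟨c, rfl⟩ := C_surjective σ p
  simp only [eval_C]
  intro h
  exact hp (by rw [h, map_zero])

lemma card_filter_piFinset_succ {k : ℕ} (S : Finset ℚ) (P : (Fin (k+1) → ℚ) → Prop)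
    [DecidablePred P] :
    ((Fintype.piFinset fun _ : Fin (k+1) => S).filter P).card
      = ∑ y ∈ Fintype.piFinset (fun _ : Fin k => S), (S.filter fun a => P (Fin.cons a y)).card := by
  rw [Finset.card_eq_sum_card_fiberwise
    (f := fun x => Fin.tail x) (t := Fintype.piFinset (fun _ : Fin k => S))]
  · refine Finset.sum_congr rfl fun y hy => ?_
    refine Finset.card_nbij' (fun x => x 0) (fun a => Fin.cons a y) ?_ ?_ ?_ ?_
    · intro x hx
      simp only [Finset.mem_coe, Finset.mem_filter, Fintype.mem_piFinset] at hx ⊢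
      obtain ⟨⟨h1, h2⟩, h3⟩ := hx
      refine ⟨h1 0, ?_⟩
      rwa [← h3, Fin.cons_self_tail]
    · intro a ha
      simp only [Finset.mem_coe, Finset.mem_filter, Fintype.mem_piFinset] at ha ⊢
      obtain ⟨ha1, ha2⟩ := ha
      refine ⟨⟨?_, ha2⟩, by rw [Fin.tail_cons]⟩
      intro i
      refine Fin.cases ?_ ?_ i
      · rw [Fin.cons_zero]; exact ha1
      · intro j
        rw [Fin.cons_succ]
        exact Fintype.mem_piFinset.mp hy j
    · intro x hx
      simp only [Finset.mem_coe, Finset.mem_filter, Fintype.mem_piFinset] at hx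
      rw [← hx.2]
      exact Fin.cons_self_tail x
    · intro a _
      simp
  · intro x hx
    simp only [Finset.mem_coe, Finset.mem_filter, Fintype.mem_piFinset] at hx
    exact Fintype.mem_piFinset.mpr fun i => hx.1 i.succ

lemma root_count_le {k : ℕ} {q : Polynomial (MvPolynomial (Fin k) ℚ)}
    (S : Finset ℚ) {y : Fin k → ℚ} (hy : eval y q.leadingCoeff ≠ 0) :
    (S.filter fun a => Polynomial.eval a (q.map (eval y : MvPolynomial (Fin k) ℚ →+* ℚ)) = 0).card
      ≤ q.natDegree := by
  set m := q.map (eval y : MvPolynomial (Fin k) ℚ →+* ℚ) with hm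
  have hm0 : m ≠ 0 := by
    intro h
    apply hy
    have : m.coeff q.natDegree = 0 := by rw [h]; simp
    rwa [hm, Polynomial.coeff_map] at this
  calc (S.filter fun a => Polynomial.eval a m = 0).card
      ≤ m.roots.toFinset.card := by
        apply Finset.card_le_card
        intro a ha
        simp only [Finset.mem_filter] at ha
        rw [Multiset.mem_toFinset, Polynomial.mem_roots hm0]
        exact ha.2
    _ ≤ Multiset.card m.roots := Multiset.toFinset_card_le _
    _ ≤ m.natDegree := Polynomial.card_roots' m
    _ ≤ q.natDegree := Polynomial.natDegree_map_le

lemma sz : ∀ (k : ℕ) (p : MvPolynomial (Fin (k+1)) ℚ), p ≠ 0 → ∀ S : Finset ℚ,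
    ((Fintype.piFinset fun _ : Fin (k+1) => S).filter fun x => eval x p = 0).card
      ≤ p.totalDegree * S.card ^ k := by
  intro k
  induction k with
  | zero =>
    intro p hp S
    have hq0 : finSuccEquiv ℚ 0 p ≠ 0 :=
      fun h => hp ((finSuccEquiv ℚ 0).injective (h.trans (map_zero _).symm))
    have hlc : (finSuccEquiv ℚ 0 p).leadingCoeff ≠ 0 := Polynomial.leadingCoeff_ne_zero.mpr hq0
    have hdeg : (finSuccEquiv ℚ 0 p).natDegree ≤ p.totalDegree := by
      have := totalDegree_coeff_finSuccEquiv_add_le p (finSuccEquiv ℚ 0 p).natDegree hlc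
      omega
    rw [card_filter_piFinset_succ S (fun x => eval x p = 0)]
    calc ∑ y ∈ Fintype.piFinset (fun _ : Fin 0 => S),
          (S.filter fun a => eval (Fin.cons a y) p = 0).card
        ≤ ∑ y ∈ Fintype.piFinset (fun _ : Fin 0 => S), p.totalDegree := by
          refine Finset.sum_le_sum fun y _ => ?_
          have hy : eval y (finSuccEquiv ℚ 0 p).leadingCoeff ≠ 0 :=
            eval_ne_zero_of_isEmpty hlc y
          have heq : ∀ a : ℚ, eval (Fin.cons a y) p
              = Polynomial.eval a (Polynomial.map (eval y) (finSuccEquiv ℚ 0 p)) :=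
            fun a => eval_eq_eval_mv_eval' y a p
          simp only [heq]
          exact (root_count_le S hy).trans hdeg
      _ ≤ p.totalDegree * S.card ^ 0 := by
          rw [Finset.sum_const]
          have h1 : (Fintype.piFinset (fun _ : Fin 0 => S)).card ≤ 1 := by
            apply Finset.card_le_one.mpr
            intro a _ b _
            funext i
            exact i.elim0
          calc (Fintype.piFinset (fun _ : Fin 0 => S)).card • p.totalDegree
              = (Fintype.piFinset (fun _ : Fin 0 => S)).card * p.totalDegree := smul_eq_mul _ _
            _ ≤ 1 * p.totalDegree := Nat.mul_le_mul_right _ h1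
            _ = p.totalDegree * S.card ^ 0 := by ring
  | succ k ih =>
    intro p hp S
    have hq0 : finSuccEquiv ℚ (k+1) p ≠ 0 :=
      fun h => hp ((finSuccEquiv ℚ (k+1)).injective (h.trans (map_zero _).symm))
    set q := finSuccEquiv ℚ (k+1) p with hqdef
    have hlc : q.leadingCoeff ≠ 0 := Polynomial.leadingCoeff_ne_zero.mpr hq0
    have hsum : q.leadingCoeff.totalDegree + q.natDegree ≤ p.totalDegree :=
      totalDegree_coeff_finSuccEquiv_add_le p q.natDegree hlc
    have hcardpi : (Fintype.piFinset (fun _ : Fin (k+1) => S)).card = S.card ^ (k+1) := by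
      simp [Fintype.card_piFinset]
    rw [card_filter_piFinset_succ S (fun x => eval x p = 0)]
    have hbound : ∀ y ∈ Fintype.piFinset (fun _ : Fin (k+1) => S),
        (S.filter fun a => eval (Fin.cons a y) p = 0).card
          ≤ q.natDegree + if eval y q.leadingCoeff = 0 then S.card else 0 := by
      intro y _
      by_cases hy : eval y q.leadingCoeff = 0
      · rw [if_pos hy]
        calc (S.filter fun a => eval (Fin.cons a y) p = 0).card ≤ S.card :=
              Finset.card_le_card (Finset.filter_subset _ _)
          _ ≤ q.natDegree + S.card := Nat.le_add_left _ _
      · simp only [if_neg hy, Nat.add_zero]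
        have heq : ∀ a : ℚ, eval (Fin.cons a y) p
            = Polynomial.eval a (Polynomial.map (eval y) q) :=
          fun a => eval_eq_eval_mv_eval' y a p
        simp only [heq]
        exact root_count_le S hy
    calc ∑ y ∈ Fintype.piFinset (fun _ : Fin (k+1) => S),
          (S.filter fun a => eval (Fin.cons a y) p = 0).card
        ≤ ∑ y ∈ Fintype.piFinset (fun _ : Fin (k+1) => S),
            (q.natDegree + if eval y q.leadingCoeff = 0 then S.card else 0) :=
          Finset.sum_le_sum hbound
      _ = (Fintype.piFinset (fun _ : Fin (k+1) => S)).card * q.natDegree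
          + ((Fintype.piFinset (fun _ : Fin (k+1) => S)).filter
              (fun y => eval y q.leadingCoeff = 0)).card * S.card := by
          rw [Finset.sum_add_distrib, Finset.sum_const, ← Finset.sum_filter, Finset.sum_const,
            smul_eq_mul, smul_eq_mul]
      _ ≤ S.card ^ (k+1) * q.natDegree
          + (q.leadingCoeff.totalDegree * S.card ^ k) * S.card := by
          rw [hcardpi]
          gcongr
          exact ih q.leadingCoeff hlc S
      _ = (q.natDegree + q.leadingCoeff.totalDegree) * S.card ^ (k+1) := by ring
      _ ≤ p.totalDegree * S.card ^ (k+1) := Nat.mul_le_mul_right _ (by omega)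

lemma sz_box {p : MvPolynomial (Fin 3) ℚ} (hp : p ≠ 0) (M : ℕ) :
    ((vbox M).filter fun x => eval (fun i => (x i : ℚ)) p = 0).card
      ≤ p.totalDegree * (2*M+1)^2 := by
  set Sq : Finset ℚ := (box M).image (fun z : ℤ => (z:ℚ)) with hSq
  have hcard : Sq.card = 2*M+1 := by
    rw [hSq, Finset.card_image_of_injective _ (fun a b h => by exact_mod_cast h), card_box]
  have hinj : ∀ x ∈ ((vbox M).filter fun x => eval (fun i => (x i : ℚ)) p = 0),
      (fun (x : V) (i : Fin 3) => ((x i : ℚ))) x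
        ∈ ((Fintype.piFinset fun _ : Fin 3 => Sq).filter fun v => eval v p = 0) := by
    intro x hx
    simp only [Finset.mem_filter, Fintype.mem_piFinset, vbox] at hx ⊢
    refine ⟨fun i => Finset.mem_image_of_mem _ (hx.1 i), hx.2⟩
  calc ((vbox M).filter fun x => eval (fun i => (x i : ℚ)) p = 0).card
      ≤ ((Fintype.piFinset fun _ : Fin 3 => Sq).filter fun v => eval v p = 0).card := by
        apply Finset.card_le_card_of_injOn _ hinj
        intro x _ y _ hxy
        funext i
        have h2 : ((x i : ℚ)) = ((y i : ℚ)) := congrFun hxy i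
        exact_mod_cast h2
    _ ≤ p.totalDegree * Sq.card ^ 2 := sz 2 p hp Sq
    _ = p.totalDegree * (2*M+1)^2 := by rw [hcard]

lemma sum_inv_le_swap (A : Finset V) (M a : ℕ) (hA : ∀ x ∈ A, x ≠ 0 ∧ Hn x ≤ M) :
    ∑ x ∈ A, ((Hn x : ℝ)^(a+1))⁻¹
      ≤ 2^(a+2) * ∑ m ∈ Finset.Icc 1 (2*M),
          ((m:ℝ)^(a+2))⁻¹ * ((A.filter fun x => Hn x ≤ m).card : ℝ) := by
  classical
  have key : ∀ x ∈ A, ((Hn x : ℝ)^(a+1))⁻¹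
      ≤ 2^(a+2) * ∑ m ∈ Finset.Icc 1 (2*M),
          (if Hn x ≤ m then ((m:ℝ)^(a+2))⁻¹ else 0) := by
    intro x hx
    obtain ⟨hx0, hxM⟩ := hA x hx
    set h := Hn x with hh
    have h1 : 1 ≤ h := one_le_Hn hx0
    have hposR : (0:ℝ) < (h:ℝ) := by exact_mod_cast h1
    have hcardIcc : (Finset.Icc h (2*h-1)).card = h := by
      rw [Nat.card_Icc]; omega
    have hlow : ∀ m ∈ Finset.Icc h (2*h-1),
        (((2*h:ℕ):ℝ)^(a+2))⁻¹ ≤ (if h ≤ m then ((m:ℝ)^(a+2))⁻¹ else 0) := by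
      intro m hm
      rw [Finset.mem_Icc] at hm
      rw [if_pos hm.1]
      have hm1 : (0:ℝ) < (m:ℝ) := by
        have : 1 ≤ m := le_trans h1 hm.1
        exact_mod_cast this
      apply inv_anti₀ (by positivity)
      apply pow_le_pow_left₀ (le_of_lt hm1)
      exact_mod_cast (by omega : m ≤ 2*h)
    have hstep : (h:ℝ) * ((((2*h:ℕ)):ℝ)^(a+2))⁻¹
        ≤ ∑ m ∈ Finset.Icc 1 (2*M), (if h ≤ m then ((m:ℝ)^(a+2))⁻¹ else 0) := by
      calc (h:ℝ) * ((((2*h:ℕ)):ℝ)^(a+2))⁻¹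
          = (Finset.Icc h (2*h-1)).card • ((((2*h:ℕ)):ℝ)^(a+2))⁻¹ := by
            rw [hcardIcc, nsmul_eq_mul]
        _ ≤ ∑ m ∈ Finset.Icc h (2*h-1), (if h ≤ m then ((m:ℝ)^(a+2))⁻¹ else 0) :=
            Finset.card_nsmul_le_sum _ _ _ hlow
        _ ≤ ∑ m ∈ Finset.Icc 1 (2*M), (if h ≤ m then ((m:ℝ)^(a+2))⁻¹ else 0) := by
            apply Finset.sum_le_sum_of_subset_of_nonneg
            · intro m hm
              rw [Finset.mem_Icc] at hm ⊢
              omega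
            · intro m _ _
              split <;> positivity
    have heq : ((h:ℝ)^(a+1))⁻¹ = 2^(a+2) * ((h:ℝ) * ((((2*h:ℕ)):ℝ)^(a+2))⁻¹) := by
      push_cast
      rw [mul_pow]
      field_simp
      ring
    rw [heq]
    have h2 : (0:ℝ) ≤ 2^(a+2) := by positivity
    exact mul_le_mul_of_nonneg_left hstep h2
  calc ∑ x ∈ A, ((Hn x : ℝ)^(a+1))⁻¹
      ≤ ∑ x ∈ A, 2^(a+2) * ∑ m ∈ Finset.Icc 1 (2*M),
          (if Hn x ≤ m then ((m:ℝ)^(a+2))⁻¹ else 0) := Finset.sum_le_sum key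
    _ = 2^(a+2) * ∑ m ∈ Finset.Icc 1 (2*M), ∑ x ∈ A,
          (if Hn x ≤ m then ((m:ℝ)^(a+2))⁻¹ else 0) := by
        rw [← Finset.mul_sum]
        congr 1
        exact Finset.sum_comm
    _ = 2^(a+2) * ∑ m ∈ Finset.Icc 1 (2*M),
          ((m:ℝ)^(a+2))⁻¹ * ((A.filter fun x => Hn x ≤ m).card : ℝ) := by
        congr 1
        refine Finset.sum_congr rfl fun m _ => ?_
        rw [← Finset.sum_filter, Finset.sum_const, nsmul_eq_mul, mul_comm]

lemma sum_inv_sq_le (A : Finset V) (M : ℕ) (hA : ∀ x ∈ A, x ≠ 0 ∧ Hn x ≤ M) :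
    ∑ x ∈ A, ((Hn x : ℝ)^2)⁻¹ ≤ 432 * M := by
  have h := sum_inv_le_swap A M 1 hA
  have hterm : ∀ m ∈ Finset.Icc 1 (2*M),
      ((m:ℝ)^3)⁻¹ * ((A.filter fun x => Hn x ≤ m).card : ℝ) ≤ 27 := by
    intro m hm
    rw [Finset.mem_Icc] at hm
    have hmpos : (0:ℝ) < (m:ℝ) := by exact_mod_cast hm.1
    have hcard : ((A.filter fun x => Hn x ≤ m).card : ℝ) ≤ ((2*m+1:ℕ):ℝ)^3 := by
      have : (A.filter fun x => Hn x ≤ m) ⊆ vbox m := by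
        intro x hx
        rw [Finset.mem_filter] at hx
        exact mem_vbox.mpr hx.2
      have := Finset.card_le_card this
      rw [card_vbox] at this
      exact_mod_cast (by exact_mod_cast this : ((A.filter fun x => Hn x ≤ m).card : ℝ) ≤ (((2*m+1)^3 : ℕ) : ℝ))
    calc ((m:ℝ)^3)⁻¹ * ((A.filter fun x => Hn x ≤ m).card : ℝ)
        ≤ ((m:ℝ)^3)⁻¹ * ((2*m+1:ℕ):ℝ)^3 := by
          apply mul_le_mul_of_nonneg_left hcard (by positivity)
      _ ≤ ((m:ℝ)^3)⁻¹ * (3*(m:ℝ))^3 := by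
          apply mul_le_mul_of_nonneg_left _ (by positivity)
          apply pow_le_pow_left₀ (by positivity)
          push_cast
          have hm1 : (1:ℝ) ≤ (m:ℝ) := by exact_mod_cast hm.1
          linarith
      _ = 27 := by field_simp; ring
  calc ∑ x ∈ A, ((Hn x : ℝ)^2)⁻¹
      ≤ 2^3 * ∑ m ∈ Finset.Icc 1 (2*M),
          ((m:ℝ)^3)⁻¹ * ((A.filter fun x => Hn x ≤ m).card : ℝ) := h
    _ ≤ 2^3 * ∑ m ∈ Finset.Icc 1 (2*M), (27:ℝ) := by
        apply mul_le_mul_of_nonneg_left (Finset.sum_le_sum hterm) (by norm_num)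
    _ ≤ 432 * M := by
        rw [Finset.sum_const, Nat.card_Icc, nsmul_eq_mul]
        have : ((2*M+1-1 : ℕ):ℝ) = 2*M := by push_cast [Nat.add_sub_cancel]; ring
        rw [this]
        ring_nf
        nlinarith [Nat.cast_nonneg (α := ℝ) M]

lemma harmonic_bound (K : ℕ) : ∑ m ∈ Finset.Icc 1 K, ((m:ℝ))⁻¹ ≤ 1 + Real.log K := by
  have h1 : ∑ m ∈ Finset.Icc 1 K, ((m:ℝ))⁻¹ = ((harmonic K : ℚ) : ℝ) := by
    rw [harmonic_eq_sum_Icc]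
    push_cast
    rfl
  rw [h1]
  exact harmonic_le_one_add_log K

lemma inv_sq_bound (K : ℕ) : ∑ m ∈ Finset.Icc 1 K, ((m:ℝ)^2)⁻¹ ≤ 2 := by
  have h : Finset.Icc 1 K = Finset.Ioo 0 (K+1) := by
    ext m
    simp only [Finset.mem_Icc, Finset.mem_Ioo]
    omega
  rw [h]
  have := sum_Ioo_inv_sq_le (α := ℝ) 0 (K+1)
  simpa using this

lemma sum_inv_cube_free (A : Finset V) (M : ℕ) (hA : ∀ x ∈ A, x ≠ 0 ∧ Hn x ≤ M) :
    ∑ x ∈ A, ((Hn x : ℝ)^3)⁻¹ ≤ 432 * (1 + Real.log (2*M)) := by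
  have h := sum_inv_le_swap A M 2 hA
  have hterm : ∀ m ∈ Finset.Icc 1 (2*M),
      ((m:ℝ)^4)⁻¹ * ((A.filter fun x => Hn x ≤ m).card : ℝ) ≤ 27 * ((m:ℝ))⁻¹ := by
    intro m hm
    rw [Finset.mem_Icc] at hm
    have hmpos : (0:ℝ) < (m:ℝ) := by exact_mod_cast hm.1
    have hcard : ((A.filter fun x => Hn x ≤ m).card : ℝ) ≤ (3*(m:ℝ))^3 := by
      have hsub : (A.filter fun x => Hn x ≤ m) ⊆ vbox m := by
        intro x hx
        rw [Finset.mem_filter] at hx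
        exact mem_vbox.mpr hx.2
      have h2 := Finset.card_le_card hsub
      rw [card_vbox] at h2
      calc ((A.filter fun x => Hn x ≤ m).card : ℝ) ≤ (((2*m+1)^3 : ℕ) : ℝ) := by exact_mod_cast h2
        _ ≤ (3*(m:ℝ))^3 := by
            push_cast
            apply pow_le_pow_left₀ (by positivity)
            have hm1 : (1:ℝ) ≤ (m:ℝ) := by exact_mod_cast hm.1
            linarith
    calc ((m:ℝ)^4)⁻¹ * ((A.filter fun x => Hn x ≤ m).card : ℝ)
        ≤ ((m:ℝ)^4)⁻¹ * (3*(m:ℝ))^3 := mul_le_mul_of_nonneg_left hcard (by positivity)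
      _ = 27 * ((m:ℝ))⁻¹ := by field_simp; ring
  calc ∑ x ∈ A, ((Hn x : ℝ)^3)⁻¹
      ≤ 2^4 * ∑ m ∈ Finset.Icc 1 (2*M),
          ((m:ℝ)^4)⁻¹ * ((A.filter fun x => Hn x ≤ m).card : ℝ) := h
    _ ≤ 2^4 * ∑ m ∈ Finset.Icc 1 (2*M), 27 * ((m:ℝ))⁻¹ := by
        apply mul_le_mul_of_nonneg_left (Finset.sum_le_sum hterm) (by norm_num)
    _ = 432 * ∑ m ∈ Finset.Icc 1 (2*M), ((m:ℝ))⁻¹ := by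
        rw [← Finset.mul_sum]
        ring
    _ ≤ 432 * (1 + Real.log (2*M)) := by
        apply mul_le_mul_of_nonneg_left _ (by norm_num)
        have := harmonic_bound (2*M)
        have hc : ((2*M : ℕ):ℝ) = 2*(M:ℝ) := by push_cast; ring
        rw [hc] at this
        exact this

lemma sum_inv_cube_surface (A : Finset V) (M : ℕ) {p : MvPolynomial (Fin 3) ℚ} (hp : p ≠ 0)
    (hA : ∀ x ∈ A, x ≠ 0 ∧ Hn x ≤ M ∧ eval (fun i => (x i : ℚ)) p = 0) :
    ∑ x ∈ A, ((Hn x : ℝ)^3)⁻¹ ≤ 288 * (p.totalDegree + 1) := by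
  have h := sum_inv_le_swap A M 2 (fun x hx => ⟨(hA x hx).1, (hA x hx).2.1⟩)
  have hterm : ∀ m ∈ Finset.Icc 1 (2*M),
      ((m:ℝ)^4)⁻¹ * ((A.filter fun x => Hn x ≤ m).card : ℝ)
        ≤ 9 * (p.totalDegree : ℝ) * ((m:ℝ)^2)⁻¹ := by
    intro m hm
    rw [Finset.mem_Icc] at hm
    have hmpos : (0:ℝ) < (m:ℝ) := by exact_mod_cast hm.1
    have hcard : ((A.filter fun x => Hn x ≤ m).card : ℝ)
        ≤ (p.totalDegree : ℝ) * (3*(m:ℝ))^2 := by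
      have hsub : (A.filter fun x => Hn x ≤ m)
          ⊆ ((vbox m).filter fun x => eval (fun i => (x i : ℚ)) p = 0) := by
        intro x hx
        rw [Finset.mem_filter] at hx ⊢
        exact ⟨mem_vbox.mpr hx.2, (hA x hx.1).2.2⟩
      have h2 := (Finset.card_le_card hsub).trans (sz_box hp m)
      calc ((A.filter fun x => Hn x ≤ m).card : ℝ)
          ≤ ((p.totalDegree * (2*m+1)^2 : ℕ) : ℝ) := by exact_mod_cast h2
        _ ≤ (p.totalDegree : ℝ) * (3*(m:ℝ))^2 := by
            push_cast
            apply mul_le_mul_of_nonneg_left _ (by positivity)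
            apply pow_le_pow_left₀ (by positivity)
            have hm1 : (1:ℝ) ≤ (m:ℝ) := by exact_mod_cast hm.1
            linarith
    calc ((m:ℝ)^4)⁻¹ * ((A.filter fun x => Hn x ≤ m).card : ℝ)
        ≤ ((m:ℝ)^4)⁻¹ * ((p.totalDegree : ℝ) * (3*(m:ℝ))^2) :=
          mul_le_mul_of_nonneg_left hcard (by positivity)
      _ = 9 * (p.totalDegree : ℝ) * ((m:ℝ)^2)⁻¹ := by field_simp; ring
  calc ∑ x ∈ A, ((Hn x : ℝ)^3)⁻¹
      ≤ 2^4 * ∑ m ∈ Finset.Icc 1 (2*M),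
          ((m:ℝ)^4)⁻¹ * ((A.filter fun x => Hn x ≤ m).card : ℝ) := h
    _ ≤ 2^4 * ∑ m ∈ Finset.Icc 1 (2*M), 9 * (p.totalDegree : ℝ) * ((m:ℝ)^2)⁻¹ := by
        apply mul_le_mul_of_nonneg_left (Finset.sum_le_sum hterm) (by norm_num)
    _ = 144 * (p.totalDegree : ℝ) * ∑ m ∈ Finset.Icc 1 (2*M), ((m:ℝ)^2)⁻¹ := by
        rw [← Finset.mul_sum]
        ring
    _ ≤ 144 * (p.totalDegree : ℝ) * 2 := by
        apply mul_le_mul_of_nonneg_left (inv_sq_bound (2*M)) (by positivity)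
    _ ≤ 288 * (p.totalDegree + 1) := by nlinarith [Nat.cast_nonneg (α := ℝ) p.totalDegree]

def evalT {n : ℕ} (y : Fin n → V) : (Fin n × Fin 3) → ℚ := fun q => ((y q.1 q.2 : ℤ) : ℚ)

def Pr {n : ℕ} (y : Fin n → V) : ℕ := ∏ j, Hn (y j) ^ 3

def nzbox (M : ℕ) : Finset V := (vbox M).filter (· ≠ 0)

lemma mem_nzbox {M : ℕ} {x : V} : x ∈ nzbox M ↔ Hn x ≤ M ∧ x ≠ 0 := by
  simp [nzbox, mem_vbox]

def Tup (n M : ℕ) : Finset (Fin n → V) := Fintype.piFinset fun _ => nzbox M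

open scoped Classical in
def sols' (n : ℕ) (B : ℝ) : Finset (Fin n → V) :=
  (Tup n ⌊B⌋₊).filter fun y => (Pr y : ℝ) ≤ B

lemma mem_sols' {n : ℕ} {B : ℝ} {y : Fin n → V} :
    y ∈ sols' n B ↔ (∀ j, Hn (y j) ≤ ⌊B⌋₊ ∧ y j ≠ 0) ∧ (Pr y : ℝ) ≤ B := by
  simp [sols', Tup, Fintype.mem_piFinset, mem_nzbox]

lemma Pr_pos {n : ℕ} {y : Fin n → V} (hy : ∀ j, y j ≠ 0) : 1 ≤ Pr y := by
  apply Finset.one_le_prod'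
  intro j _
  exact Nat.one_le_pow _ _ (one_le_Hn (hy j))

lemma Pr_snoc {n : ℕ} (y : Fin n → V) (x : V) :
    Pr (Fin.snoc y x) = Pr y * Hn x ^ 3 := by
  unfold Pr
  rw [Fin.prod_univ_castSucc]
  simp [Fin.snoc_castSucc, Fin.snoc_last]

def eqv (n : ℕ) : (Fin 3 ⊕ (Fin n × Fin 3)) ≃ (Fin (n+1) × Fin 3) where
  toFun := Sum.elim (fun i => (Fin.last n, i)) (fun q => (q.1.castSucc, q.2))
  invFun := fun q => if h : q.1 = Fin.last n then Sum.inl q.2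
    else Sum.inr (q.1.castPred h, q.2)
  left_inv := by
    rintro (i | ⟨j, i⟩)
    · simp
    · have hne : (Fin.castSucc j) ≠ Fin.last n := (Fin.castSucc_lt_last j).ne
      simp [hne]
  right_inv := by
    rintro ⟨j, i⟩
    by_cases h : j = Fin.last n
    · subst h; simp
    · simp [h, Fin.castSucc_castPred]

def splitE (n : ℕ) : MvPolynomial (Fin (n+1) × Fin 3) ℚ ≃ₐ[ℚ]
    MvPolynomial (Fin 3) (MvPolynomial (Fin n × Fin 3) ℚ) :=
  (renameEquiv ℚ (eqv n).symm).trans (sumAlgEquiv ℚ (Fin 3) (Fin n × Fin 3))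

lemma splitE_ne_zero {n : ℕ} {g : MvPolynomial (Fin (n+1) × Fin 3) ℚ} (hg : g ≠ 0) :
    splitE n g ≠ 0 := by
  intro h
  exact hg ((splitE n).injective (h.trans (map_zero _).symm))

lemma eval_sumAlgEquiv {σ τ : Type*} (p : MvPolynomial (σ ⊕ τ) ℚ) (a : σ → ℚ) (b : τ → ℚ) :
    eval (Sum.elim a b) p
      = eval a (MvPolynomial.map (eval b : MvPolynomial τ ℚ →+* ℚ) (sumAlgEquiv ℚ σ τ p)) := by
  induction p using MvPolynomial.induction_on with
  | C c => simp
  | add p q hp hq => simp only [map_add, hp, hq]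
  | mul_X p s hp =>
    cases s with
    | inl s => simp only [map_mul, hp, sumAlgEquiv_X_inl, sumToIter_Xl, MvPolynomial.map_X,
        eval_mul, eval_X, Sum.elim_inl]
    | inr t => simp only [map_mul, hp, sumAlgEquiv_X_inr, sumToIter_Xr, MvPolynomial.map_C,
        eval_mul, eval_C, eval_X, Sum.elim_inr]

lemma eval_snoc_split {n : ℕ} (g : MvPolynomial (Fin (n+1) × Fin 3) ℚ) (y : Fin n → V) (x : V) :
    eval (evalT (Fin.snoc y x)) g
      = eval (fun i => ((x i : ℤ) : ℚ))
          (MvPolynomial.map (eval (evalT y) : MvPolynomial (Fin n × Fin 3) ℚ →+* ℚ)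
            (splitE n g)) := by
  have hg : g = rename (eqv n) (rename (eqv n).symm g) := by
    rw [rename_rename, Equiv.self_comp_symm, rename_id, AlgHom.id_apply]
  conv_lhs => rw [hg]
  rw [eval_rename]
  have harg : (evalT (Fin.snoc y x)) ∘ (eqv n) = Sum.elim (fun i => ((x i : ℤ):ℚ)) (evalT y) := by
    funext s
    rcases s with i | ⟨j, i⟩
    · simp only [Function.comp_apply, Sum.elim_inl]
      show evalT (Fin.snoc y x) (Fin.last n, i) = _
      simp [evalT, Fin.snoc_last]
    · simp only [Function.comp_apply, Sum.elim_inr]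
      show evalT (Fin.snoc y x) ((Fin.castSucc j), i) = _
      simp [evalT, Fin.snoc_castSucc]
  rw [harg, eval_sumAlgEquiv]
  rfl

open scoped Classical in
def solsQ (n : ℕ) (B : ℝ) (Q : (Fin n → V) → Prop) : Finset (Fin n → V) :=
  (sols' n B).filter Q

open scoped Classical in
def Xfin {n : ℕ} (B : ℝ) (Q : (Fin (n+1) → V) → Prop) (y : Fin n → V) : Finset V :=
  (nzbox ⌊B⌋₊).filter (fun x => ((Pr y * Hn x ^ 3 : ℕ) : ℝ) ≤ B ∧ Q (Fin.snoc y x))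

open scoped Classical in
lemma mem_solsQ {n : ℕ} {B : ℝ} {Q : (Fin n → V) → Prop} {y : Fin n → V} :
    y ∈ solsQ n B Q ↔ y ∈ sols' n B ∧ Q y := Finset.mem_filter

open scoped Classical in
lemma mem_Xfin {n : ℕ} {B : ℝ} {Q : (Fin (n+1) → V) → Prop} {y : Fin n → V} {x : V} :
    x ∈ Xfin B Q y ↔ x ∈ nzbox ⌊B⌋₊ ∧ (((Pr y * Hn x ^ 3 : ℕ) : ℝ) ≤ B ∧ Q (Fin.snoc y x)) :=
  Finset.mem_filter

open scoped Classical in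
lemma sum_peel {n : ℕ} (B : ℝ) (Q : (Fin (n+1) → V) → Prop) (f : (Fin (n+1) → V) → ℝ) :
    ∑ z ∈ solsQ (n+1) B Q, f z
      = ∑ y ∈ sols' n B, ∑ x ∈ Xfin B Q y, f (Fin.snoc y x) := by
  unfold solsQ Xfin
  rw [Finset.sum_sigma']
  refine Finset.sum_nbij' (fun z => ⟨Fin.init z, z (Fin.last n)⟩)
    (fun p => Fin.snoc p.1 p.2) ?_ ?_ ?_ ?_ ?_
  · intro z hz
    rw [Finset.mem_filter] at hz
    obtain ⟨hz1, hz2⟩ := hz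
    rw [mem_sols'] at hz1
    obtain ⟨hblocks, hPr⟩ := hz1
    have hPrz : Pr z = Pr (Fin.init z) * Hn (z (Fin.last n)) ^ 3 := by
      conv_lhs => rw [← Fin.snoc_init_self z]
      rw [Pr_snoc]
    rw [Finset.mem_sigma]
    refine ⟨?_, ?_⟩
    · rw [mem_sols']
      refine ⟨fun j => hblocks j.castSucc, ?_⟩
      have h1 : Pr (Fin.init z) ≤ Pr z := by
        rw [hPrz]
        exact Nat.le_mul_of_pos_right _ (Nat.pow_pos (one_le_Hn (hblocks _).2))
      calc (Pr (Fin.init z) : ℝ) ≤ (Pr z : ℝ) := by exact_mod_cast h1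
        _ ≤ B := hPr
    · rw [Finset.mem_filter, mem_nzbox]
      refine ⟨⟨(hblocks _).1, (hblocks _).2⟩, ?_, ?_⟩
      · rw [← hPrz]; exact hPr
      · rwa [Fin.snoc_init_self]
  · intro p hp
    rw [Finset.mem_sigma] at hp
    obtain ⟨hy, hx⟩ := hp
    rw [mem_sols'] at hy
    rw [Finset.mem_filter, mem_nzbox] at hx
    obtain ⟨⟨hxH, hx0⟩, hxPr, hxQ⟩ := hx
    rw [Finset.mem_filter, mem_sols']
    refine ⟨⟨fun j => ?_, ?_⟩, hxQ⟩
    · refine Fin.lastCases ?_ ?_ j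
      · simp only [Fin.snoc_last]; exact ⟨hxH, hx0⟩
      · intro k
        simp only [Fin.snoc_castSucc]
        exact hy.1 k
    · simp only [Pr_snoc]
      exact_mod_cast hxPr
  · intro z _
    exact Fin.snoc_init_self z
  · intro p _
    simp
  · intro z _
    rw [Fin.snoc_init_self]

lemma sum_prod_free (n : ℕ) (B : ℝ) (w : V → ℝ) (hw : ∀ x, 0 ≤ w x) :
    ∑ y ∈ sols' n B, ∏ j, w (y j) ≤ (∑ x ∈ nzbox ⌊B⌋₊, w x) ^ n := by
  classical
  calc ∑ y ∈ sols' n B, ∏ j, w (y j)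
      ≤ ∑ y ∈ Tup n ⌊B⌋₊, ∏ j, w (y j) := by
        apply Finset.sum_le_sum_of_subset_of_nonneg (Finset.filter_subset _ _)
        intro y _ _
        exact Finset.prod_nonneg fun j _ => hw _
    _ = ∏ _j : Fin n, ∑ x ∈ nzbox ⌊B⌋₊, w x := (Finset.prod_univ_sum _ _).symm
    _ = (∑ x ∈ nzbox ⌊B⌋₊, w x) ^ n := by
        rw [Finset.prod_const, Finset.card_univ, Fintype.card_fin]

lemma totalDegree_map_le2 {σ : Type*} {R S : Type*} [CommSemiring R] [CommSemiring S]
    (f : R →+* S) (p : MvPolynomial σ R) :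
    (MvPolynomial.map f p).totalDegree ≤ p.totalDegree :=
  Finset.sup_mono (MvPolynomial.support_map_subset _ _)

lemma floor_pos_of_two_le {B : ℝ} (hB : 2 ≤ B) : 1 ≤ ⌊B⌋₊ :=
  Nat.le_floor (by exact_mod_cast (by linarith : (1:ℝ) ≤ B))

lemma cube_sum_le {B : ℝ} (hB : 2 ≤ B) (A : Finset V)
    (hA : ∀ x ∈ A, x ≠ 0 ∧ Hn x ≤ ⌊B⌋₊) :
    ∑ x ∈ A, ((Hn x : ℝ)^3)⁻¹ ≤ 864 * (1 + Real.log B) := by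
  have h := sum_inv_cube_free A ⌊B⌋₊ hA
  have hM1 : 1 ≤ ⌊B⌋₊ := floor_pos_of_two_le hB
  have hMR : (1:ℝ) ≤ (⌊B⌋₊ : ℝ) := by exact_mod_cast hM1
  have hBpos : (0:ℝ) < B := by linarith
  have hlogB : 0 ≤ Real.log B := Real.log_nonneg (by linarith)
  have hlog : Real.log (2*(⌊B⌋₊:ℝ)) ≤ 1 + Real.log B := by
    have h2 : (0:ℝ) < 2*(⌊B⌋₊:ℝ) := by linarith
    have hle : 2*(⌊B⌋₊:ℝ) ≤ 2*B := by
      have := Nat.floor_le (le_of_lt hBpos)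
      linarith
    calc Real.log (2*(⌊B⌋₊:ℝ)) ≤ Real.log (2*B) := Real.log_le_log h2 hle
      _ = Real.log 2 + Real.log B := Real.log_mul (by norm_num) (by linarith)
      _ ≤ 1 + Real.log B := by
          have h3 : Real.log 2 < 1 := by
            have := Real.log_two_lt_d9
            linarith
          linarith
  calc ∑ x ∈ A, ((Hn x : ℝ)^3)⁻¹ ≤ 432 * (1 + Real.log (2*(⌊B⌋₊:ℝ))) := h
    _ ≤ 432 * (1 + (1 + Real.log B)) := by linarith
    _ ≤ 864 * (1 + Real.log B) := by linarith

def solsP (n : ℕ) (g : MvPolynomial (Fin n × Fin 3) ℚ) (B : ℝ) : Finset (Fin n → V) :=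
  solsQ n B (fun y => eval (evalT y) g = 0)

lemma mem_solsP {n : ℕ} {g : MvPolynomial (Fin n × Fin 3) ℚ} {B : ℝ} {y : Fin n → V} :
    y ∈ solsP n g B ↔ y ∈ sols' n B ∧ eval (evalT y) g = 0 := mem_solsQ

lemma sum_BdivPr_le {n : ℕ} {B : ℝ} (hB : 2 ≤ B) :
    ∑ y ∈ sols' n B, B / (Pr y : ℝ) ≤ B * (864 * (1 + Real.log B)) ^ n := by
  have hBpos : (0:ℝ) < B := by linarith
  set w : V → ℝ := fun x => ((Hn x : ℝ)^3)⁻¹ with hw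
  have hwpos : ∀ x, 0 ≤ w x := fun x => by positivity
  have hBP : ∀ y : Fin n → V, B / (Pr y : ℝ) = B * ∏ j, w (y j) := by
    intro y
    rw [div_eq_mul_inv]
    congr 1
    simp only [Pr, hw]
    push_cast
    rw [← Finset.prod_inv_distrib]
  calc ∑ y ∈ sols' n B, B / (Pr y : ℝ)
      = B * ∑ y ∈ sols' n B, ∏ j, w (y j) := by
        rw [Finset.mul_sum]
        exact Finset.sum_congr rfl fun y _ => hBP y
    _ ≤ B * (∑ x ∈ nzbox ⌊B⌋₊, w x) ^ n := by
        apply mul_le_mul_of_nonneg_left _ (le_of_lt hBpos)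
        exact_mod_cast sum_prod_free n B w hwpos
    _ ≤ B * (864 * (1 + Real.log B)) ^ n := by
        apply mul_le_mul_of_nonneg_left _ (le_of_lt hBpos)
        apply pow_le_pow_left₀ (Finset.sum_nonneg fun x _ => hwpos x)
        apply cube_sum_le hB
        intro x hx
        rw [mem_nzbox] at hx
        exact ⟨hx.2, hx.1⟩

lemma W_lemma (n : ℕ) : ∀ (g : MvPolynomial (Fin n × Fin 3) ℚ), g ≠ 0 → ∃ C : ℝ, 0 < C ∧
    ∀ B : ℝ, 2 ≤ B →
      ∑ z ∈ solsP n g B, (B / (Pr z : ℝ)) ≤ C * B * (1 + Real.log B) ^ ((n : ℝ) - 1) := by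
  induction n with
  | zero =>
    intro g hg
    refine ⟨1, one_pos, fun B hB => ?_⟩
    haveI : IsEmpty (Fin 0 × Fin 3) := ⟨fun q => q.1.elim0⟩
    have hempty : solsP 0 g B = ∅ := by
      rw [Finset.eq_empty_iff_forall_notMem]
      intro y hy
      exact eval_ne_zero_of_isEmpty hg (evalT y) (mem_solsP.mp hy).2
    rw [hempty, Finset.sum_empty]
    have hBpos : (0:ℝ) < B := by linarith
    have hL : (0:ℝ) < 1 + Real.log B := by
      have := Real.log_nonneg (by linarith : (1:ℝ) ≤ B)
      linarith
    positivity
  | succ n ih =>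
    intro g hg
    classical
    set q := splitE n g with hqdef
    have hq0 : q ≠ 0 := splitE_ne_zero hg
    obtain ⟨μ0, hμ0⟩ := MvPolynomial.ne_zero_iff.mp hq0
    obtain ⟨C', hC'pos, hC'⟩ := ih (MvPolynomial.coeff μ0 q) hμ0
    set D : ℕ := q.totalDegree with hD
    refine ⟨288*(D+1) * 864^n + 864 * C', by positivity, ?_⟩
    intro B hB
    have hBpos : (0:ℝ) < B := by linarith
    have hlogB : 0 ≤ Real.log B := Real.log_nonneg (by linarith)
    set L : ℝ := 1 + Real.log B with hLdef
    have hL1 : (1:ℝ) ≤ L := by simp [hLdef]; linarith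
    have hLpos : (0:ℝ) < L := by linarith
    set M := ⌊B⌋₊ with hM
    -- the inner sets
    set Xset : (Fin n → V) → Finset V :=
      fun y => Xfin B (fun z => eval (evalT z) g = 0) y with hXset
    have hpeel : ∑ z ∈ solsP (n+1) g B, (B / (Pr z : ℝ))
        = ∑ y ∈ sols' n B, ∑ x ∈ Xset y, (B / (Pr (Fin.snoc y x) : ℝ)) :=
      sum_peel B (fun z => eval (evalT z) g = 0) (fun z => B / (Pr z : ℝ))
    have hpoint : ∀ (y : Fin n → V) (x : V),
        B / ((Pr (Fin.snoc y x) : ℕ):ℝ) = (B / (Pr y:ℝ)) * ((Hn x:ℝ)^3)⁻¹ := by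
      intro y x
      rw [Pr_snoc]
      push_cast
      ring
    have hinner : ∀ y : Fin n → V, ∑ x ∈ Xset y, (B / (Pr (Fin.snoc y x) : ℝ))
        = (B / (Pr y:ℝ)) * ∑ x ∈ Xset y, ((Hn x:ℝ)^3)⁻¹ := by
      intro y
      rw [Finset.mul_sum]
      exact Finset.sum_congr rfl fun x _ => hpoint y x
    -- nonnegativity of terms
    have hBP_nonneg : ∀ y : Fin n → V, 0 ≤ B / (Pr y : ℝ) := by
      intro y
      apply div_nonneg (le_of_lt hBpos) (Nat.cast_nonneg _)
    have hS_nonneg : ∀ y : Fin n → V, 0 ≤ ∑ x ∈ Xset y, ((Hn x:ℝ)^3)⁻¹ := by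
      intro y
      apply Finset.sum_nonneg
      intro x _
      positivity
    -- split into good and bad
    set pbad : (Fin n → V) → Prop := fun y =>
      MvPolynomial.map (eval (evalT y) : MvPolynomial (Fin n × Fin 3) ℚ →+* ℚ) q = 0 with hpbad
    have hsplit : ∑ y ∈ sols' n B, (B / (Pr y:ℝ)) * ∑ x ∈ Xset y, ((Hn x:ℝ)^3)⁻¹
        = (∑ y ∈ (sols' n B).filter pbad, (B / (Pr y:ℝ)) * ∑ x ∈ Xset y, ((Hn x:ℝ)^3)⁻¹)
          + ∑ y ∈ (sols' n B).filter (fun y => ¬ pbad y),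
              (B / (Pr y:ℝ)) * ∑ x ∈ Xset y, ((Hn x:ℝ)^3)⁻¹ :=
      (Finset.sum_filter_add_sum_filter_not _ _ _).symm
    -- good part
    have hgood : ∑ y ∈ (sols' n B).filter (fun y => ¬ pbad y),
        (B / (Pr y:ℝ)) * ∑ x ∈ Xset y, ((Hn x:ℝ)^3)⁻¹
        ≤ 288*((D:ℝ)+1) * (B * (864 * L)^n) := by
      have hptwise : ∀ y ∈ (sols' n B).filter (fun y => ¬ pbad y),
          (B / (Pr y:ℝ)) * ∑ x ∈ Xset y, ((Hn x:ℝ)^3)⁻¹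
            ≤ (B / (Pr y:ℝ)) * (288*((D:ℝ)+1)) := by
        intro y hy
        rw [Finset.mem_filter] at hy
        apply mul_le_mul_of_nonneg_left _ (hBP_nonneg y)
        have hpy : MvPolynomial.map (eval (evalT y) : MvPolynomial (Fin n × Fin 3) ℚ →+* ℚ) q
            ≠ 0 := hy.2
        have hsurf := sum_inv_cube_surface (Xset y) M hpy ?_
        · refine hsurf.trans ?_
          have hdle : ((MvPolynomial.map (eval (evalT y) :
              MvPolynomial (Fin n × Fin 3) ℚ →+* ℚ) q).totalDegree : ℝ) ≤ (D:ℝ) := by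
            exact_mod_cast totalDegree_map_le2 _ q
          linarith
        · intro x hx
          rw [hXset] at hx
          rw [mem_Xfin, mem_nzbox] at hx
          refine ⟨hx.1.2, hx.1.1, ?_⟩
          have := hx.2.2
          rwa [eval_snoc_split] at this
      calc ∑ y ∈ (sols' n B).filter (fun y => ¬ pbad y),
            (B / (Pr y:ℝ)) * ∑ x ∈ Xset y, ((Hn x:ℝ)^3)⁻¹
          ≤ ∑ y ∈ (sols' n B).filter (fun y => ¬ pbad y),
              (B / (Pr y:ℝ)) * (288*((D:ℝ)+1)) := Finset.sum_le_sum hptwise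
        _ ≤ ∑ y ∈ sols' n B, (B / (Pr y:ℝ)) * (288*((D:ℝ)+1)) := by
            apply Finset.sum_le_sum_of_subset_of_nonneg (Finset.filter_subset _ _)
            intro y _ _
            have := hBP_nonneg y
            positivity
        _ = 288*((D:ℝ)+1) * ∑ y ∈ sols' n B, (B / (Pr y:ℝ)) := by
            rw [Finset.mul_sum]
            exact Finset.sum_congr rfl fun y _ => by ring
        _ ≤ 288*((D:ℝ)+1) * (B * (864 * L)^n) := by
            apply mul_le_mul_of_nonneg_left _ (by positivity)
            exact sum_BdivPr_le hB
    -- bad part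
    have hbad : ∑ y ∈ (sols' n B).filter pbad,
        (B / (Pr y:ℝ)) * ∑ x ∈ Xset y, ((Hn x:ℝ)^3)⁻¹
        ≤ (864 * L) * (C' * B * L ^ ((n:ℝ) - 1)) := by
      have hptwise : ∀ y ∈ (sols' n B).filter pbad,
          (B / (Pr y:ℝ)) * ∑ x ∈ Xset y, ((Hn x:ℝ)^3)⁻¹
            ≤ (864 * L) * (B / (Pr y:ℝ)) := by
        intro y hy
        rw [mul_comm (864 * L)]
        apply mul_le_mul_of_nonneg_left _ (hBP_nonneg y)
        apply cube_sum_le hB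
        intro x hx
        rw [hXset] at hx
        rw [mem_Xfin, mem_nzbox] at hx
        exact ⟨hx.1.2, hx.1.1⟩
      have hsubset : (sols' n B).filter pbad ⊆ solsP n (MvPolynomial.coeff μ0 q) B := by
        intro y hy
        rw [Finset.mem_filter] at hy
        rw [mem_solsP]
        refine ⟨hy.1, ?_⟩
        have : MvPolynomial.coeff μ0 (MvPolynomial.map
            (eval (evalT y) : MvPolynomial (Fin n × Fin 3) ℚ →+* ℚ) q) = 0 := by
          rw [hy.2]
          simp
        rwa [MvPolynomial.coeff_map] at this
      calc ∑ y ∈ (sols' n B).filter pbad,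
            (B / (Pr y:ℝ)) * ∑ x ∈ Xset y, ((Hn x:ℝ)^3)⁻¹
          ≤ ∑ y ∈ (sols' n B).filter pbad, (864 * L) * (B / (Pr y:ℝ)) :=
            Finset.sum_le_sum hptwise
        _ = (864 * L) * ∑ y ∈ (sols' n B).filter pbad, (B / (Pr y:ℝ)) := by
            rw [Finset.mul_sum]
        _ ≤ (864 * L) * ∑ y ∈ solsP n (MvPolynomial.coeff μ0 q) B, (B / (Pr y:ℝ)) := by
            apply mul_le_mul_of_nonneg_left _ (by positivity)
            exact Finset.sum_le_sum_of_subset_of_nonneg hsubset fun y _ _ => hBP_nonneg y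
        _ ≤ (864 * L) * (C' * B * L ^ ((n:ℝ) - 1)) := by
            apply mul_le_mul_of_nonneg_left (hC' B hB) (by positivity)
    -- combine
    have hLn : (L:ℝ) ^ (n:ℕ) = L ^ ((n:ℝ)) := (Real.rpow_natCast L n).symm
    have hLsum : L * L ^ ((n:ℝ) - 1) = L ^ ((n:ℝ)) := by
      have hr : (1:ℝ) + ((n:ℝ) - 1) = (n:ℝ) := by ring
      calc L * L ^ ((n:ℝ)-1) = L^(1:ℝ) * L^((n:ℝ)-1) := by rw [Real.rpow_one]
        _ = L ^ ((1:ℝ) + ((n:ℝ)-1)) := (Real.rpow_add hLpos _ _).symm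
        _ = L ^ ((n:ℝ)) := by rw [hr]
    have hexp : ((n+1 : ℕ) : ℝ) - 1 = (n:ℝ) := by push_cast; ring
    calc ∑ z ∈ solsP (n+1) g B, (B / (Pr z : ℝ))
        = ∑ y ∈ sols' n B, (B / (Pr y:ℝ)) * ∑ x ∈ Xset y, ((Hn x:ℝ)^3)⁻¹ := by
          rw [hpeel]
          exact Finset.sum_congr rfl fun y _ => hinner y
      _ = _ + _ := hsplit
      _ ≤ (864 * L) * (C' * B * L ^ ((n:ℝ) - 1)) + 288*((D:ℝ)+1) * (B * (864 * L)^n) :=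
          add_le_add hbad hgood
      _ = (864 * C') * B * (L * L ^ ((n:ℝ) - 1)) + (288*((D:ℝ)+1) * 864^n) * B * L^(n:ℕ) := by
          rw [mul_pow]
          ring
      _ = (864 * C') * B * L ^ ((n:ℝ)) + (288*((D:ℝ)+1) * 864^n) * B * L ^ ((n:ℝ)) := by
          rw [hLsum, hLn]
      _ = (288*((D:ℝ)+1) * 864^n + 864 * C') * B * L ^ ((n:ℝ)) := by ring
      _ = (288*((D:ℝ)+1) * 864^n + 864 * C') * B * L ^ (((n+1:ℕ):ℝ) - 1) := by rw [hexp]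

lemma rpow_third_cube {a : ℕ} : ((a:ℝ)^(3:ℕ)) ^ ((3:ℝ)⁻¹) = (a:ℝ) := by
  rw [← Real.rpow_natCast ((a:ℝ)) 3, ← Real.rpow_mul (Nat.cast_nonneg a)]
  norm_num

lemma rpow_third_cube' {P : ℝ} (hP : 0 ≤ P) : (P ^ ((3:ℝ)⁻¹))^(3:ℕ) = P := by
  rw [← Real.rpow_natCast (P ^ ((3:ℝ)⁻¹)) 3, ← Real.rpow_mul hP]
  norm_num

lemma Hn_le_cuberoot {n : ℕ} {B : ℝ} {y : Fin n → V} {x : V} (hPr1 : 1 ≤ Pr y)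
    (hc : ((Pr y * Hn x ^ 3 : ℕ) : ℝ) ≤ B) :
    (Hn x : ℝ) ≤ (B / (Pr y : ℝ)) ^ ((3:ℝ)⁻¹) := by
  have hPrpos : (0:ℝ) < (Pr y : ℝ) := by exact_mod_cast hPr1
  have h1 : ((Hn x:ℝ))^(3:ℕ) ≤ B / (Pr y : ℝ) := by
    rw [le_div_iff₀ hPrpos]
    push_cast at hc
    linarith
  calc (Hn x : ℝ) = (((Hn x:ℝ))^(3:ℕ)) ^ ((3:ℝ)⁻¹) := rpow_third_cube.symm
    _ ≤ (B / (Pr y : ℝ)) ^ ((3:ℝ)⁻¹) :=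
        Real.rpow_le_rpow (by positivity) h1 (by norm_num)

lemma Pr_rpow_third {n : ℕ} (y : Fin n → V) :
    ((Pr y : ℝ)) ^ ((3:ℝ)⁻¹) = ∏ j, (Hn (y j) : ℝ) := by
  have h1 : (Pr y : ℝ) = (∏ j, (Hn (y j) : ℝ))^(3:ℕ) := by
    simp only [Pr]
    push_cast
    rw [Finset.prod_pow]
  rw [h1, ← Real.rpow_natCast (∏ j, (Hn (y j) : ℝ)) 3, ← Real.rpow_mul
    (Finset.prod_nonneg fun j _ => Nat.cast_nonneg _)]
  norm_num

lemma S_lemma (n : ℕ) (B : ℝ) (hB : 2 ≤ B) :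
    ∑ y ∈ sols' (n+1) B, ∏ j, ((Hn (y j) : ℝ)^2)⁻¹
      ≤ 432 * B ^ ((3:ℝ)⁻¹) * (864 * (1 + Real.log B)) ^ n := by
  classical
  have hBpos : (0:ℝ) < B := by linarith
  have hQ : solsQ (n+1) B (fun _ => True) = sols' (n+1) B := by
    ext z
    rw [mem_solsQ]
    simp
  have hprod : ∀ (y : Fin n → V) (x : V),
      (∏ j : Fin (n+1), ((Hn ((Fin.snoc y x : Fin (n+1) → V) j) : ℝ)^2)⁻¹)
        = (∏ j : Fin n, ((Hn (y j) : ℝ)^2)⁻¹) * ((Hn x : ℝ)^2)⁻¹ := by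
    intro y x
    rw [Fin.prod_univ_castSucc]
    simp [Fin.snoc_castSucc, Fin.snoc_last]
  have hpeel := sum_peel B (fun _ : Fin (n+1) → V => True)
    (fun z => ∏ j, ((Hn (z j) : ℝ)^2)⁻¹)
  rw [hQ] at hpeel
  rw [hpeel]
  -- inner bound
  have hinner : ∀ y ∈ sols' n B,
      ∑ x ∈ Xfin B (fun _ => True) y, (∏ j : Fin (n+1), ((Hn ((Fin.snoc y x : Fin (n+1) → V) j) : ℝ)^2)⁻¹)
        ≤ (∏ j : Fin n, ((Hn (y j) : ℝ)^2)⁻¹)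
            * (432 * (B / (Pr y : ℝ)) ^ ((3:ℝ)⁻¹)) := by
    intro y hy
    have hPr1 : 1 ≤ Pr y := Pr_pos (fun j => (mem_sols'.mp hy).1 j |>.2)
    have hsum : ∑ x ∈ Xfin B (fun _ => True) y, ((Hn x : ℝ)^2)⁻¹
        ≤ 432 * (⌊(B / (Pr y : ℝ)) ^ ((3:ℝ)⁻¹)⌋₊ : ℝ) := by
      have := sum_inv_sq_le (Xfin B (fun _ => True) y) ⌊(B / (Pr y : ℝ)) ^ ((3:ℝ)⁻¹)⌋₊ ?_
      · exact_mod_cast this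
      · intro x hx
        rw [mem_Xfin, mem_nzbox] at hx
        refine ⟨hx.1.2, Nat.le_floor (Hn_le_cuberoot hPr1 hx.2.1)⟩
    calc ∑ x ∈ Xfin B (fun _ => True) y, (∏ j : Fin (n+1), ((Hn ((Fin.snoc y x : Fin (n+1) → V) j) : ℝ)^2)⁻¹)
        = (∏ j : Fin n, ((Hn (y j) : ℝ)^2)⁻¹)
            * ∑ x ∈ Xfin B (fun _ => True) y, ((Hn x : ℝ)^2)⁻¹ := by
          rw [Finset.mul_sum]
          exact Finset.sum_congr rfl fun x _ => hprod y x
      _ ≤ (∏ j : Fin n, ((Hn (y j) : ℝ)^2)⁻¹)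
            * (432 * (B / (Pr y : ℝ)) ^ ((3:ℝ)⁻¹)) := by
          apply mul_le_mul_of_nonneg_left _ (Finset.prod_nonneg fun j _ => by positivity)
          refine hsum.trans ?_
          have : (⌊(B / (Pr y : ℝ)) ^ ((3:ℝ)⁻¹)⌋₊ : ℝ) ≤ (B / (Pr y : ℝ)) ^ ((3:ℝ)⁻¹) :=
            Nat.floor_le (by positivity)
          linarith
  -- convert per-y weight
  have hweight : ∀ y ∈ sols' n B,
      (∏ j : Fin n, ((Hn (y j) : ℝ)^2)⁻¹) * (432 * (B / (Pr y : ℝ)) ^ ((3:ℝ)⁻¹))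
        = 432 * B ^ ((3:ℝ)⁻¹) * ∏ j : Fin n, ((Hn (y j) : ℝ)^3)⁻¹ := by
    intro y hy
    have hPr1 : 1 ≤ Pr y := Pr_pos (fun j => (mem_sols'.mp hy).1 j |>.2)
    have hPrnn : (0:ℝ) ≤ (Pr y : ℝ) := Nat.cast_nonneg _
    rw [Real.div_rpow (le_of_lt hBpos) hPrnn, Pr_rpow_third]
    have hsplit3 : (∏ j : Fin n, ((Hn (y j):ℝ)^3)⁻¹)
        = (∏ j : Fin n, ((Hn (y j):ℝ)^2)⁻¹) * ∏ j : Fin n, ((Hn (y j):ℝ))⁻¹ := by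
      rw [← Finset.prod_mul_distrib]
      refine Finset.prod_congr rfl fun j _ => ?_
      rw [← mul_inv, ← pow_succ]
    rw [hsplit3, div_eq_mul_inv, ← Finset.prod_inv_distrib]
    ring
  calc ∑ y ∈ sols' n B, ∑ x ∈ Xfin B (fun _ => True) y,
        (∏ j : Fin (n+1), ((Hn ((Fin.snoc y x : Fin (n+1) → V) j) : ℝ)^2)⁻¹)
      ≤ ∑ y ∈ sols' n B, 432 * B ^ ((3:ℝ)⁻¹) * ∏ j : Fin n, ((Hn (y j) : ℝ)^3)⁻¹ := by
        refine Finset.sum_le_sum fun y hy => ?_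
        exact (hinner y hy).trans (le_of_eq (hweight y hy))
    _ = 432 * B ^ ((3:ℝ)⁻¹) * ∑ y ∈ sols' n B, ∏ j, ((Hn (y j):ℝ)^3)⁻¹ := by
        rw [Finset.mul_sum]
    _ ≤ 432 * B ^ ((3:ℝ)⁻¹) * (∑ x ∈ nzbox ⌊B⌋₊, ((Hn x:ℝ)^3)⁻¹)^n := by
        apply mul_le_mul_of_nonneg_left _ (by positivity)
        exact sum_prod_free n B (fun x => ((Hn x : ℝ)^3)⁻¹) (fun x => by positivity)
    _ ≤ 432 * B ^ ((3:ℝ)⁻¹) * (864*(1+Real.log B))^n := by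
        apply mul_le_mul_of_nonneg_left _ (by positivity)
        apply pow_le_pow_left₀ (Finset.sum_nonneg fun x _ => by positivity)
        apply cube_sum_le hB
        intro x hx
        rw [mem_nzbox] at hx
        exact ⟨hx.2, hx.1⟩

lemma count_main {k : ℕ} (g : MvPolynomial (Fin (k+2) × Fin 3) ℚ) (hg : g ≠ 0) :
    ∃ K : ℝ, 0 < K ∧ ∀ B : ℝ, 2 ≤ B →
      ((solsP (k+2) g B).card : ℝ) ≤ K * B * (1 + Real.log B) ^ (k:ℕ) := by
  classical
  set q := splitE (k+1) g with hqdef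
  have hq0 : q ≠ 0 := splitE_ne_zero hg
  obtain ⟨μ0, hμ0⟩ := MvPolynomial.ne_zero_iff.mp hq0
  obtain ⟨C', hC'pos, hC'⟩ := W_lemma (k+1) (MvPolynomial.coeff μ0 q) hμ0
  set D : ℕ := q.totalDegree with hD
  refine ⟨3888*((D:ℝ)+1) * 864^k + 27 * C', by positivity, ?_⟩
  intro B hB
  have hBpos : (0:ℝ) < B := by linarith
  have hlogB : 0 ≤ Real.log B := Real.log_nonneg (by linarith)
  set L : ℝ := 1 + Real.log B with hLdef
  have hLpos : (0:ℝ) < L := by simp only [hLdef]; linarith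
  set Q : (Fin (k+2) → V) → Prop := fun z => eval (evalT z) g = 0 with hQdef
  have hpeel := sum_peel B Q (fun _ => (1:ℝ))
  have hcard : ((solsP (k+2) g B).card : ℝ)
      = ∑ y ∈ sols' (k+1) B, ((Xfin B Q y).card : ℝ) := by
    have h1 : ∑ z ∈ solsQ (k+2) B Q, (1:ℝ) = ((solsP (k+2) g B).card : ℝ) := by
      rw [Finset.sum_const, nsmul_eq_mul, mul_one]
      rfl
    rw [← h1, hpeel]
    exact Finset.sum_congr rfl fun y _ => by
      rw [Finset.sum_const, nsmul_eq_mul, mul_one]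
  -- per-y data
  set t : (Fin (k+1) → V) → ℝ := fun y => (B / (Pr y : ℝ)) ^ ((3:ℝ)⁻¹) with htdef
  have hyfacts : ∀ y ∈ sols' (k+1) B,
      (0:ℝ) < (Pr y : ℝ) ∧ (1:ℝ) ≤ t y ∧ ((⌊t y⌋₊:ℝ)) ≤ t y ∧ (1:ℕ) ≤ ⌊t y⌋₊
        ∧ Xfin B Q y ⊆ vbox ⌊t y⌋₊ ∧ (t y)^(3:ℕ) = B / (Pr y : ℝ) := by
    intro y hy
    obtain ⟨hbl, hPrB⟩ := mem_sols'.mp hy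
    have hPr1 : 1 ≤ Pr y := Pr_pos (fun j => (hbl j).2)
    have hPrpos : (0:ℝ) < (Pr y : ℝ) := by exact_mod_cast hPr1
    have hdiv1 : (1:ℝ) ≤ B / (Pr y : ℝ) := (one_le_div hPrpos).mpr hPrB
    have ht1 : (1:ℝ) ≤ t y := by
      have := Real.rpow_le_rpow (by norm_num : (0:ℝ) ≤ 1) hdiv1 (by norm_num : (0:ℝ) ≤ (3:ℝ)⁻¹)
      rwa [Real.one_rpow] at this
    have hfl : ((⌊t y⌋₊:ℝ)) ≤ t y := Nat.floor_le (by linarith)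
    have hfl1 : (1:ℕ) ≤ ⌊t y⌋₊ := Nat.le_floor (by exact_mod_cast ht1)
    refine ⟨hPrpos, ht1, hfl, hfl1, ?_, rpow_third_cube' (by positivity)⟩
    intro x hx
    rw [mem_Xfin, mem_nzbox] at hx
    exact mem_vbox.mpr (Nat.le_floor (Hn_le_cuberoot hPr1 hx.2.1))
  -- split good/bad
  set pbad : (Fin (k+1) → V) → Prop := fun y =>
    MvPolynomial.map (eval (evalT y) : MvPolynomial (Fin (k+1) × Fin 3) ℚ →+* ℚ) q = 0
    with hpbad
  have hsplit : ∑ y ∈ sols' (k+1) B, ((Xfin B Q y).card : ℝ)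
      = (∑ y ∈ (sols' (k+1) B).filter pbad, ((Xfin B Q y).card : ℝ))
        + ∑ y ∈ (sols' (k+1) B).filter (fun y => ¬ pbad y), ((Xfin B Q y).card : ℝ) :=
    (Finset.sum_filter_add_sum_filter_not _ _ _).symm
  -- bad bound
  have hbad : ∑ y ∈ (sols' (k+1) B).filter pbad, ((Xfin B Q y).card : ℝ)
      ≤ 27 * (C' * B * L ^ (((k+1:ℕ):ℝ) - 1)) := by
    have hpt : ∀ y ∈ (sols' (k+1) B).filter pbad,
        ((Xfin B Q y).card : ℝ) ≤ 27 * (B / (Pr y : ℝ)) := by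
      intro y hy
      rw [Finset.mem_filter] at hy
      obtain ⟨hPrpos, ht1, hfl, hfl1, hsub, ht3⟩ := hyfacts y hy.1
      have h1 : (Xfin B Q y).card ≤ (2*⌊t y⌋₊+1)^3 := by
        calc (Xfin B Q y).card ≤ (vbox ⌊t y⌋₊).card := Finset.card_le_card hsub
          _ = (2*⌊t y⌋₊+1)^3 := card_vbox _
      calc ((Xfin B Q y).card : ℝ) ≤ ((2*⌊t y⌋₊+1 : ℕ):ℝ)^3 := by exact_mod_cast h1
        _ ≤ (3 * t y)^3 := by
            apply pow_le_pow_left₀ (by positivity)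
            push_cast
            have : (1:ℝ) ≤ (⌊t y⌋₊:ℝ) := by exact_mod_cast hfl1
            linarith
        _ = 27 * (t y)^(3:ℕ) := by ring
        _ = 27 * (B / (Pr y : ℝ)) := by rw [ht3]
    have hsubset : (sols' (k+1) B).filter pbad ⊆ solsP (k+1) (MvPolynomial.coeff μ0 q) B := by
      intro y hy
      rw [Finset.mem_filter] at hy
      rw [mem_solsP]
      refine ⟨hy.1, ?_⟩
      have h0 : MvPolynomial.coeff μ0 (MvPolynomial.map
          (eval (evalT y) : MvPolynomial (Fin (k+1) × Fin 3) ℚ →+* ℚ) q) = 0 := by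
        rw [hy.2]; simp
      rwa [MvPolynomial.coeff_map] at h0
    calc ∑ y ∈ (sols' (k+1) B).filter pbad, ((Xfin B Q y).card : ℝ)
        ≤ ∑ y ∈ (sols' (k+1) B).filter pbad, 27 * (B / (Pr y : ℝ)) := Finset.sum_le_sum hpt
      _ = 27 * ∑ y ∈ (sols' (k+1) B).filter pbad, (B / (Pr y : ℝ)) := by
          rw [Finset.mul_sum]
      _ ≤ 27 * ∑ y ∈ solsP (k+1) (MvPolynomial.coeff μ0 q) B, (B / (Pr y : ℝ)) := by
          apply mul_le_mul_of_nonneg_left _ (by norm_num)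
          apply Finset.sum_le_sum_of_subset_of_nonneg hsubset
          intro y _ _
          positivity
      _ ≤ 27 * (C' * B * L ^ (((k+1:ℕ):ℝ) - 1)) := by
          apply mul_le_mul_of_nonneg_left (hC' B hB) (by norm_num)
  -- good bound
  have hgood : ∑ y ∈ (sols' (k+1) B).filter (fun y => ¬ pbad y), ((Xfin B Q y).card : ℝ)
      ≤ 9 * ((D:ℝ)+1) * (B ^ ((3:ℝ)⁻¹))^(2:ℕ)
          * (432 * B ^ ((3:ℝ)⁻¹) * (864 * L) ^ k) := by
    have hpt : ∀ y ∈ (sols' (k+1) B).filter (fun y => ¬ pbad y),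
        ((Xfin B Q y).card : ℝ)
          ≤ 9 * ((D:ℝ)+1) * ((B ^ ((3:ℝ)⁻¹))^(2:ℕ) * ∏ j, ((Hn (y j):ℝ)^2)⁻¹) := by
      intro y hy
      rw [Finset.mem_filter] at hy
      obtain ⟨hPrpos, ht1, hfl, hfl1, hsub, ht3⟩ := hyfacts y hy.1
      have hpy : MvPolynomial.map (eval (evalT y) : MvPolynomial (Fin (k+1) × Fin 3) ℚ →+* ℚ) q
          ≠ 0 := hy.2
      have hsurf : Xfin B Q y ⊆ (vbox ⌊t y⌋₊).filter
          (fun x => eval (fun i => ((x i : ℤ):ℚ))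
            (MvPolynomial.map (eval (evalT y) : MvPolynomial (Fin (k+1) × Fin 3) ℚ →+* ℚ) q)
              = 0) := by
        intro x hx
        have hx' := hx
        rw [mem_Xfin] at hx'
        rw [Finset.mem_filter]
        refine ⟨hsub hx, ?_⟩
        have := hx'.2.2
        rw [hQdef] at this
        rwa [eval_snoc_split] at this
      have h1 : (Xfin B Q y).card
          ≤ (MvPolynomial.map (eval (evalT y) : MvPolynomial (Fin (k+1) × Fin 3) ℚ →+* ℚ)
              q).totalDegree * (2*⌊t y⌋₊+1)^2 :=
        (Finset.card_le_card hsurf).trans (sz_box hpy _)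
      have h2 : ((Xfin B Q y).card : ℝ) ≤ ((D:ℝ)+1) * (3 * t y)^2 := by
        have hdle : ((MvPolynomial.map (eval (evalT y) :
            MvPolynomial (Fin (k+1) × Fin 3) ℚ →+* ℚ) q).totalDegree : ℝ) ≤ (D:ℝ) :=
          by exact_mod_cast totalDegree_map_le2 _ q
        calc ((Xfin B Q y).card : ℝ)
            ≤ ((MvPolynomial.map (eval (evalT y) :
                MvPolynomial (Fin (k+1) × Fin 3) ℚ →+* ℚ) q).totalDegree : ℝ)
                * ((2*⌊t y⌋₊+1 : ℕ):ℝ)^2 := by exact_mod_cast h1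
          _ ≤ ((D:ℝ)+1) * (3 * t y)^2 := by
              apply mul_le_mul (by linarith) _ (by positivity) (by positivity)
              apply pow_le_pow_left₀ (by positivity)
              push_cast
              have : (1:ℝ) ≤ (⌊t y⌋₊:ℝ) := by exact_mod_cast hfl1
              linarith
      have ht2 : (t y)^(2:ℕ) = (B ^ ((3:ℝ)⁻¹))^(2:ℕ) * ∏ j, ((Hn (y j):ℝ)^2)⁻¹ := by
        have htform : t y = B ^ ((3:ℝ)⁻¹) * (∏ j, (Hn (y j):ℝ))⁻¹ := by
          rw [htdef]
          simp only
          rw [Real.div_rpow (le_of_lt hBpos) (Nat.cast_nonneg _), Pr_rpow_third,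
            div_eq_mul_inv]
        rw [htform, mul_pow, ← Finset.prod_inv_distrib, ← Finset.prod_pow]
        congr 1
        exact Finset.prod_congr rfl fun j _ => by rw [inv_pow]
      calc ((Xfin B Q y).card : ℝ) ≤ ((D:ℝ)+1) * (3 * t y)^2 := h2
        _ = 9 * ((D:ℝ)+1) * (t y)^(2:ℕ) := by ring
        _ = 9 * ((D:ℝ)+1) * ((B ^ ((3:ℝ)⁻¹))^(2:ℕ) * ∏ j, ((Hn (y j):ℝ)^2)⁻¹) := by
            rw [ht2]
    calc ∑ y ∈ (sols' (k+1) B).filter (fun y => ¬ pbad y), ((Xfin B Q y).card : ℝ)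
        ≤ ∑ y ∈ (sols' (k+1) B).filter (fun y => ¬ pbad y),
            9 * ((D:ℝ)+1) * ((B ^ ((3:ℝ)⁻¹))^(2:ℕ) * ∏ j, ((Hn (y j):ℝ)^2)⁻¹) :=
          Finset.sum_le_sum hpt
      _ ≤ ∑ y ∈ sols' (k+1) B,
            9 * ((D:ℝ)+1) * ((B ^ ((3:ℝ)⁻¹))^(2:ℕ) * ∏ j, ((Hn (y j):ℝ)^2)⁻¹) := by
          apply Finset.sum_le_sum_of_subset_of_nonneg (Finset.filter_subset _ _)
          intro y _ _
          have : (0:ℝ) ≤ ∏ j, ((Hn (y j):ℝ)^2)⁻¹ := Finset.prod_nonneg fun j _ => by positivity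
          positivity
      _ = 9 * ((D:ℝ)+1) * (B ^ ((3:ℝ)⁻¹))^(2:ℕ)
            * ∑ y ∈ sols' (k+1) B, ∏ j, ((Hn (y j):ℝ)^2)⁻¹ := by
          rw [Finset.mul_sum]
          refine Finset.sum_congr rfl fun y _ => by ring
      _ ≤ 9 * ((D:ℝ)+1) * (B ^ ((3:ℝ)⁻¹))^(2:ℕ)
            * (432 * B ^ ((3:ℝ)⁻¹) * (864 * L) ^ k) := by
          apply mul_le_mul_of_nonneg_left (S_lemma k B hB) (by positivity)
  -- combine
  have hBcomb : (B ^ ((3:ℝ)⁻¹))^(2:ℕ) * B ^ ((3:ℝ)⁻¹) = B := by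
    rw [← Real.rpow_natCast (B ^ ((3:ℝ)⁻¹)) 2, ← Real.rpow_mul (le_of_lt hBpos),
      ← Real.rpow_add hBpos]
    norm_num
  have hexp : (((k+1:ℕ)):ℝ) - 1 = (k:ℝ) := by push_cast; ring
  have hLk : L ^ ((k:ℝ)) = L ^ (k:ℕ) := Real.rpow_natCast L k
  calc ((solsP (k+2) g B).card : ℝ)
      = _ + _ := by rw [hcard, hsplit]
    _ ≤ 27 * (C' * B * L ^ (((k+1:ℕ):ℝ) - 1))
        + 9 * ((D:ℝ)+1) * (B ^ ((3:ℝ)⁻¹))^(2:ℕ) * (432 * B ^ ((3:ℝ)⁻¹) * (864 * L) ^ k) :=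
        add_le_add hbad hgood
    _ = 27 * C' * B * L ^ (k:ℕ)
        + 3888 * ((D:ℝ)+1) * ((B ^ ((3:ℝ)⁻¹))^(2:ℕ) * B ^ ((3:ℝ)⁻¹)) * (864^k * L ^ (k:ℕ)) := by
        rw [hexp, hLk, mul_pow]
        ring
    _ = (3888*((D:ℝ)+1) * 864^k + 27 * C') * B * L ^ (k:ℕ) := by
        rw [hBcomb]
        ring

lemma Hn_eq (x : V) : Hn x = supNorm x := rfl

lemma ne_zero_of_primitive {x : Fin 3 → ℤ} (h : IsPrimitiveVec x) : x ≠ 0 := by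
  intro h0
  rw [IsPrimitiveVec, h0] at h
  have : Finset.gcd Finset.univ (0 : Fin 3 → ℤ) = 0 :=
    Finset.gcd_eq_zero_iff.mpr fun i _ => rfl
  rw [this] at h
  exact absurd h (by norm_num)

theorem stmt6_aux (n : ℕ) (hn : 2 ≤ n) (g : MvPolynomial (Fin n × Fin 3) ℚ) (hg : g ≠ 0)
    (hhom : ∀ j : Fin n, ∃ dj : ℕ, ∀ m ∈ g.support, ∑ i : Fin 3, m (j, i) = dj) :
    ∃ γ : ℝ, 0 ≤ γ ∧ γ < 1 ∧ ∃ C : ℝ, 0 < C ∧ ∀ B : ℝ, 2 ≤ B →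
      (Nat.card {x : Fin n → Fin 3 → ℤ |
        (∀ j, IsPrimitiveVec (x j)) ∧
        (∏ j, ((supNorm (x j) : ℝ)) ^ 3) ≤ B ∧
        MvPolynomial.eval (fun q : Fin n × Fin 3 => ((x q.1 q.2 : ℚ))) g = 0} : ℝ)
      ≤ C * B * Real.log B ^ ((n : ℝ) - 2 + γ) := by
  obtain ⟨k, rfl⟩ : ∃ k, n = k + 2 := ⟨n - 2, by omega⟩
  obtain ⟨K, hKpos, hK⟩ := count_main g hg
  have hlog2 : (0:ℝ) < Real.log 2 := Real.log_pos (by norm_num)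
  have hC0 : (0:ℝ) < ((Real.log 2) ^ ((2:ℝ)⁻¹))⁻¹ :=
    inv_pos.mpr (Real.rpow_pos_of_pos hlog2 _)
  refine ⟨1/2, by norm_num, by norm_num,
    K * 3^k * ((Real.log 2) ^ ((2:ℝ)⁻¹))⁻¹, by positivity, ?_⟩
  intro B hB
  have hBpos : (0:ℝ) < B := by linarith
  have hlogB2 : Real.log 2 ≤ Real.log B := Real.log_le_log (by norm_num) hB
  have hlogBpos : (0:ℝ) < Real.log B := lt_of_lt_of_le hlog2 hlogB2
  set L : ℝ := 1 + Real.log B with hLdef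
  have hLpos : (0:ℝ) < L := by simp only [hLdef]; linarith
  -- set inclusion
  set s : Set (Fin (k+2) → Fin 3 → ℤ) := {x |
    (∀ j, IsPrimitiveVec (x j)) ∧
    (∏ j, ((supNorm (x j) : ℝ)) ^ 3) ≤ B ∧
    MvPolynomial.eval (fun q : Fin (k+2) × Fin 3 => ((x q.1 q.2 : ℚ))) g = 0} with hs
  have hsub : s ⊆ ↑(solsP (k+2) g B) := by
    intro x hx
    obtain ⟨hprim, hprod, heval⟩ := hx
    have hnz : ∀ j, x j ≠ 0 := fun j => ne_zero_of_primitive (hprim j)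
    have hHn1 : ∀ j, 1 ≤ Hn (x j) := fun j => one_le_Hn (hnz j)
    have hHn1' : ∀ j, (1:ℝ) ≤ (Hn (x j) : ℝ) := fun j => by exact_mod_cast hHn1 j
    have hprod' : (∏ j, ((Hn (x j) : ℝ)) ^ 3) ≤ B := hprod
    have hPrR : ((Pr x : ℕ):ℝ) = ∏ j, ((Hn (x j):ℝ))^3 := by
      simp only [Pr]
      push_cast
      rfl
    have hPrB : ((Pr x : ℕ):ℝ) ≤ B := by rw [hPrR]; exact hprod'
    have hsingle : ∀ j : Fin (k+2), ((Hn (x j) : ℝ)) ^ 3 ≤ B := by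
      intro j
      have hN : Hn (x j)^3 ≤ Pr x :=
        Finset.single_le_prod' (f := fun i => Hn (x i) ^ 3)
          (fun i _ => Nat.one_le_pow _ _ (hHn1 i)) (Finset.mem_univ j)
      have hNR : ((Hn (x j):ℝ))^3 ≤ ((Pr x : ℕ):ℝ) := by exact_mod_cast hN
      linarith [hPrB]
    have hbox : ∀ j, Hn (x j) ≤ ⌊B⌋₊ := by
      intro j
      apply Nat.le_floor
      have hz : (1:ℝ) ≤ (Hn (x j):ℝ) := hHn1' j
      have h2 : (Hn (x j):ℝ) ≤ ((Hn (x j):ℝ))^3 := by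
        have h3 : (1:ℝ) ≤ ((Hn (x j):ℝ))^2 := by nlinarith [hz]
        nlinarith [mul_le_mul_of_nonneg_left h3 (by linarith : (0:ℝ) ≤ (Hn (x j):ℝ))]
      linarith [hsingle j]
    rw [Finset.mem_coe, mem_solsP]
    refine ⟨mem_sols'.mpr ⟨fun j => ⟨hbox j, hnz j⟩, ?_⟩, heval⟩
    · rw [hPrR]
      exact hprod'
  have hfin : s.Finite := Set.Finite.subset (Finset.finite_toSet _) hsub
  have hcard : (Nat.card s : ℝ) ≤ ((solsP (k+2) g B).card : ℝ) := by
    have h1 : Nat.card s = s.ncard := Nat.card_coe_set_eq s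
    have h2 : s.ncard ≤ ((solsP (k+2) g B : Set (Fin (k+2) → Fin 3 → ℤ))).ncard :=
      Set.ncard_le_ncard hsub (Finset.finite_toSet _)
    have h3 : ((solsP (k+2) g B : Set (Fin (k+2) → Fin 3 → ℤ))).ncard
        = (solsP (k+2) g B).card := Set.ncard_coe_finset _
    rw [h1]
    exact_mod_cast h2.trans_eq h3
  -- log bounds
  have hL3 : L ≤ 3 * Real.log B := by
    have h12 : (1:ℝ)/2 < Real.log 2 := by
      have := Real.log_two_gt_d9
      linarith
    simp only [hLdef]
    linarith
  have hkey : (Real.log B) ^ ((k:ℝ)) ≤ ((Real.log 2) ^ ((2:ℝ)⁻¹))⁻¹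
      * (Real.log B) ^ ((k:ℝ) + 2⁻¹) := by
    rw [inv_mul_eq_div, le_div_iff₀ (Real.rpow_pos_of_pos hlog2 _)]
    rw [Real.rpow_add hlogBpos]
    apply mul_le_mul_of_nonneg_left _ (Real.rpow_nonneg (le_of_lt hlogBpos) _)
    exact Real.rpow_le_rpow (le_of_lt hlog2) hlogB2 (by norm_num)
  have hexp2 : ((k+2:ℕ):ℝ) - 2 + 1/2 = (k:ℝ) + 2⁻¹ := by push_cast; ring
  calc (Nat.card s : ℝ)
      ≤ ((solsP (k+2) g B).card : ℝ) := hcard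
    _ ≤ K * B * L ^ (k:ℕ) := hK B hB
    _ ≤ K * B * (3 * Real.log B) ^ (k:ℕ) := by
        apply mul_le_mul_of_nonneg_left _ (by positivity)
        exact pow_le_pow_left₀ (le_of_lt hLpos) hL3 k
    _ = (K * 3^k) * B * (Real.log B) ^ ((k:ℝ)) := by
        rw [Real.rpow_natCast, mul_pow]
        ring
    _ ≤ (K * 3^k) * B * (((Real.log 2) ^ ((2:ℝ)⁻¹))⁻¹ * (Real.log B) ^ ((k:ℝ) + 2⁻¹)) := by
        apply mul_le_mul_of_nonneg_left hkey (by positivity)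
    _ = K * 3^k * ((Real.log 2) ^ ((2:ℝ)⁻¹))⁻¹ * B * Real.log B ^ (((k+2:ℕ):ℝ) - 2 + 1/2) := by
        rw [hexp2]
        ring

end Stmt6Aux

/-- Let `n ≥ 2` and let `g ≠ 0` be a polynomial over `ℚ` in `n` blocks of `3` variables,
homogeneous in each block.  Then there are `γ ∈ [0,1)` and `C > 0` such that for all `B ≥ 2`,
the number of `n`-tuples of primitive vectors in `ℤ³` with `∏_j ‖x⁽ʲ⁾‖∞³ ≤ B` and
`g(x⁽¹⁾,…,x⁽ⁿ⁾) = 0` is at most `C·B·(log B)^(n−2+γ)`. -/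
theorem stmt6 (n : ℕ) (hn : 2 ≤ n) (g : MvPolynomial (Fin n × Fin 3) ℚ) (hg : g ≠ 0)
    (hhom : ∀ j : Fin n, ∃ dj : ℕ, ∀ m ∈ g.support, ∑ i : Fin 3, m (j, i) = dj) :
    ∃ γ : ℝ, 0 ≤ γ ∧ γ < 1 ∧ ∃ C : ℝ, 0 < C ∧ ∀ B : ℝ, 2 ≤ B →
      (Nat.card {x : Fin n → Fin 3 → ℤ |
        (∀ j, IsPrimitiveVec (x j)) ∧
        (∏ j, ((supNorm (x j) : ℝ)) ^ 3) ≤ B ∧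
        MvPolynomial.eval (fun q : Fin n × Fin 3 => ((x q.1 q.2 : ℚ))) g = 0} : ℝ)
      ≤ C * B * Real.log B ^ ((n : ℝ) - 2 + γ) := by
  exact Stmt6Aux.stmt6_aux n hn g hg hhom
end
end

section
/- Let N ≥ 1, let F ∈ ℤ[x₀,…,x_N] be a polynomial, let p be a prime, let m ≥ 1 be an integer, and let a ∈ ℤ^{N+1} satisfy F(a) ≡ 0 (mod p^m) and ∂F/∂x_i(a) ≢ 0 (mod p) for at least one index i. Then for every integer ℓ ≥ m, the number of y ∈ (ℤ/p^ℓℤ)^{N+1} such that F(a + p^m·y) ≡ 0 (mod p^ℓ) equals p^{Nℓ+m}. (Here F(a + p^m·y) mod p^ℓ is well defined: it is independent of the choice of integer lift of y modulo p^ℓ.) -/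
noncomputable section
open MvPolynomial

/-- difference in a single coordinate divides the difference of evals -/
lemma diff_dvd {R : Type*} [CommRing R] {n : ℕ} (Q : MvPolynomial (Fin n) R)
    (r : Fin n → R) (i : Fin n) (t s : R) :
    (t - s) ∣ eval (Function.update r i t) Q - eval (Function.update r i s) Q := by
  set P : Polynomial R :=
    eval₂ Polynomial.C (fun j => if j = i then Polynomial.X else Polynomial.C (r j)) Q with hP
  have key : ∀ u : R, eval (Function.update r i u) Q = P.eval u := by
    intro u
    have h2 := MvPolynomial.eval₂_comp_left (Polynomial.evalRingHom u) Polynomial.C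
      (fun j => if j = i then Polynomial.X else Polynomial.C (r j)) Q
    rw [hP, show Polynomial.eval u P = Polynomial.evalRingHom u P from rfl, h2]
    have : (Polynomial.evalRingHom u).comp Polynomial.C = RingHom.id R := by
      ext x; simp
    rw [this]
    have : ((Polynomial.evalRingHom u) ∘ fun j =>
        if j = i then Polynomial.X else Polynomial.C (r j)) = Function.update r i u := by
      funext j
      by_cases hj : j = i <;> simp [hj, Function.update_apply]
    rw [this]
    rfl
  rw [key t, key s]
  exact Polynomial.sub_dvd_eval_sub t s P

/-- second-order Taylor expansion of a substitution -/
lemma taylor2 {n : ℕ} (a : Fin n → ℤ) (c : ℤ) (F : MvPolynomial (Fin n) ℤ) :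
    ∃ Q : MvPolynomial (Fin n) ℤ,
      bind₁ (fun i => C (a i) + C c * X i) F
        = C (eval a F) + C c * (∑ i, C (eval a (pderiv i F)) * X i) + C c * C c * Q := by
  induction F using MvPolynomial.induction_on with
  | C r => exact ⟨0, by simp⟩
  | add f g hf hg =>
      obtain ⟨Qf, hQf⟩ := hf; obtain ⟨Qg, hQg⟩ := hg
      refine ⟨Qf + Qg, ?_⟩
      rw [map_add, hQf, hQg]
      simp only [map_add, C_add, add_mul, Finset.sum_add_distrib, mul_add]
      ring
  | mul_X f j hf =>
      obtain ⟨Qf, hQf⟩ := hf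
      have hsum : (∑ i, C (eval a (pderiv i (f * X j))) * X i)
          = C (a j) * (∑ i, C (eval a (pderiv i f)) * X i) + C (eval a f) * X j := by
        rw [Finset.mul_sum]
        rw [show C (eval a f) * X j
            = ∑ i, (if j = i then C (eval a f) else 0) * X i by
          simp [ite_mul, Finset.sum_ite_eq]]
        rw [← Finset.sum_add_distrib]
        refine Finset.sum_congr rfl fun i _ => ?_
        simp only [pderiv_mul, pderiv_X, map_add, eval_mul, eval_X, Pi.single_apply]
        by_cases hij : j = i <;> simp [hij, C_add, C_mul] <;> ring
      refine ⟨(∑ i, C (eval a (pderiv i f)) * X i) * X j + Qf * C (a j) + C c * Qf * X j, ?_⟩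
      rw [map_mul, hQf, bind₁_X_right, hsum, eval_mul, eval_X, C_mul]
      ring


/-- cardinality of preimage under a surjective additive hom -/
lemma card_preimage {A B : Type*} [AddCommGroup A] [AddCommGroup B]
    (f : A →+ B) (hf : Function.Surjective f) (T : Set B) :
    Nat.card (f ⁻¹' T) = Nat.card T * Nat.card (f ⁻¹' {0}) := by
  classical
  set s : B → A := Function.surjInv hf with hsdef
  have hs : ∀ b, f (s b) = b := Function.surjInv_eq hf
  have e : (f ⁻¹' T) ≃ T × (f ⁻¹' ({0} : Set B)) :=
    { toFun := fun x => (⟨f x.1, x.2⟩, ⟨x.1 - s (f x.1), by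
        simp [Set.mem_preimage, map_sub, hs]⟩)
      invFun := fun z => ⟨s z.1.1 + z.2.1, by
        have h0 : f z.2.1 = 0 := z.2.2
        have : f (s z.1.1 + z.2.1) = z.1.1 := by simp [map_add, hs, h0]
        simp [Set.mem_preimage, this, z.1.2]⟩
      left_inv := fun x => by
        apply Subtype.ext
        simp only []
        abel
      right_inv := fun z => by
        have h0 : f z.2.1 = 0 := z.2.2
        have hfz : f (s z.1.1 + z.2.1) = z.1.1 := by simp [map_add, hs, h0]
        ext
        · simp [hfz]
        · simp only [hfz]
          abel }
  rw [Nat.card_congr e, Nat.card_prod]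

lemma card_slice {R : Type*} [Fintype R] [DecidableEq R] [Zero R] {n : ℕ} (i0 : Fin n)
    (P : (Fin n → R) → Prop)
    (h : ∀ r : Fin n → R, ∃! t : R, P (Function.update r i0 t)) :
    Nat.card {y : Fin n → R | P y} = (Fintype.card R) ^ (n - 1) := by
  classical
  have e1 : {y : Fin n → R | P y} ≃ {y : Fin n → R // y i0 = 0} :=
    { toFun := fun y => ⟨Function.update y.1 i0 0, Function.update_self _ _ _⟩
      invFun := fun r => ⟨Function.update r.1 i0 (h r.1).choose, (h r.1).choose_spec.1⟩
      left_inv := fun y => by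
        apply Subtype.ext
        have hy : P y.1 := y.2
        have h1 : Function.update (Function.update y.1 i0 0) i0 (y.1 i0) = y.1 := by
          rw [Function.update_idem, Function.update_eq_self]
        have h2 : P (Function.update (Function.update y.1 i0 0) i0 (y.1 i0)) := by
          rw [h1]; exact hy
        have := ((h (Function.update y.1 i0 0)).choose_spec.2 _ h2)
        simp only []
        rw [← this, h1]
      right_inv := fun r => by
        apply Subtype.ext
        simp only []
        rw [Function.update_idem, Function.update_eq_self_iff]
        exact r.2.symm }
  have e2 : {y : Fin n → R // y i0 = 0} ≃ ({j : Fin n // j ≠ i0} → R) :=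
    { toFun := fun y j => y.1 j.1
      invFun := fun f => ⟨fun j => if hj : j = i0 then 0 else f ⟨j, hj⟩, by simp⟩
      left_inv := fun y => by
        apply Subtype.ext
        funext j
        by_cases hj : j = i0
        · subst hj; simp [y.2]
        · simp [hj]
      right_inv := fun f => by
        funext j
        simp [j.2] }
  rw [Nat.card_congr (e1.trans e2), Nat.card_fun, Nat.card_eq_fintype_card,
    Nat.card_eq_fintype_card, Fintype.card_subtype_compl, Fintype.card_subtype_eq,
    Fintype.card_fin]

lemma isUnit_cast_of_not_dvd {p : ℕ} (hp : p.Prime) (k : ℕ) {c : ℤ} (hc : ¬ (p:ℤ) ∣ c) :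
    IsUnit ((c : ZMod (p ^ k))) := by
  have hcop : IsCoprime c (p : ℤ) := by
    rw [Int.isCoprime_iff_gcd_eq_one]
    have h1 : (Int.gcd c p) ∣ p := by
      have h2 := @Int.gcd_dvd_right c (p : ℤ)
      exact_mod_cast h2
    rcases (Nat.Prime.eq_one_or_self_of_dvd hp _ h1) with h | h
    · exact h
    · exfalso
      apply hc
      have h3 := @Int.gcd_dvd_left c (p : ℤ)
      rw [h] at h3
      exact h3
  obtain ⟨u, v, huv⟩ := hcop.pow_right (n := k)
  have := congrArg (fun z : ℤ => (z : ZMod (p ^ k))) huv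
  push_cast at this
  have hzero : ((p : ZMod (p ^ k))) ^ k = 0 := by
    have : ((p ^ k : ℕ) : ZMod (p ^ k)) = 0 := ZMod.natCast_self _
    push_cast at this
    exact this
  rw [hzero, mul_zero, add_zero] at this
  exact IsUnit.of_mul_eq_one _ (by rw [mul_comm]; exact this)

lemma exists_unique_root (p : ℕ) (hp : p.Prime) (k m n : ℕ) (hm : 1 ≤ m) (i0 : Fin n)
    (b : ℤ) (d : Fin n → ℤ) (Q : MvPolynomial (Fin n) ℤ) (hd : ¬ (p:ℤ) ∣ d i0)
    (r : Fin n → ZMod (p ^ k)) :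
    ∃! t : ZMod (p ^ k), eval (Function.update r i0 t)
      (map (Int.castRingHom (ZMod (p ^ k)))
        (C b + (∑ i, C (d i) * X i) + C ((p:ℤ) ^ m) * Q)) = 0 := by
  classical
  haveI : NeZero (p ^ k) := ⟨pow_ne_zero _ hp.ne_zero⟩
  set f : ZMod (p ^ k) → ZMod (p ^ k) := fun t => eval (Function.update r i0 t)
      (map (Int.castRingHom (ZMod (p ^ k)))
        (C b + (∑ i, C (d i) * X i) + C ((p:ℤ) ^ m) * Q)) with hf
  have hps : ((p : ZMod (p ^ k))) ^ k = 0 := by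
    have : ((p ^ k : ℕ) : ZMod (p ^ k)) = 0 := ZMod.natCast_self _
    push_cast at this
    exact this
  have heval : ∀ t : ZMod (p ^ k), f t = (b : ZMod (p ^ k))
      + (∑ i, (d i : ZMod (p ^ k)) * Function.update r i0 t i)
      + (p : ZMod (p ^ k)) ^ m * eval (Function.update r i0 t)
          (map (Int.castRingHom (ZMod (p ^ k))) Q) := by
    intro t
    simp only [hf, map_add, map_mul, map_C, map_sum, map_X, map_pow, eval_add, eval_mul,
      eval_C, eval_sum, eval_X, eval_pow, Int.coe_castRingHom]
    push_cast
    ring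
  have hinj : Function.Injective f := by
    intro t s hts
    obtain ⟨e, he⟩ := diff_dvd (map (Int.castRingHom (ZMod (p ^ k))) Q) r i0 t s
    have hsumdiff : (∑ i, (d i : ZMod (p ^ k)) * Function.update r i0 t i)
        - (∑ i, (d i : ZMod (p ^ k)) * Function.update r i0 s i)
        = (d i0 : ZMod (p ^ k)) * (t - s) := by
      rw [← Finset.sum_sub_distrib]
      rw [Finset.sum_eq_single i0]
      · simp [Function.update_self, mul_sub]
      · intro i _ hi
        rw [Function.update_of_ne hi, Function.update_of_ne hi, sub_self]
      · simp
    have hdiff : f t - f s = (t - s) * ((d i0 : ZMod (p ^ k)) + (p : ZMod (p ^ k)) ^ m * e) := by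
      rw [heval t, heval s]
      rw [show ∀ A B C D E G : ZMod (p ^ k), A + B + C * D - (A + E + C * G)
          = (B - E) + C * (D - G) from fun _ _ _ _ _ _ => by ring]
      rw [hsumdiff, he]
      ring
    have hnil : IsNilpotent ((p : ZMod (p ^ k)) ^ m * e) := by
      refine ⟨k, ?_⟩
      rw [mul_pow, ← pow_mul]
      have hmk : m * k = k + (m * k - k) := by
        have : k ≤ m * k := Nat.le_mul_of_pos_left k (by omega)
        omega
      rw [hmk, pow_add, hps, zero_mul, zero_mul]
    have hunit : IsUnit ((d i0 : ZMod (p ^ k)) + (p : ZMod (p ^ k)) ^ m * e) :=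
      IsNilpotent.isUnit_add_left_of_commute hnil (isUnit_cast_of_not_dvd hp k hd)
        (Commute.all _ _)
    have h0 : (t - s) * ((d i0 : ZMod (p ^ k)) + (p : ZMod (p ^ k)) ^ m * e) = 0 := by
      rw [← hdiff, hts, sub_self]
    have := hunit.mul_right_cancel
      (by rw [h0, zero_mul] : (t - s) * _ = 0 * _)
    exact sub_eq_zero.mp this
  have hsurj : Function.Surjective f := (Finite.injective_iff_surjective).mp hinj
  obtain ⟨t, ht⟩ := hsurj 0
  exact ⟨t, ht, fun y hy => hinj (show f y = f t by rw [ht]; exact hy)⟩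


lemma eval_bind₁'' {R : Type*} [CommSemiring R] {n : ℕ} (y : Fin n → R)
    (h : Fin n → MvPolynomial (Fin n) R) (P : MvPolynomial (Fin n) R) :
    eval y (bind₁ h P) = eval (fun i => eval y (h i)) P :=
  eval₂Hom_bind₁ (RingHom.id R) y h P

lemma pm_mul_eq_zero_iff (p : ℕ) (hp : p.Prime) (m k : ℕ) (u : ZMod (p ^ (m + k))) :
    (p : ZMod (p ^ (m + k))) ^ m * u = 0 ↔
      ZMod.castHom (pow_dvd_pow p (Nat.le_add_left k m)) (ZMod (p ^ k)) u = 0 := by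
  haveI : NeZero (p ^ (m + k)) := ⟨pow_ne_zero _ hp.ne_zero⟩
  haveI : NeZero (p ^ k) := ⟨pow_ne_zero _ hp.ne_zero⟩
  rw [ZMod.castHom_apply, ← ZMod.natCast_val, ZMod.natCast_eq_zero_iff]
  conv_lhs => rw [← ZMod.natCast_zmod_val u]
  rw [← Nat.cast_pow, ← Nat.cast_mul, ZMod.natCast_eq_zero_iff]
  generalize ZMod.val u = t
  rw [pow_add]
  exact Nat.mul_dvd_mul_iff_left (pow_pos hp.pos m)

lemma cast_eval (p k ℓ : ℕ) (hdvd : p ^ k ∣ p ^ ℓ) {n : ℕ} (g : MvPolynomial (Fin n) ℤ)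
    (y : Fin n → ZMod (p ^ ℓ)) :
    ZMod.castHom hdvd (ZMod (p ^ k)) (eval y (map (Int.castRingHom (ZMod (p ^ ℓ))) g))
      = eval (fun i => ZMod.castHom hdvd (ZMod (p ^ k)) (y i))
        (map (Int.castRingHom (ZMod (p ^ k))) g) := by
  rw [eval_map, eval_map, MvPolynomial.eval₂_comp_left (ZMod.castHom hdvd (ZMod (p ^ k)))]
  congr 1
  exact RingHom.ext_int _ _


/-- Hensel-lifting count: if `a` is a solution of `F ≡ 0 (mod p^m)` at which some partial
derivative of `F` is a unit mod `p`, then for every `ℓ ≥ m` the number of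
`y ∈ (ℤ/p^ℓℤ)^{N+1}` with `F(a + p^m y) ≡ 0 (mod p^ℓ)` is exactly `p^{Nℓ+m}`. -/
theorem stmt12 (N : ℕ) (hN : 1 ≤ N) (F : MvPolynomial (Fin (N + 1)) ℤ)
    (p : ℕ) (hp : p.Prime) (m : ℕ) (hm : 1 ≤ m) (a : Fin (N + 1) → ℤ)
    (ha : ((p : ℤ)) ^ m ∣ eval a F)
    (hsm : ∃ i, ¬ ((p : ℤ) ∣ eval a (pderiv i F))) :
    ∀ ℓ : ℕ, m ≤ ℓ →
      Nat.card {y : Fin (N + 1) → ZMod (p ^ ℓ) |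
        eval (fun i => (a i : ZMod (p ^ ℓ)) + ((p : ZMod (p ^ ℓ))) ^ m * y i)
          (MvPolynomial.map (Int.castRingHom (ZMod (p ^ ℓ))) F) = 0}
      = p ^ (N * ℓ + m) := by
  classical
  obtain ⟨i0, hd⟩ := hsm
  obtain ⟨b, hb⟩ := ha
  obtain ⟨Q, hQ⟩ := taylor2 a ((p : ℤ) ^ m) F
  intro ℓ hℓ
  obtain ⟨k, rfl⟩ : ∃ k, ℓ = m + k := ⟨ℓ - m, by omega⟩
  haveI : NeZero (p ^ (m + k)) := ⟨pow_ne_zero _ hp.ne_zero⟩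
  haveI : NeZero (p ^ k) := ⟨pow_ne_zero _ hp.ne_zero⟩
  set d : Fin (N + 1) → ℤ := fun i => eval a (pderiv i F) with hdd
  set g : MvPolynomial (Fin (N + 1)) ℤ :=
    C b + (∑ i, C (d i) * X i) + C ((p : ℤ) ^ m) * Q with hgg
  have hG : bind₁ (fun i => C (a i) + C ((p : ℤ) ^ m) * X i) F = C ((p : ℤ) ^ m) * g := by
    rw [hQ, hgg, hb, C_mul]
    ring
  set c : ZMod (p ^ (m + k)) →+* ZMod (p ^ k) :=
    ZMod.castHom (pow_dvd_pow p (Nat.le_add_left k m)) _ with hc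
  set Φ : (Fin (N + 1) → ZMod (p ^ (m + k))) →+ (Fin (N + 1) → ZMod (p ^ k)) :=
    { toFun := fun y i => c (y i)
      map_zero' := by funext i; simp
      map_add' := fun x y => by funext i; simp } with hΦ
  set T : Set (Fin (N + 1) → ZMod (p ^ k)) :=
    {z | eval z (map (Int.castRingHom (ZMod (p ^ k))) g) = 0} with hT
  have hset : {y : Fin (N + 1) → ZMod (p ^ (m + k)) |
      eval (fun i => (a i : ZMod (p ^ (m + k))) + ((p : ZMod (p ^ (m + k)))) ^ m * y i)
        (MvPolynomial.map (Int.castRingHom (ZMod (p ^ (m + k)))) F) = 0} = ⇑Φ ⁻¹' T := by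
    ext y
    simp only [Set.mem_setOf_eq, Set.mem_preimage]
    have h2 : eval y (map (Int.castRingHom (ZMod (p ^ (m + k))))
          (bind₁ (fun i => C (a i) + C ((p : ℤ) ^ m) * X i) F))
        = eval (fun i => (a i : ZMod (p ^ (m + k))) + ((p : ZMod (p ^ (m + k)))) ^ m * y i)
          (MvPolynomial.map (Int.castRingHom (ZMod (p ^ (m + k)))) F) := by
      rw [map_bind₁, eval_bind₁'']
      have harg : (fun i => eval y (map (Int.castRingHom (ZMod (p ^ (m + k))))
          (C (a i) + C ((p : ℤ) ^ m) * X i)))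
          = fun i => (a i : ZMod (p ^ (m + k))) + ((p : ZMod (p ^ (m + k)))) ^ m * y i := by
        funext i
        simp only [map_add, map_mul, map_C, map_X, eval_add, eval_mul, eval_C, eval_X,
          Int.coe_castRingHom]
        push_cast
        ring
      rw [harg]
    have e1 : eval (fun i => (a i : ZMod (p ^ (m + k))) + ((p : ZMod (p ^ (m + k)))) ^ m * y i)
        (MvPolynomial.map (Int.castRingHom (ZMod (p ^ (m + k)))) F)
        = (p : ZMod (p ^ (m + k))) ^ m * eval y (map (Int.castRingHom (ZMod (p ^ (m + k)))) g) := by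
      rw [← h2, hG]
      simp only [map_mul, map_C, eval_mul, eval_C, Int.coe_castRingHom]
      push_cast
      ring
    rw [e1, pm_mul_eq_zero_iff p hp m k, cast_eval p k (m + k) _ g y]
    exact Iff.rfl
  have hΦsurj : Function.Surjective ⇑Φ := by
    intro z
    refine ⟨fun i => (ZMod.ringHom_surjective c (z i)).choose, ?_⟩
    funext i
    exact (ZMod.ringHom_surjective c (z i)).choose_spec
  have hTcard : Nat.card ↥T = (p ^ k) ^ N := by
    have hcs := card_slice (R := ZMod (p ^ k)) i0
      (fun z => eval z (map (Int.castRingHom (ZMod (p ^ k))) g) = 0)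
      (fun r => exists_unique_root p hp k m (N + 1) hm i0 b d Q hd r)
    rw [hT]
    rw [hcs, ZMod.card]
    norm_num
  have hker1 : Nat.card {x : ZMod (p ^ (m + k)) // c x = 0} = p ^ m := by
    have h1 := card_preimage c.toAddMonoidHom (ZMod.ringHom_surjective c) Set.univ
    rw [Set.preimage_univ] at h1
    have h2 : Nat.card ↥(⇑c.toAddMonoidHom ⁻¹' ({0} : Set (ZMod (p ^ k))))
        = Nat.card {x : ZMod (p ^ (m + k)) // c x = 0} :=
      Nat.card_congr (Equiv.subtypeEquivRight (fun x => by
        simp [Set.mem_preimage]))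
    rw [h2] at h1
    simp only [Nat.card_univ, Nat.card_zmod] at h1
    have h3 : p ^ k * p ^ m = p ^ k * Nat.card {x : ZMod (p ^ (m + k)) // c x = 0} := by
      rw [← h1, ← pow_add]
      ring_nf
    exact (Nat.eq_of_mul_eq_mul_left (pow_pos hp.pos k) h3).symm
  have hker : Nat.card ↥(⇑Φ ⁻¹' ({0} : Set (Fin (N + 1) → ZMod (p ^ k))))
      = (p ^ m) ^ (N + 1) := by
    have e : ↥(⇑Φ ⁻¹' ({0} : Set (Fin (N + 1) → ZMod (p ^ k))))
        ≃ ∀ _ : Fin (N + 1), {x : ZMod (p ^ (m + k)) // c x = 0} := by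
      refine (Equiv.subtypeEquivRight (fun y => ?_)).trans
        (Equiv.subtypePiEquivPi (p := fun _ x => c x = 0))
      simp [hΦ, Set.mem_preimage, _root_.funext_iff, AddMonoidHom.coe_mk, ZeroHom.coe_mk]
    rw [Nat.card_congr e, Nat.card_pi, Finset.prod_const, hker1, Finset.card_univ,
      Fintype.card_fin]
  rw [hset, card_preimage Φ hΦsurj T, hTcard, hker, ← pow_mul, ← pow_mul, ← pow_add]
  congr 1
  ring
end
end

section
/- Let N ≥ 1, d ≥ 1 and let F ∈ ℤ[x₀,…,x_N] be homogeneous of degree d. Let p be a prime such that for every x ∈ 𝔽_p^{N+1} with x ≠ 0 and F(x) = 0 in 𝔽_p, at least one partial derivative ∂F/∂x_i(x) is nonzero in 𝔽_p. Then for every integer ℓ ≥ 2, #X̂(ℤ/p^ℓℤ) = p^N · #X̂(ℤ/p^{ℓ−1}ℤ), where for k ≥ 1, X̂(ℤ/p^kℤ) denotes the set of x ∈ (ℤ/p^kℤ)^{N+1} whose reduction modulo p is nonzero and which satisfy F(x) = 0 in ℤ/p^kℤ. -/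
noncomputable section
open MvPolynomial

/-- `X̂(ℤ/p^kℤ)`: the points of `(ℤ/p^kℤ)^{N+1}` whose reduction mod `p` is nonzero and
which satisfy `F = 0` in `ℤ/p^kℤ`. -/
def Xhat (N : ℕ) (F : MvPolynomial (Fin (N + 1)) ℤ) (p k : ℕ) :
    Set (Fin (N + 1) → ZMod (p ^ k)) :=
  {x | (∃ i, ¬ (p ∣ (x i).val)) ∧
    eval x (MvPolynomial.map (Int.castRingHom (ZMod (p ^ k))) F) = 0}



lemma taylor_sq_zero {R : Type*} [CommRing R] {n : ℕ} (G : MvPolynomial (Fin n) R)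
    (x z : Fin n → R) (hz : ∀ i j, z i * z j = 0) :
    eval (fun i => x i + z i) G = eval x G + ∑ i, z i * eval x (pderiv i G) := by
  induction G using MvPolynomial.induction_on with
  | C a => simp
  | add f g hf hg =>
      simp only [map_add, hf, hg, mul_add, Finset.sum_add_distrib]; ring
  | mul_X f m ih =>
      have hS : (∑ i, z i * eval x (pderiv i f)) * z m = 0 := by
        rw [Finset.sum_mul]
        refine Finset.sum_eq_zero fun i _ => ?_
        rw [mul_comm (z i) _, mul_assoc, hz i m, mul_zero]
      have hXm : ∑ i, z i * (eval x f * eval x (pderiv i (X m))) = z m * eval x f := by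
        rw [Finset.sum_eq_single m]
        · simp
        · intro b _ hb; rw [pderiv_X_of_ne (Ne.symm hb)]; simp
        · simp
      have h2 : ∑ i, z i * (eval x (pderiv i f) * x m)
          = (∑ i, z i * eval x (pderiv i f)) * x m := by
        rw [Finset.sum_mul]
        exact Finset.sum_congr rfl fun i _ => by ring
      simp only [map_mul, eval_X, ih, pderiv_mul, map_add, eval_add, eval_mul, mul_add,
        Finset.sum_add_distrib, h2, hXm]
      linear_combination hS


lemma sum_split {M : Type*} [AddCommMonoid M] {n : ℕ} (f : Fin n → M) (i₀ : Fin n) :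
    ∑ i, f i = f i₀ + ∑ j : {j : Fin n // j ≠ i₀}, f j.1 := by
  rw [← Finset.add_sum_erase _ f (Finset.mem_univ i₀)]
  congr 1
  exact Finset.sum_subtype _ (fun x => by simp) f

lemma card_sol {F : Type*} [Field F] [Fintype F] {n : ℕ} (g : Fin (n + 1) → F)
    (i₀ : Fin (n + 1)) (hg : g i₀ ≠ 0) (c : F) :
    Nat.card {t : Fin (n + 1) → F // c + ∑ i, t i * g i = 0}
      = Fintype.card F ^ n := by
  classical
  set S : ({j : Fin (n + 1) // j ≠ i₀} → F) → F := fun w => ∑ j, w j * g j.1 with hS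
  set φ : ({j : Fin (n + 1) // j ≠ i₀} → F) → (Fin (n + 1) → F) := fun w i =>
    if h : i = i₀ then -(g i₀)⁻¹ * (c + S w) else w ⟨i, h⟩ with hφdef
  have hsum : ∀ w, ∑ j : {j : Fin (n + 1) // j ≠ i₀}, φ w j.1 * g j.1 = S w := by
    intro w
    refine Finset.sum_congr rfl fun j _ => ?_
    rw [hφdef]; dsimp only; rw [dif_neg j.2]
  have hφ : ∀ w, c + ∑ i, φ w i * g i = 0 := by
    intro w
    rw [sum_split (fun i => φ w i * g i) i₀, hsum]
    have : φ w i₀ = -(g i₀)⁻¹ * (c + S w) := by rw [hφdef]; dsimp only; rw [dif_pos rfl]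
    rw [this, neg_mul, neg_mul, mul_comm ((g i₀)⁻¹) _, mul_assoc,
      inv_mul_cancel₀ hg, mul_one]
    ring
  have e : {t : Fin (n + 1) → F // c + ∑ i, t i * g i = 0}
      ≃ ({j : Fin (n + 1) // j ≠ i₀} → F) :=
    { toFun := fun t j => t.1 j.1
      invFun := fun w => ⟨φ w, hφ w⟩
      left_inv := by
        rintro ⟨t, ht⟩
        ext i
        show φ (fun j => t j.1) i = t i
        rw [hφdef]; dsimp only
        by_cases h : i = i₀
        · subst h
          rw [dif_pos rfl]
          rw [sum_split (fun j => t j * g j) i] at ht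
          have h1 : c + S (fun j => t j.1) = -(t i * g i) := by
            rw [hS]; dsimp only; linear_combination ht
          rw [h1, neg_mul_neg, mul_comm (t i) (g i), ← mul_assoc,
            inv_mul_cancel₀ hg, one_mul]
        · rw [dif_neg h]
      right_inv := by
        intro w
        funext j
        show φ w j.1 = w j
        rw [hφdef]; dsimp only; rw [dif_neg j.2] }
  rw [Nat.card_congr e, Nat.card_eq_fintype_card, Fintype.card_fun]
  congr 1
  rw [Fintype.card_subtype_compl (fun j => j = i₀)]
  simp [Fintype.card_subtype_eq]

lemma evalcomm {R S : Type*} [CommRing R] [CommRing S] (f : R →+* S) {m : ℕ}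
    (v : Fin m → R) (Q : MvPolynomial (Fin m) R) :
    f (eval v Q) = eval (fun i => f (v i)) (map f Q) := by
  rw [eval_map]
  calc f (eval v Q) = f (eval₂ (RingHom.id R) v Q) := by rw [eval₂_id]
    _ = eval₂ (f.comp (RingHom.id R)) (f ∘ v) Q := eval₂_comp_left f _ v Q
    _ = eval₂ f (fun i => f (v i)) Q := by rw [RingHom.comp_id]; rfl

lemma mapInt {R S : Type*} [CommRing R] [CommRing S] (f : R →+* S) {m : ℕ}
    (F : MvPolynomial (Fin m) ℤ) :
    map f (map (Int.castRingHom R) F) = map (Int.castRingHom S) F := by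
  rw [map_map, RingHom.ext_int (f.comp (Int.castRingHom R)) (Int.castRingHom S)]

lemma fiber_card (N : ℕ) (F : MvPolynomial (Fin (N + 1)) ℤ) (p : ℕ) (hp : p.Prime)
    (k : ℕ) (hk : 1 ≤ k)
    (hsm : ∀ x : Fin (N + 1) → ZMod p, x ≠ 0 →
      eval x (MvPolynomial.map (Int.castRingHom (ZMod p)) F) = 0 →
      ∃ i, eval x (pderiv i (MvPolynomial.map (Int.castRingHom (ZMod p)) F)) ≠ 0)
    (x : Fin (N + 1) → ZMod (p ^ k)) (hx : x ∈ Xhat N F p k) :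
    Nat.card {y : Fin (N + 1) → ZMod (p ^ (k + 1)) //
      y ∈ Xhat N F p (k + 1) ∧
      ∀ i, ZMod.castHom (pow_dvd_pow p (Nat.le_succ k)) (ZMod (p ^ k)) (y i) = x i}
      = p ^ N := by
  classical
  haveI : Fact p.Prime := ⟨hp⟩
  haveI : NeZero (p ^ k) := ⟨pow_ne_zero _ hp.pos.ne'⟩
  haveI : NeZero (p ^ (k + 1)) := ⟨pow_ne_zero _ hp.pos.ne'⟩
  set π' : ZMod (p ^ (k + 1)) →+* ZMod (p ^ k) :=
    ZMod.castHom (pow_dvd_pow p (Nat.le_succ k)) (ZMod (p ^ k)) with hπ'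
  set ρ : ZMod (p ^ (k + 1)) →+* ZMod p :=
    ZMod.castHom (dvd_pow_self p (Nat.succ_ne_zero k)) (ZMod p) with hρ
  -- basic value facts
  have hval : ∀ z : ZMod (p ^ (k + 1)), π' z = ((z.val : ℕ) : ZMod (p ^ k)) := fun z => by
    rw [hπ', ZMod.castHom_apply, ← ZMod.natCast_val]
  have hρval : ∀ z : ZMod (p ^ (k + 1)), ρ z = ((z.val : ℕ) : ZMod p) := fun z => by
    rw [hρ, ZMod.castHom_apply, ← ZMod.natCast_val]
  have hdvdval : ∀ z : ZMod (p ^ (k + 1)), (p ∣ (π' z).val ↔ p ∣ z.val) := by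
    intro z
    rw [hval, ZMod.val_natCast]
    exact Nat.dvd_mod_iff (dvd_pow_self p (by omega))
  -- the lift of x
  set xt : Fin (N + 1) → ZMod (p ^ (k + 1)) := fun i => ((x i).val : ZMod (p ^ (k + 1)))
    with hxt
  have hπxt : ∀ i, π' (xt i) = x i := fun i => by
    rw [hxt]; dsimp only; rw [map_natCast, ZMod.natCast_zmod_val]
  set a : ZMod (p ^ (k + 1)) := eval xt (map (Int.castRingHom (ZMod (p ^ (k + 1)))) F) with ha
  set g : Fin (N + 1) → ZMod (p ^ (k + 1)) :=
    fun i => eval xt (pderiv i (map (Int.castRingHom (ZMod (p ^ (k + 1)))) F)) with hg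
  set gbar : Fin (N + 1) → ZMod p := fun i => ρ (g i) with hgbar
  -- square-zero facts
  have hsq : ((p ^ k : ℕ) : ZMod (p ^ (k + 1))) * ((p ^ k : ℕ) : ZMod (p ^ (k + 1))) = 0 := by
    rw [← Nat.cast_mul, ZMod.natCast_eq_zero_iff, ← pow_add]
    exact pow_dvd_pow p (by omega)
  have zeroIff : ∀ u : ZMod (p ^ (k + 1)),
      (((p ^ k : ℕ) : ZMod (p ^ (k + 1))) * u = 0 ↔ ρ u = 0) := by
    intro u
    have h1 : ((p ^ k : ℕ) : ZMod (p ^ (k + 1))) * u = ((p ^ k * u.val : ℕ) : ZMod (p ^ (k + 1))) := by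
      rw [Nat.cast_mul]; congr 1; exact (ZMod.natCast_zmod_val u).symm
    rw [h1, ZMod.natCast_eq_zero_iff, hρval, ZMod.natCast_eq_zero_iff]
    calc p ^ (k + 1) ∣ p ^ k * u.val
        ↔ p ^ k * p ∣ p ^ k * u.val := iff_of_eq (congrArg (· ∣ p ^ k * u.val) (pow_succ p k))
      _ ↔ p ∣ u.val := Nat.mul_dvd_mul_iff_left (pow_pos hp.pos k)
  -- divisibility of a
  have hπa : π' a = 0 := by
    rw [ha, evalcomm, mapInt]
    have he : (fun i => π' (xt i)) = x := funext hπxt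
    rw [he]
    exact hx.2
  have pk_dvd_a : p ^ k ∣ a.val := by
    have h2 := hπa
    rw [hval, ZMod.natCast_eq_zero_iff] at h2
    exact h2
  -- normal form of a
  set m : ℕ := a.val / p ^ k with hm
  have ham : a = ((p ^ k : ℕ) : ZMod (p ^ (k + 1))) * ((m : ℕ) : ZMod (p ^ (k + 1))) := by
    rw [← Nat.cast_mul, hm, Nat.mul_div_cancel' pk_dvd_a, ZMod.natCast_zmod_val]
  -- the parametrization of lifts
  set Φ : (Fin (N + 1) → ZMod p) → (Fin (N + 1) → ZMod (p ^ (k + 1))) := fun t i =>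
    xt i + ((p ^ k : ℕ) : ZMod (p ^ (k + 1))) * (((t i).val : ℕ) : ZMod (p ^ (k + 1))) with hΦ
  have hTay : ∀ t : Fin (N + 1) → ZMod p,
      eval (Φ t) (map (Int.castRingHom (ZMod (p ^ (k + 1)))) F)
        = a + ((p ^ k : ℕ) : ZMod (p ^ (k + 1)))
            * ∑ i, (((t i).val : ℕ) : ZMod (p ^ (k + 1))) * g i := by
    intro t
    rw [hΦ]
    have := taylor_sq_zero (map (Int.castRingHom (ZMod (p ^ (k + 1)))) F) xt
      (fun i => ((p ^ k : ℕ) : ZMod (p ^ (k + 1))) * (((t i).val : ℕ) : ZMod (p ^ (k + 1))))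
      (fun i j => by rw [mul_mul_mul_comm, hsq, zero_mul])
    rw [this, Finset.mul_sum]
    congr 1
    exact Finset.sum_congr rfl fun i _ => by rw [mul_assoc]
  have hiff : ∀ t : Fin (N + 1) → ZMod p,
      (eval (Φ t) (map (Int.castRingHom (ZMod (p ^ (k + 1)))) F) = 0
        ↔ ((m : ℕ) : ZMod p) + ∑ i, t i * gbar i = 0) := by
    intro t
    rw [hTay t, ham, ← mul_add, zeroIff]
    rw [map_add, map_natCast, map_sum]
    have hterm : ∀ i : Fin (N + 1), ρ ((((t i).val : ℕ) : ZMod (p ^ (k + 1))) * g i)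
        = t i * gbar i := fun i => by
      rw [map_mul, map_natCast, ZMod.natCast_zmod_val, hgbar]
    rw [Finset.sum_congr rfl fun i _ => hterm i]
  -- smoothness at the reduction mod p
  set xb : Fin (N + 1) → ZMod p := fun i => ρ (xt i) with hxb
  have hxbv : ∀ i, xb i = (((x i).val : ℕ) : ZMod p) := fun i => by
    rw [hxb]; dsimp only; rw [hxt]; dsimp only; rw [map_natCast]
  have hxb0 : xb ≠ 0 := by
    obtain ⟨i, hi⟩ := hx.1
    intro hc
    apply hi
    have := congrFun hc i
    rw [hxbv i, Pi.zero_apply] at this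
    rwa [ZMod.natCast_eq_zero_iff] at this
  have hxbF : eval xb (map (Int.castRingHom (ZMod p)) F) = 0 := by
    have h3 : ρ a = 0 := by
      rw [hρval, ZMod.natCast_eq_zero_iff]
      exact (dvd_pow_self p (by omega : k ≠ 0)).trans pk_dvd_a
    rw [ha, evalcomm, mapInt] at h3
    exact h3
  obtain ⟨i₀, hi₀⟩ := hsm xb hxb0 hxbF
  have hgb : gbar i₀ ≠ 0 := by
    rw [hgbar]; dsimp only
    rw [hg]; dsimp only
    rw [evalcomm, ← pderiv_map, mapInt]
    exact hi₀
  -- the bijection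
  have hπΦ : ∀ (t : Fin (N + 1) → ZMod p) (i : Fin (N + 1)), π' (Φ t i) = x i := by
    intro t i
    rw [hΦ]; dsimp only
    rw [map_add, map_mul, map_natCast, map_natCast, ZMod.natCast_self, zero_mul, add_zero]
    exact ZMod.natCast_zmod_val (x i)
  have hmem : ∀ t : Fin (N + 1) → ZMod p, ((m : ℕ) : ZMod p) + ∑ i, t i * gbar i = 0 →
      Φ t ∈ Xhat N F p (k + 1) := by
    intro t ht
    refine ⟨?_, (hiff t).2 ht⟩
    obtain ⟨i, hi⟩ := hx.1
    refine ⟨i, fun hdvd => hi ?_⟩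
    have := (hdvdval (Φ t i)).2 hdvd
    rwa [hπΦ t i] at this
  set Sol := {t : Fin (N + 1) → ZMod p // ((m : ℕ) : ZMod p) + ∑ i, t i * gbar i = 0}
    with hSol
  have hbij : Function.Bijective (fun t : Sol =>
      (⟨Φ t.1, hmem t.1 t.2, fun i => hπΦ t.1 i⟩ :
        {y : Fin (N + 1) → ZMod (p ^ (k + 1)) // y ∈ Xhat N F p (k + 1) ∧
          ∀ i, π' (y i) = x i})) := by
    constructor
    · rintro ⟨t, ht⟩ ⟨s, hs⟩ h
      rw [Subtype.mk_eq_mk] at h ⊢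
      funext i
      have h4 := congrFun h i
      rw [hΦ] at h4; dsimp only at h4
      have h5 := add_left_cancel h4
      rw [← Nat.cast_mul, ← Nat.cast_mul] at h5
      have hb : ∀ v : ZMod p, p ^ k * v.val < p ^ (k + 1) := fun v => by
        calc p ^ k * v.val < p ^ k * p :=
          mul_lt_mul_of_pos_left (ZMod.val_lt v) (pow_pos hp.pos k)
        _ = p ^ (k + 1) := (pow_succ p k).symm
      have h6 := congrArg ZMod.val h5
      rw [ZMod.val_natCast, ZMod.val_natCast, Nat.mod_eq_of_lt (hb (t i)),
        Nat.mod_eq_of_lt (hb (s i))] at h6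
      have h7 := Nat.eq_of_mul_eq_mul_left (pow_pos hp.pos k) h6
      exact ZMod.val_injective _ h7
    · rintro ⟨y, hy, hyπ⟩
      have hdi : ∀ i, p ^ k ∣ (y i - xt i).val := by
        intro i
        have h8 : π' (y i - xt i) = 0 := by
          rw [map_sub, hyπ i, hπxt i, sub_self]
        rw [hval, ZMod.natCast_eq_zero_iff] at h8
        exact h8
      set t : Fin (N + 1) → ZMod p := fun i => (((y i - xt i).val / p ^ k : ℕ) : ZMod p)
        with hT
      have hΦt : Φ t = y := by
        funext i
        rw [hΦ, hT]; dsimp only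
        have hlt : (y i - xt i).val / p ^ k < p := by
          rw [Nat.div_lt_iff_lt_mul (pow_pos hp.pos k)]
          calc (y i - xt i).val < p ^ (k + 1) := ZMod.val_lt _
            _ = p * p ^ k := by rw [pow_succ, mul_comm]
        rw [ZMod.val_natCast, Nat.mod_eq_of_lt hlt, ← Nat.cast_mul,
          Nat.mul_div_cancel' (hdi i), ZMod.natCast_zmod_val, add_sub_cancel]
      refine ⟨⟨t, ?_⟩, Subtype.ext hΦt⟩
      have := (hiff t).1 (by rw [hΦt]; exact hy.2)
      exact this
  rw [← Nat.card_congr (Equiv.ofBijective _ hbij)]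
  rw [hSol, card_sol gbar i₀ hgb (((m : ℕ) : ZMod p)), ZMod.card]

lemma key_count (N : ℕ) (F : MvPolynomial (Fin (N + 1)) ℤ) (p : ℕ) (hp : p.Prime)
    (k : ℕ) (hk : 1 ≤ k)
    (hsm : ∀ x : Fin (N + 1) → ZMod p, x ≠ 0 →
      eval x (MvPolynomial.map (Int.castRingHom (ZMod p)) F) = 0 →
      ∃ i, eval x (pderiv i (MvPolynomial.map (Int.castRingHom (ZMod p)) F)) ≠ 0) :
    Nat.card (Xhat N F p (k + 1)) = p ^ N * Nat.card (Xhat N F p k) := by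
  classical
  haveI : Fact p.Prime := ⟨hp⟩
  haveI : NeZero (p ^ k) := ⟨pow_ne_zero _ hp.pos.ne'⟩
  haveI : NeZero (p ^ (k + 1)) := ⟨pow_ne_zero _ hp.pos.ne'⟩
  set π' : ZMod (p ^ (k + 1)) →+* ZMod (p ^ k) :=
    ZMod.castHom (pow_dvd_pow p (Nat.le_succ k)) (ZMod (p ^ k)) with hπ'
  have hdvdval : ∀ z : ZMod (p ^ (k + 1)), (p ∣ (π' z).val ↔ p ∣ z.val) := by
    intro z
    rw [hπ', ZMod.castHom_apply, ← ZMod.natCast_val, ZMod.val_natCast]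
    exact Nat.dvd_mod_iff (dvd_pow_self p (by omega))
  have hmapsto : ∀ y : Fin (N + 1) → ZMod (p ^ (k + 1)), y ∈ Xhat N F p (k + 1) →
      (fun i => π' (y i)) ∈ Xhat N F p k := by
    rintro y ⟨⟨i, hi⟩, hev⟩
    refine ⟨⟨i, fun hc => hi ((hdvdval (y i)).1 hc)⟩, ?_⟩
    rw [← mapInt π', ← evalcomm]
    rw [hev, map_zero]
  set A := (Set.toFinite (Xhat N F p (k + 1))).toFinset with hA
  set B := (Set.toFinite (Xhat N F p k)).toFinset with hB
  have hAB : ∀ y ∈ A, (fun i => π' (y i)) ∈ B := by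
    intro y hy
    rw [hB, Set.Finite.mem_toFinset]
    exact hmapsto y ((Set.Finite.mem_toFinset _).1 hy)
  have hsum := Finset.card_eq_sum_card_fiberwise hAB
  have hfib : ∀ x ∈ B, (A.filter fun y => (fun i => π' (y i)) = x).card = p ^ N := by
    intro x hxB
    have hx : x ∈ Xhat N F p k := (Set.Finite.mem_toFinset _).1 hxB
    rw [← Nat.card_eq_finsetCard]
    have e : {y // y ∈ A.filter fun y => (fun i => π' (y i)) = x}
        ≃ {y : Fin (N + 1) → ZMod (p ^ (k + 1)) // y ∈ Xhat N F p (k + 1) ∧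
            ∀ i, π' (y i) = x i} := by
      refine Equiv.subtypeEquivRight fun y => ?_
      rw [Finset.mem_filter, hA, Set.Finite.mem_toFinset, funext_iff]
    rw [Nat.card_congr e]
    exact fiber_card N F p hp k hk hsm x hx
  rw [Finset.sum_congr rfl hfib] at hsum
  rw [Finset.sum_const, smul_eq_mul] at hsum
  have hcardA : Nat.card (Xhat N F p (k + 1)) = A.card := by
    rw [Nat.card_coe_set_eq, Set.ncard_eq_toFinset_card _ (Set.toFinite _)]
  have hcardB : Nat.card (Xhat N F p k) = B.card := by
    rw [Nat.card_coe_set_eq, Set.ncard_eq_toFinset_card _ (Set.toFinite _)]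
  rw [hcardA, hcardB, hsum, mul_comm]

/-- Hensel-lemma counting identity for the points of the affine cone of the hypersurface
`{F = 0}` over `ℤ/p^ℓℤ` at a prime `p` where the reduction of the hypersurface is smooth:
`#X̂(ℤ/p^ℓℤ) = p^N · #X̂(ℤ/p^{ℓ−1}ℤ)` for all `ℓ ≥ 2`. -/
theorem stmt13 (N d : ℕ) (hN : 1 ≤ N) (hd : 1 ≤ d)
    (F : MvPolynomial (Fin (N + 1)) ℤ) (hF : F.IsHomogeneous d)
    (p : ℕ) (hp : p.Prime)
    (hsm : ∀ x : Fin (N + 1) → ZMod p, x ≠ 0 →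
      eval x (MvPolynomial.map (Int.castRingHom (ZMod p)) F) = 0 →
      ∃ i, eval x (pderiv i (MvPolynomial.map (Int.castRingHom (ZMod p)) F)) ≠ 0) :
    ∀ ℓ : ℕ, 2 ≤ ℓ →
      Nat.card (Xhat N F p ℓ) = p ^ N * Nat.card (Xhat N F p (ℓ - 1)) := by
  intro ℓ hℓ
  obtain ⟨k, rfl⟩ : ∃ k, ℓ = k + 1 := ⟨ℓ - 1, by omega⟩
  rw [Nat.add_sub_cancel]
  exact key_count N F p hp k (by omega) hsm
end
end
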